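/- Let γ₁,γ₂,ρ₁,ρ₂,β₁,β₂ ∈ (0,1] with γ_i+ρ_i > 1, β_i+γ_i > 1 and β_i+ρ_i > 1 for i = 1,2, and let y,x,z : [0,1]² → ℝ be continuous with 𝒩_{γ₁,γ₂}(y) < ∞, 𝒩_{ρ₁,ρ₂}(x) < ∞ and 𝒩_{β₁,β₂}(z) < ∞. Then for every rectangle [s,s′]×[t,t′] ⊆ [0,1]² each of the following three families of Riemann sums over grid partitions Π converges as |Π| → 0, and the three limits coincide: (a) Σ_{i,j} y(σ_i,τ_j)·(δ₁x)(σ_i,σ_{i+1};τ_j)·(δ₂z)(σ_{i+1};τ_j,τ_{j+1}); (b) Σ_{i,j} y(σ_i,τ_j)·(δ₁x)(σ_i,σ_{i+1};τ_j)·(δ₂z)(σ_i;τ_j,τ_{j+1}); (c) Σ_{i,j} y(σ_i,τ_j)·(δ₂z)(σ_i;τ_j,τ_{j+1})·(δ₁x)(σ_i,σ_{i+1};τ_{j+1}). (The common limit defines the mixed two-dimensional Young integral ∬ y d₁x d₂z.) -/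

import Mathlib

open Set

/-- Rectangular increment `(δf)(s₁,s₂;t₁,t₂)`. -/
def dd (f : ℝ → ℝ → ℝ) (s₁ s₂ t₁ t₂ : ℝ) : ℝ :=
  f s₂ t₂ - f s₁ t₂ - f s₂ t₁ + f s₁ t₁

/-- Increment in the first direction `(δ₁f)(s₁,s₂;t)`. -/
def d1 (f : ℝ → ℝ → ℝ) (s₁ s₂ t : ℝ) : ℝ := f s₂ t - f s₁ t

/-- Increment in the second direction `(δ₂f)(s;t₁,t₂)`. -/
def d2 (f : ℝ → ℝ → ℝ) (s t₁ t₂ : ℝ) : ℝ := f s t₂ - f s t₁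

/-- `σ` is a grid of `[a,b]` with `m` subintervals. -/
def IsGrid (a b : ℝ) (m : ℕ) (σ : ℕ → ℝ) : Prop :=
  σ 0 = a ∧ σ m = b ∧ ∀ i < m, σ i < σ (i + 1)

/-- The mesh of the grid `σ` is at most `η`. -/
def MeshLE (m : ℕ) (σ : ℕ → ℝ) (η : ℝ) : Prop :=
  ∀ i < m, σ (i + 1) - σ i ≤ η

/-- Convergence of two-dimensional Riemann sums with local summand
`F σᵢ σᵢ₊₁ τⱼ τⱼ₊₁` over grid partitions of `[s,s']×[t,t']` to the limit `L`. -/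
def RConv (s s' t t' : ℝ) (F : ℝ → ℝ → ℝ → ℝ → ℝ) (L : ℝ) : Prop :=
  ∀ ε > (0:ℝ), ∃ η > (0:ℝ), ∀ (m n : ℕ) (σ τ : ℕ → ℝ),
    IsGrid s s' m σ → IsGrid t t' n τ → MeshLE m σ η → MeshLE n τ η →
    |(∑ i ∈ Finset.range m, ∑ j ∈ Finset.range n,
        F (σ i) (σ (i + 1)) (τ j) (τ (j + 1))) - L| ≤ ε

/-- `𝒩_{ρ₁,ρ₂}(f) < ∞` on `[0,1]²`. -/
def NFin (ρ₁ ρ₂ : ℝ) (f : ℝ → ℝ → ℝ) : Prop :=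
  ∃ C : ℝ,
    (∀ s₁ s₂ t₁ t₂ : ℝ, s₁ ∈ Icc (0:ℝ) 1 → s₂ ∈ Icc (0:ℝ) 1 →
      t₁ ∈ Icc (0:ℝ) 1 → t₂ ∈ Icc (0:ℝ) 1 →
      |dd f s₁ s₂ t₁ t₂| ≤ C * |s₂ - s₁| ^ ρ₁ * |t₂ - t₁| ^ ρ₂) ∧
    (∀ s₁ s₂ t : ℝ, s₁ ∈ Icc (0:ℝ) 1 → s₂ ∈ Icc (0:ℝ) 1 → t ∈ Icc (0:ℝ) 1 →
      |d1 f s₁ s₂ t| ≤ C * |s₂ - s₁| ^ ρ₁) ∧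
    (∀ s t₁ t₂ : ℝ, s ∈ Icc (0:ℝ) 1 → t₁ ∈ Icc (0:ℝ) 1 → t₂ ∈ Icc (0:ℝ) 1 →
      |d2 f s t₁ t₂| ≤ C * |t₂ - t₁| ^ ρ₂) ∧
    (∀ s t : ℝ, s ∈ Icc (0:ℝ) 1 → t ∈ Icc (0:ℝ) 1 → |f s t| ≤ C)



/-- exponent monotonicity for bases in [0,1] -/
lemma rpow_exp_anti {x e f : ℝ} (hx : 0 ≤ x) (hx1 : x ≤ 1) (hf : 0 < f) (hef : f ≤ e) :
    x ^ e ≤ x ^ f := by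
  rcases eq_or_lt_of_le hx with h0 | h0
  · rw [← h0, Real.zero_rpow (by linarith : e ≠ 0), Real.zero_rpow (ne_of_gt hf)]
  · exact Real.rpow_le_rpow_of_exponent_ge h0 hx1 hef

lemma rpow_le_one' {x e : ℝ} (hx : 0 ≤ x) (hx1 : x ≤ 1) (he : 0 ≤ e) : x ^ e ≤ 1 :=
  Real.rpow_le_one hx hx1 he

/-- |A*B*C| ≤ a*b*c -/
lemma abs_mul3_le {A B C a b c : ℝ} (hA : |A| ≤ a) (hB : |B| ≤ b) (hC : |C| ≤ c) :
    |A * B * C| ≤ a * b * c := by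
  have h1 : |A * B| ≤ a * b := by
    rw [abs_mul]
    exact mul_le_mul hA hB (abs_nonneg _) ((abs_nonneg _).trans hA)
  rw [abs_mul]
  exact mul_le_mul h1 hC (abs_nonneg _)
    (mul_nonneg ((abs_nonneg _).trans hA) ((abs_nonneg _).trans hB))

/-- MVT step for the zeta-sum comparison. -/
lemma rpow_neg_sum_step {θ : ℝ} (hθ : 1 < θ) (p : ℕ) (hp : 2 ≤ p) :
    (p : ℝ) ^ (-θ) ≤ (((p:ℝ) - 1) ^ (1 - θ) - (p:ℝ) ^ (1 - θ)) / (θ - 1) := by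
  have hp1 : (1:ℝ) ≤ (p:ℝ) - 1 := by
    have : (2:ℝ) ≤ (p:ℝ) := by exact_mod_cast hp
    linarith
  have hlt : (p:ℝ) - 1 < p := by linarith
  have hcont : ContinuousOn (fun x : ℝ => x ^ (1 - θ)) (Icc ((p:ℝ)-1) p) := by
    intro w hw
    exact (Real.continuousAt_rpow_const w (1-θ) (Or.inl (by
      have := hw.1; intro h; rw [h] at this; linarith))).continuousWithinAt
  have hderiv : ∀ w ∈ Ioo ((p:ℝ)-1) (p:ℝ),
      HasDerivAt (fun x : ℝ => x ^ (1 - θ)) ((1-θ) * w ^ (1 - θ - 1)) w := by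
    intro w hw
    exact Real.hasDerivAt_rpow_const (Or.inl (by intro h; rw [h] at hw; exact absurd hw.1 (by linarith)))
  obtain ⟨c, hc, hceq⟩ := exists_hasDerivAt_eq_slope _ _ hlt hcont hderiv
  have hcpos : (0:ℝ) < c := lt_of_lt_of_le (by linarith) hc.1.le
  have : ((p:ℝ)-1) ^ (1-θ) - (p:ℝ) ^ (1-θ) = (θ - 1) * c ^ (-θ) := by
    have hden : (p:ℝ) - ((p:ℝ)-1) = 1 := by ring
    have := hceq
    rw [hden, div_one] at this
    have hexp : (1 - θ - 1 : ℝ) = -θ := by ring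
    rw [hexp] at this
    linarith [this]
  rw [this, mul_comm (θ-1) (c ^ (-θ)), mul_div_assoc, div_self (by linarith : θ - 1 ≠ 0), mul_one]
  exact Real.rpow_le_rpow_of_nonpos hcpos hc.2.le (by linarith)

/-- zeta-type partial sum bound -/
lemma zeta_sum_le {θ : ℝ} (hθ : 1 < θ) (N : ℕ) :
    ∑ p ∈ Finset.Icc 1 N, (p : ℝ) ^ (-θ) ≤ 1 + 1 / (θ - 1) := by
  rcases Nat.eq_zero_or_pos N with h0 | hN
  · subst h0; simp
    have h1 : (0:ℝ) < θ - 1 := by linarith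
    positivity
  have hsplit : Finset.Icc 1 N = insert 1 (Finset.Icc 2 N) := by
    ext k; simp [Finset.mem_Icc, Finset.mem_insert]; omega
  rw [hsplit, Finset.sum_insert (by simp [Finset.mem_Icc])]
  have h1 : ((1:ℕ) : ℝ) ^ (-θ) = 1 := by simp
  rw [h1]
  have htail : ∑ p ∈ Finset.Icc 2 N, (p : ℝ) ^ (-θ) ≤ 1 / (θ - 1) := by
    have hstep : ∑ p ∈ Finset.Icc 2 N, (p : ℝ) ^ (-θ) ≤
        ∑ p ∈ Finset.Icc 2 N, ((((p:ℝ) - 1) ^ (1 - θ) - (p:ℝ) ^ (1 - θ)) / (θ - 1)) := by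
      apply Finset.sum_le_sum
      intro p hp
      exact rpow_neg_sum_step hθ p (Finset.mem_Icc.mp hp).1
    apply hstep.trans
    have : Finset.Icc 2 N = Finset.Ico 2 (N+1) := by rw [Finset.Ico_add_one_right_eq_Icc]
    rw [this, Finset.sum_Ico_eq_sum_range]
    have heq : ∀ i : ℕ, ((((2 + i : ℕ) : ℝ) - 1) ^ (1 - θ) - ((2 + i : ℕ) : ℝ) ^ (1 - θ)) / (θ - 1)
        = (((1 + i : ℕ) : ℝ) ^ (1 - θ) - ((2 + i : ℕ) : ℝ) ^ (1 - θ)) / (θ - 1) := by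
      intro i
      congr 2
      push_cast; ring_nf
    rw [Finset.sum_congr rfl (fun i _ => heq i)]
    have htel : ∑ i ∈ Finset.range (N + 1 - 2),
        ((((1 + i : ℕ) : ℝ) ^ (1 - θ) - ((2 + i : ℕ) : ℝ) ^ (1 - θ)) / (θ - 1))
        = (((1:ℕ):ℝ) ^ (1 - θ) - ((1 + (N + 1 - 2) : ℕ) : ℝ) ^ (1 - θ)) / (θ - 1) := by
      rw [← Finset.sum_div]
      congr 1
      have := Finset.sum_range_sub' (fun i => ((1 + i : ℕ) : ℝ) ^ (1 - θ)) (N + 1 - 2)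
      rw [← this]
      apply Finset.sum_congr rfl
      intro i _
      congr 2
      push_cast; ring
    rw [htel]
    have hpos : (0:ℝ) ≤ ((1 + (N + 1 - 2) : ℕ) : ℝ) ^ (1 - θ) := Real.rpow_nonneg (by positivity) _
    have h1' : ((1:ℕ):ℝ) ^ (1 - θ) = 1 := by simp
    rw [h1']
    apply div_le_div_of_nonneg_right ?_ (by linarith) |>.trans
    · exact le_refl _
    · linarith
  linarith

/-- `σ` is a grid of `[a,b]` with `m` subintervals. -/
def IsGrid' (a b : ℝ) (m : ℕ) (σ : ℕ → ℝ) : Prop :=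
  σ 0 = a ∧ σ m = b ∧ ∀ i < m, σ i < σ (i + 1)

namespace IsGrid'

lemma mono {a b : ℝ} {m : ℕ} {σ : ℕ → ℝ} (h : IsGrid' a b m σ)
    {i j : ℕ} (hij : i ≤ j) (hj : j ≤ m) : σ i ≤ σ j := by
  induction j with
  | zero => simp_all
  | succ j ihj =>
    rcases Nat.eq_or_lt_of_le hij with h' | h'
    · rw [h']
    · exact (ihj (by omega) (by omega)).trans (h.2.2 j (by omega)).le

lemma left_le {a b : ℝ} {m : ℕ} {σ : ℕ → ℝ} (h : IsGrid' a b m σ)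
    {i : ℕ} (hi : i ≤ m) : a ≤ σ i := h.1 ▸ h.mono (Nat.zero_le i) hi

lemma le_right {a b : ℝ} {m : ℕ} {σ : ℕ → ℝ} (h : IsGrid' a b m σ)
    {i : ℕ} (hi : i ≤ m) : σ i ≤ b := h.2.1 ▸ h.mono hi le_rfl

lemma le {a b : ℝ} {m : ℕ} {σ : ℕ → ℝ} (h : IsGrid' a b m σ) : a ≤ b := by
  have := h.mono (Nat.zero_le m) le_rfl
  rwa [h.1, h.2.1] at this

lemma sum_incr {a b : ℝ} {m : ℕ} {σ : ℕ → ℝ} (h : IsGrid' a b m σ) :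
    ∑ i ∈ Finset.range m, (σ (i+1) - σ i) = b - a := by
  rw [Finset.sum_range_sub σ m, h.1, h.2.1]

end IsGrid'

/-- the Young coarsening constant -/
noncomputable def zC (θ : ℝ) : ℝ := 1 + 1 / (θ - 1)

lemma zC_nonneg {θ : ℝ} (hθ : 1 < θ) : 0 ≤ zC θ := by
  unfold zC
  have : (0:ℝ) < θ - 1 := by linarith
  positivity

/-- Young coarsening: a Riemann sum over a partition of `[u,w]` differs from the
one-interval germ by at most a constant times `K (w-u)^θ`. -/
lemma coarsen {θ : ℝ} (hθ : 1 < θ) {K : ℝ} (hK : 0 ≤ K) (G : ℝ → ℝ → ℝ)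
    (u w : ℝ)
    (hG : ∀ a v b : ℝ, u ≤ a → a ≤ v → v ≤ b → b ≤ w →
      |G a b - G a v - G v b| ≤ K * (b - a) ^ θ) :
    ∀ m σ, 1 ≤ m → IsGrid' u w m σ →
    |(∑ i ∈ Finset.range m, G (σ i) (σ (i+1))) - G u w|
      ≤ K * (2*(w-u)) ^ θ * (∑ p ∈ Finset.Icc 1 (m-1), (p:ℝ) ^ (-θ)) := by
  intro m
  induction m using Nat.strong_induction_on with
  | _ m IH =>
  intro σ hm hgrid
  have huw : u ≤ w := hgrid.le
  rcases Nat.lt_or_ge m 2 with hm2 | hm2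
  · -- m = 1
    have : m = 1 := by omega
    subst this
    simp only [Finset.sum_range_one, hgrid.1, hgrid.2.1]
    simp only [Nat.sub_self, Finset.Icc_eq_empty_of_lt (by norm_num : (1:ℕ) > 0), Finset.sum_empty]
    simp [abs_of_nonneg, sub_self]
  · -- m ≥ 2 : remove a point
    -- find k ∈ [1, m-1] with small double gap
    have hne : (Finset.Icc 1 (m-1)).Nonempty := ⟨1, by simp [Finset.mem_Icc]; omega⟩
    have hsum2 : ∑ k ∈ Finset.Icc 1 (m-1), (σ (k+1) - σ (k-1))
        ≤ ∑ _k ∈ Finset.Icc 1 (m-1), (2*(w-u)/((m:ℝ)-1)) := by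
      have hcard : (Finset.Icc 1 (m-1)).card = m - 1 := by
        rw [Nat.card_Icc]; omega
      rw [Finset.sum_const, hcard, nsmul_eq_mul]
      have hm1 : ((m-1 : ℕ) : ℝ) = (m:ℝ) - 1 := by
        push_cast [Nat.cast_sub (by omega : 1 ≤ m)]; ring
      rw [hm1, mul_div_cancel₀ _ (by
        have : (2:ℝ) ≤ (m:ℝ) := by exact_mod_cast hm2
        linarith)]
      -- LHS = (σ m - σ 1) + (σ (m-1) - σ 0) ≤ 2 (w - u)
      have hsplit : ∀ k, σ (k+1) - σ (k-1) = (σ (k+1) - σ k) + (σ k - σ (k-1)) := by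
        intro k; ring
      rw [Finset.sum_congr rfl (fun k _ => hsplit k), Finset.sum_add_distrib]
      have hIcc : Finset.Icc 1 (m-1) = Finset.Ico 1 m := by
        ext j; simp only [Finset.mem_Icc, Finset.mem_Ico]; omega
      have t1 : ∑ k ∈ Finset.Icc 1 (m-1), (σ (k+1) - σ k) = σ m - σ 1 := by
        rw [hIcc, Finset.sum_Ico_eq_sub _ (by omega : 1 ≤ m),
          Finset.sum_range_sub σ m, Finset.sum_range_one]
        ring
      have t2 : ∑ k ∈ Finset.Icc 1 (m-1), (σ k - σ (k-1)) = σ (m-1) - σ 0 := by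
        rw [hIcc, Finset.sum_Ico_eq_sum_range]
        have : ∀ i, σ (1 + i) - σ (1 + i - 1) = σ (i+1) - σ i := by
          intro i; congr 2 <;> omega
        rw [Finset.sum_congr rfl (fun i _ => this i), Finset.sum_range_sub]
      rw [t1, t2]
      have h1 : u ≤ σ 1 := hgrid.left_le (by omega)
      have h2 : σ (m-1) ≤ w := hgrid.le_right (by omega)
      rw [hgrid.1, hgrid.2.1]
      linarith
    obtain ⟨k, hkmem, hk⟩ := Finset.exists_le_of_sum_le hne hsum2
    have hk1 : 1 ≤ k := (Finset.mem_Icc.mp hkmem).1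
    have hkm : k ≤ m - 1 := (Finset.mem_Icc.mp hkmem).2
    -- the coarsened grid
    set σ' : ℕ → ℝ := fun i => if i < k then σ i else σ (i+1) with hσ'
    have hgrid' : IsGrid' u w (m-1) σ' := by
      refine ⟨?_, ?_, ?_⟩
      · simp only [hσ', if_pos (by omega : 0 < k)]; exact hgrid.1
      · simp only [hσ', if_neg (by omega : ¬ (m-1 < k))]
        have : m - 1 + 1 = m := by omega
        rw [this]; exact hgrid.2.1
      · intro i hi
        simp only [hσ']
        rcases Nat.lt_or_ge (i+1) k with h | h
        · rw [if_pos (by omega), if_pos h]; exact hgrid.2.2 i (by omega)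
        · rcases Nat.lt_or_ge i k with h' | h'
          · -- i+1 = k
            have : i + 1 = k := by omega
            rw [if_pos h', if_neg (by omega)]
            calc σ i < σ (i+1) := hgrid.2.2 i (by omega)
              _ < σ (i+1+1) := hgrid.2.2 (i+1) (by omega)
          · rw [if_neg (by omega), if_neg (by omega)]
            exact hgrid.2.2 (i+1) (by omega)
    -- sum identity
    have hsumid : ∑ i ∈ Finset.range (m-1), G (σ' i) (σ' (i+1))
        = (∑ i ∈ Finset.range m, G (σ i) (σ (i+1)))
          - G (σ (k-1)) (σ k) - G (σ k) (σ (k+1)) + G (σ (k-1)) (σ (k+1)) := by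
      have e1 : ∀ i < k - 1, G (σ' i) (σ' (i+1)) = G (σ i) (σ (i+1)) := by
        intro i hi
        simp only [hσ', if_pos (by omega : i < k), if_pos (by omega : i + 1 < k)]
      have e2 : G (σ' (k-1)) (σ' k) = G (σ (k-1)) (σ (k+1)) := by
        simp only [hσ', if_pos (by omega : k - 1 < k), if_neg (lt_irrefl k)]
      have e3 : ∀ i, k ≤ i → G (σ' i) (σ' (i+1)) = G (σ (i+1)) (σ (i+2)) := by
        intro i hi
        simp only [hσ', if_neg (by omega : ¬ i < k), if_neg (by omega : ¬ i + 1 < k)]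
      -- split range (m-1) = range (k-1) ∪ {k-1} ∪ Ico k (m-1)
      have hr1 : Finset.range (m-1) = Finset.range k ∪ Finset.Ico k (m-1) := by
        rw [Finset.range_eq_Ico, Finset.range_eq_Ico]
        exact (Finset.Ico_union_Ico_eq_Ico (a := 0) (b := k) (c := m-1) (by omega) (by omega)).symm
      have hr2 : Finset.range m = Finset.range (k+1) ∪ Finset.Ico (k+1) m := by
        rw [Finset.range_eq_Ico, Finset.range_eq_Ico]
        exact (Finset.Ico_union_Ico_eq_Ico (a := 0) (b := k+1) (c := m) (by omega) (by omega)).symm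
      have hd1 : Disjoint (Finset.range k) (Finset.Ico k (m-1)) := by
        simp [Finset.disjoint_left, Finset.mem_Ico, Finset.mem_range]
        omega
      have hd2 : Disjoint (Finset.range (k+1)) (Finset.Ico (k+1) m) := by
        simp [Finset.disjoint_left, Finset.mem_Ico, Finset.mem_range]
        omega
      rw [hr1, Finset.sum_union hd1, hr2, Finset.sum_union hd2]
      have hsplitk : ∀ f : ℕ → ℝ, ∑ i ∈ Finset.range k, f i
          = (∑ i ∈ Finset.range (k-1), f i) + f (k-1) := by
        intro f
        conv_lhs => rw [show k = (k-1)+1 by omega]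
        rw [Finset.sum_range_succ]
      have hs1 : ∑ i ∈ Finset.range k, G (σ' i) (σ' (i+1))
          = (∑ i ∈ Finset.range (k-1), G (σ i) (σ (i+1))) + G (σ (k-1)) (σ (k+1)) := by
        rw [hsplitk, show k-1+1 = k by omega, e2]
        congr 1
        exact Finset.sum_congr rfl (fun i hi => e1 i (Finset.mem_range.mp hi))
      have hs2 : ∑ i ∈ Finset.range (k+1), G (σ i) (σ (i+1))
          = (∑ i ∈ Finset.range (k-1), G (σ i) (σ (i+1))) + G (σ (k-1)) (σ k) + G (σ k) (σ (k+1)) := by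
        rw [Finset.sum_range_succ, hsplitk (fun i => G (σ i) (σ (i+1))), show k-1+1 = k by omega]
      have hs3 : ∑ i ∈ Finset.Ico k (m-1), G (σ' i) (σ' (i+1))
          = ∑ i ∈ Finset.Ico (k+1) m, G (σ i) (σ (i+1)) := by
        rw [Finset.sum_Ico_eq_sum_range, Finset.sum_Ico_eq_sum_range]
        have hcard : m - 1 - k = m - (k+1) := by omega
        rw [hcard]
        apply Finset.sum_congr rfl
        intro i _
        rw [e3 (k+i) (by omega)]
        congr 2 <;> omega
      rw [hs1, hs3, hs2]
      ring
    -- apply IH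
    have hIH := IH (m-1) (by omega) σ' (by omega) hgrid'
    have hrem : |G (σ (k-1)) (σ (k+1)) - G (σ (k-1)) (σ k) - G (σ k) (σ (k+1))|
        ≤ K * (2*(w-u)/((m:ℝ)-1)) ^ θ := by
      have h1 := hG (σ (k-1)) (σ k) (σ (k+1)) (hgrid.left_le (by omega))
        (hgrid.mono (by omega) (by omega)) (hgrid.mono (by omega) (by omega))
        (hgrid.le_right (by omega))
      apply h1.trans
      apply mul_le_mul_of_nonneg_left ?_ hK
      apply Real.rpow_le_rpow ?_ hk (by linarith)
      have := hgrid.mono (by omega : k - 1 ≤ k + 1) (by omega : k + 1 ≤ m)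
      linarith
    have hstep : |(∑ i ∈ Finset.range m, G (σ i) (σ (i+1))) - G u w|
        ≤ |(∑ i ∈ Finset.range (m-1), G (σ' i) (σ' (i+1))) - G u w|
          + K * (2*(w-u)/((m:ℝ)-1)) ^ θ := by
      have : (∑ i ∈ Finset.range m, G (σ i) (σ (i+1))) - G u w
          = ((∑ i ∈ Finset.range (m-1), G (σ' i) (σ' (i+1))) - G u w)
            - (G (σ (k-1)) (σ (k+1)) - G (σ (k-1)) (σ k) - G (σ k) (σ (k+1))) := by
        rw [hsumid]; ring
      rw [this]
      exact (abs_sub _ _).trans (by linarith [hrem, abs_abs (G (σ (k-1)) (σ (k+1)) - G (σ (k-1)) (σ k) - G (σ k) (σ (k+1)))])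
    -- assemble
    have hconv : K * (2*(w-u)/((m:ℝ)-1)) ^ θ = K * (2*(w-u)) ^ θ * (((m-1:ℕ)):ℝ) ^ (-θ) := by
      have hm1 : ((m-1 : ℕ) : ℝ) = (m:ℝ) - 1 := by
        push_cast [Nat.cast_sub (by omega : 1 ≤ m)]; ring
      have hmpos : (0:ℝ) < (m:ℝ) - 1 := by
        have : (2:ℝ) ≤ (m:ℝ) := by exact_mod_cast hm2
        linarith
      rw [hm1, Real.div_rpow (by linarith) (by linarith), Real.rpow_neg (by linarith)]
      field_simp
    have hIcc : Finset.Icc 1 (m-1) = insert (m-1) (Finset.Icc 1 (m-1-1)) := by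
      ext j; simp [Finset.mem_Icc, Finset.mem_insert]; omega
    have hfinal : K * (2*(w-u)) ^ θ * (∑ p ∈ Finset.Icc 1 (m-1), (p:ℝ) ^ (-θ))
        = K * (2*(w-u)) ^ θ * (∑ p ∈ Finset.Icc 1 (m-1-1), (p:ℝ) ^ (-θ))
          + K * (2*(w-u)) ^ θ * (((m-1:ℕ)):ℝ) ^ (-θ) := by
      rw [hIcc, Finset.sum_insert (by simp [Finset.mem_Icc]; omega)]
      ring
    calc |(∑ i ∈ Finset.range m, G (σ i) (σ (i+1))) - G u w|
        ≤ |(∑ i ∈ Finset.range (m-1), G (σ' i) (σ' (i+1))) - G u w|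
          + K * (2*(w-u)/((m:ℝ)-1)) ^ θ := hstep
      _ ≤ K * (2*(w-u)) ^ θ * (∑ p ∈ Finset.Icc 1 (m-1-1), (p:ℝ) ^ (-θ))
          + K * (2*(w-u)) ^ θ * (((m-1:ℕ)):ℝ) ^ (-θ) := by
          rw [← hconv]
          exact add_le_add hIH le_rfl
      _ = K * (2*(w-u)) ^ θ * (∑ p ∈ Finset.Icc 1 (m-1), (p:ℝ) ^ (-θ)) := hfinal.symm

/-- clean form of the coarsening bound -/
lemma coarsen' {θ : ℝ} (hθ : 1 < θ) {K : ℝ} (hK : 0 ≤ K) (G : ℝ → ℝ → ℝ)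
    (u w : ℝ)
    (hG : ∀ a v b : ℝ, u ≤ a → a ≤ v → v ≤ b → b ≤ w →
      |G a b - G a v - G v b| ≤ K * (b - a) ^ θ)
    {m : ℕ} {σ : ℕ → ℝ} (hm : 1 ≤ m) (hgrid : IsGrid' u w m σ) :
    |(∑ i ∈ Finset.range m, G (σ i) (σ (i+1))) - G u w|
      ≤ K * (2*(w-u)) ^ θ * zC θ := by
  apply (coarsen hθ hK G u w hG m σ hm hgrid).trans
  apply mul_le_mul_of_nonneg_left (zeta_sum_le hθ (m-1))
  have h2 : (0:ℝ) ≤ (2*(w - u)) ^ θ := Real.rpow_nonneg (by linarith [hgrid.le]) _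
  positivity

/-- `σ'` (with `m'` intervals) refines `σ` (with `m` intervals) via index map `φ`. -/
def Refines (m : ℕ) (σ : ℕ → ℝ) (m' : ℕ) (σ' : ℕ → ℝ) (φ : ℕ → ℕ) : Prop :=
  φ 0 = 0 ∧ φ m = m' ∧ (∀ i < m, φ i < φ (i+1)) ∧ (∀ i ≤ m, σ' (φ i) = σ i)

lemma Refines.mono {m m' : ℕ} {σ σ' : ℕ → ℝ} {φ : ℕ → ℕ} (h : Refines m σ m' σ' φ)
    {i j : ℕ} (hij : i ≤ j) (hj : j ≤ m) : φ i ≤ φ j := by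
  induction j with
  | zero => simp_all
  | succ j ihj =>
    rcases Nat.eq_or_lt_of_le hij with h' | h'
    · rw [h']
    · exact (ihj (by omega) (by omega)).trans (h.2.2.1 j (by omega)).le

/-- block grids of a refinement -/
lemma Refines.block {u w : ℝ} {m m' : ℕ} {σ σ' : ℕ → ℝ} {φ : ℕ → ℕ}
    (hσ : IsGrid' u w m σ) (hσ' : IsGrid' u w m' σ') (h : Refines m σ m' σ' φ)
    {i : ℕ} (hi : i < m) :
    IsGrid' (σ i) (σ (i+1)) (φ (i+1) - φ i) (fun k => σ' (φ i + k)) := by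
  have hle : φ i ≤ φ (i+1) := (h.2.2.1 i hi).le
  have hub : φ (i+1) ≤ m' := by
    rw [← h.2.1]; exact h.mono (by omega) le_rfl
  refine ⟨?_, ?_, ?_⟩
  · simp only [Nat.add_zero]; exact h.2.2.2 i (by omega)
  · show σ' (φ i + (φ (i+1) - φ i)) = σ (i+1)
    have : φ i + (φ (i+1) - φ i) = φ (i+1) := by omega
    rw [this]; exact h.2.2.2 (i+1) (by omega)
  · intro k hk
    show σ' (φ i + k) < σ' (φ i + (k + 1))
    have : φ i + (k + 1) = φ i + k + 1 := by omega
    rw [this]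
    exact hσ'.2.2 (φ i + k) (by omega)

/-- sum splitting along a refinement index map -/
lemma sum_blocks {φ : ℕ → ℕ} (hφ0 : φ 0 = 0) (m : ℕ) (hmono : ∀ i < m, φ i ≤ φ (i+1))
    (g : ℕ → ℝ) :
    ∑ k ∈ Finset.range (φ m), g k
      = ∑ i ∈ Finset.range m, ∑ k ∈ Finset.Ico (φ i) (φ (i+1)), g k := by
  induction m with
  | zero => simp [hφ0]
  | succ m ih =>
    have hmono' : ∀ i < m, φ i ≤ φ (i+1) := fun i hi => hmono i (by omega)
    rw [Finset.sum_range_succ, ← ih hmono', Finset.range_eq_Ico,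
      ← Finset.sum_Ico_consecutive g (Nat.zero_le (φ m)) (hmono m (by omega))]
    rw [Finset.range_eq_Ico]

/-- sum of rpow of increments bounded via the mesh -/
lemma sum_incr_rpow {u w η θ : ℝ} {m : ℕ} {σ : ℕ → ℝ} (hgrid : IsGrid' u w m σ)
    (hθ : 1 ≤ θ) (hη : 0 ≤ η) (hmesh : ∀ i < m, σ (i+1) - σ i ≤ η) :
    ∑ i ∈ Finset.range m, (σ (i+1) - σ i) ^ θ ≤ η ^ (θ - 1) * (w - u) := by
  have key : ∀ i ∈ Finset.range m, (σ (i+1) - σ i) ^ θ ≤ η ^ (θ-1) * (σ (i+1) - σ i) := by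
    intro i hi
    have hi' := Finset.mem_range.mp hi
    have hpos : 0 ≤ σ (i+1) - σ i := by linarith [hgrid.2.2 i hi']
    have hpow : (σ (i+1) - σ i) ^ θ = (σ (i+1) - σ i) ^ (θ-1) * (σ (i+1) - σ i) := by
      rw [show θ = (θ-1)+1 by ring, Real.rpow_add' hpos (by norm_num; linarith : (θ-1)+1 ≠ 0),
        Real.rpow_one]
      ring_nf
    rw [hpow]
    apply mul_le_mul_of_nonneg_right ?_ hpos
    exact Real.rpow_le_rpow hpos (hmesh i hi') (by linarith)
  calc ∑ i ∈ Finset.range m, (σ (i+1) - σ i) ^ θ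
      ≤ ∑ i ∈ Finset.range m, η ^ (θ-1) * (σ (i+1) - σ i) := Finset.sum_le_sum key
    _ = η ^ (θ-1) * (w - u) := by rw [← Finset.mul_sum, hgrid.sum_incr]

/-- Refining the first-direction grid changes the 2D Riemann sum by `O(η^(θ₁-1))`. -/
lemma refine_fst {θ₁ θ₂ α₂ K : ℝ} (hθ₁ : 1 < θ₁) (hθ₂ : 1 < θ₂) (hα₂ : 0 < α₂) (hK : 0 ≤ K)
    {u₁ u₂ v₁ v₂ : ℝ} (hu21 : u₂ - u₁ ≤ 1) (hv21 : v₂ - v₁ ≤ 1)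
    (Ξ : ℝ → ℝ → ℝ → ℝ → ℝ)
    (H1 : ∀ a p b c d : ℝ, u₁ ≤ a → a ≤ p → p ≤ b → b ≤ u₂ → v₁ ≤ c → c ≤ d → d ≤ v₂ →
      |Ξ a b c d - Ξ a p c d - Ξ p b c d| ≤ K * (b-a)^θ₁ * (d-c)^α₂)
    (H2 : ∀ a p b c q d : ℝ, u₁ ≤ a → a ≤ p → p ≤ b → b ≤ u₂ → v₁ ≤ c → c ≤ q → q ≤ d → d ≤ v₂ →
      |(Ξ a b c d - Ξ a b c q - Ξ a b q d) - (Ξ a p c d - Ξ a p c q - Ξ a p q d)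
        - (Ξ p b c d - Ξ p b c q - Ξ p b q d)| ≤ K * (b-a)^θ₁ * (d-c)^θ₂)
    {m m' n : ℕ} {σ σ' τ : ℕ → ℝ} {φ : ℕ → ℕ} {η : ℝ} (hη : 0 ≤ η)
    (hn : 1 ≤ n)
    (hσ : IsGrid' u₁ u₂ m σ) (hσ' : IsGrid' u₁ u₂ m' σ') (href : Refines m σ m' σ' φ)
    (hτ : IsGrid' v₁ v₂ n τ) (hmesh : ∀ i < m, σ (i+1) - σ i ≤ η) :
    |(∑ i ∈ Finset.range m', ∑ j ∈ Finset.range n, Ξ (σ' i) (σ' (i+1)) (τ j) (τ (j+1)))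
      - (∑ i ∈ Finset.range m, ∑ j ∈ Finset.range n, Ξ (σ i) (σ (i+1)) (τ j) (τ (j+1)))|
      ≤ K * 2^θ₁ * zC θ₁ * (1 + 2^θ₂ * zC θ₂) * η^(θ₁-1) := by
  have hv : v₁ ≤ v₂ := hτ.le
  have h2t1 : (0:ℝ) ≤ 2 ^ θ₁ := Real.rpow_nonneg (by norm_num) _
  have h2t2 : (0:ℝ) ≤ 2 ^ θ₂ := Real.rpow_nonneg (by norm_num) _
  have hzC1 : 0 ≤ zC θ₁ := zC_nonneg hθ₁
  have hzC2 : 0 ≤ zC θ₂ := zC_nonneg hθ₂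
  -- the cell defect
  set E : ℕ → ℝ → ℝ → ℝ := fun i c d =>
    (∑ k ∈ Finset.range (φ (i+1) - φ i), Ξ (σ' (φ i + k)) (σ' (φ i + k + 1)) c d)
      - Ξ (σ i) (σ (i+1)) c d with hE
  -- claim A
  have claimA : ∀ i < m, ∀ c d : ℝ, v₁ ≤ c → c ≤ d → d ≤ v₂ →
      |E i c d| ≤ K * (d-c)^α₂ * (2 * (σ (i+1) - σ i))^θ₁ * zC θ₁ := by
    intro i hi c d hc hcd hd
    have hblock := href.block hσ hσ' (i := i) hi
    have hKd : 0 ≤ K * (d-c)^α₂ :=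
      mul_nonneg hK (Real.rpow_nonneg (by linarith) _)
    have hG : ∀ a v b : ℝ, σ i ≤ a → a ≤ v → v ≤ b → b ≤ σ (i+1) →
        |Ξ a b c d - Ξ a v c d - Ξ v b c d| ≤ (K * (d-c)^α₂) * (b-a)^θ₁ := by
      intro a v b ha hav hvb hb
      have h1 := H1 a v b c d (le_trans (hσ.left_le (by omega : i ≤ m)) ha) hav hvb
        (le_trans hb (hσ.le_right (by omega : i + 1 ≤ m))) hc hcd hd
      calc |Ξ a b c d - Ξ a v c d - Ξ v b c d| ≤ K * (b-a)^θ₁ * (d-c)^α₂ := h1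
        _ = K * (d-c)^α₂ * (b-a)^θ₁ := by ring
    exact coarsen' hθ₁ hKd (fun a b => Ξ a b c d) (σ i) (σ (i+1)) hG
      (by have := href.2.2.1 i hi; omega : 1 ≤ φ (i+1) - φ i) hblock
  -- claim B : t-increments of the cell defect
  have claimB : ∀ i < m, ∀ c q d : ℝ, v₁ ≤ c → c ≤ q → q ≤ d → d ≤ v₂ →
      |E i c d - E i c q - E i q d|
        ≤ K * (d-c)^θ₂ * (2 * (σ (i+1) - σ i))^θ₁ * zC θ₁ := by
    intro i hi c q d hc hcq hqd hd
    have hblock := href.block hσ hσ' (i := i) hi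
    have hKd : 0 ≤ K * (d-c)^θ₂ :=
      mul_nonneg hK (Real.rpow_nonneg (by linarith) _)
    have hG : ∀ a v b : ℝ, σ i ≤ a → a ≤ v → v ≤ b → b ≤ σ (i+1) →
        |(Ξ a b c d - Ξ a b c q - Ξ a b q d) - (Ξ a v c d - Ξ a v c q - Ξ a v q d)
          - (Ξ v b c d - Ξ v b c q - Ξ v b q d)| ≤ (K * (d-c)^θ₂) * (b-a)^θ₁ := by
      intro a v b ha hav hvb hb
      have h2 := H2 a v b c q d (le_trans (hσ.left_le (by omega : i ≤ m)) ha) hav hvb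
        (le_trans hb (hσ.le_right (by omega : i + 1 ≤ m))) hc hcq hqd hd
      calc |(Ξ a b c d - Ξ a b c q - Ξ a b q d) - (Ξ a v c d - Ξ a v c q - Ξ a v q d)
          - (Ξ v b c d - Ξ v b c q - Ξ v b q d)| ≤ K * (b-a)^θ₁ * (d-c)^θ₂ := h2
        _ = K * (d-c)^θ₂ * (b-a)^θ₁ := by ring
    have hco := coarsen' hθ₁ hKd
      (fun a b => Ξ a b c d - Ξ a b c q - Ξ a b q d) (σ i) (σ (i+1)) hG
      (by have := href.2.2.1 i hi; omega : 1 ≤ φ (i+1) - φ i) hblock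
    have hEeq : E i c d - E i c q - E i q d
        = (∑ k ∈ Finset.range (φ (i+1) - φ i),
            (Ξ (σ' (φ i + k)) (σ' (φ i + k + 1)) c d
              - Ξ (σ' (φ i + k)) (σ' (φ i + k + 1)) c q
              - Ξ (σ' (φ i + k)) (σ' (φ i + k + 1)) q d))
          - (Ξ (σ i) (σ (i+1)) c d - Ξ (σ i) (σ (i+1)) c q - Ξ (σ i) (σ (i+1)) q d) := by
      simp only [hE, Finset.sum_sub_distrib]
      ring
    rw [hEeq]
    exact hco
  -- claim C : summing the cell defect over the τ grid
  have claimC : ∀ i < m,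
      |∑ j ∈ Finset.range n, E i (τ j) (τ (j+1))|
        ≤ K * 2^θ₁ * zC θ₁ * (1 + 2^θ₂ * zC θ₂) * (σ (i+1) - σ i)^θ₁ := by
    intro i hi
    have hΔpos : 0 ≤ σ (i+1) - σ i := by linarith [hσ.2.2 i hi]
    have hKi : 0 ≤ K * (2 * (σ (i+1) - σ i))^θ₁ * zC θ₁ := by
      have := Real.rpow_nonneg (by linarith : (0:ℝ) ≤ 2 * (σ (i+1) - σ i)) θ₁
      positivity
    have hG : ∀ c q d : ℝ, v₁ ≤ c → c ≤ q → q ≤ d → d ≤ v₂ →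
        |E i c d - E i c q - E i q d|
          ≤ (K * (2 * (σ (i+1) - σ i))^θ₁ * zC θ₁) * (d-c)^θ₂ := by
      intro c q d hc hcq hqd hd
      calc |E i c d - E i c q - E i q d|
          ≤ K * (d-c)^θ₂ * (2 * (σ (i+1) - σ i))^θ₁ * zC θ₁ := claimB i hi c q d hc hcq hqd hd
        _ = (K * (2 * (σ (i+1) - σ i))^θ₁ * zC θ₁) * (d-c)^θ₂ := by ring
    have hco := coarsen' hθ₂ hKi (fun c d => E i c d) v₁ v₂ hG hn hτ
    have habs : |∑ j ∈ Finset.range n, E i (τ j) (τ (j+1))|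
        ≤ |E i v₁ v₂| + K * (2 * (σ (i+1) - σ i))^θ₁ * zC θ₁ * (2*(v₂-v₁))^θ₂ * zC θ₂ := by
      have := abs_sub_abs_le_abs_sub (∑ j ∈ Finset.range n, E i (τ j) (τ (j+1))) (E i v₁ v₂)
      have h' : |∑ j ∈ Finset.range n, E i (τ j) (τ (j+1))|
          ≤ |E i v₁ v₂| + |∑ j ∈ Finset.range n, E i (τ j) (τ (j+1)) - E i v₁ v₂| := by
        have := abs_add_le (E i v₁ v₂) (∑ j ∈ Finset.range n, E i (τ j) (τ (j+1)) - E i v₁ v₂)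
        simpa using this
      apply h'.trans
      have : K * (2 * (σ (i+1) - σ i))^θ₁ * zC θ₁ * (2*(v₂-v₁))^θ₂ * zC θ₂
          = K * (2 * (σ (i+1) - σ i))^θ₁ * zC θ₁ * ((2*(v₂-v₁))^θ₂ * zC θ₂) := by ring
      rw [this]
      exact add_le_add le_rfl (by
        have h2 : K * (2 * (σ (i + 1) - σ i)) ^ θ₁ * zC θ₁ * (2 * (v₂ - v₁)) ^ θ₂ * zC θ₂
            = K * (2 * (σ (i + 1) - σ i)) ^ θ₁ * zC θ₁ * ((2 * (v₂ - v₁)) ^ θ₂ * zC θ₂) := by ring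
        calc |∑ j ∈ Finset.range n, E i (τ j) (τ (j+1)) - E i v₁ v₂|
            ≤ K * (2 * (σ (i+1) - σ i))^θ₁ * zC θ₁ * (2*(v₂-v₁))^θ₂ * zC θ₂ := hco
          _ = _ := h2)
    apply habs.trans
    -- bound each piece using (v₂ - v₁) ≤ 1
    have hEv : |E i v₁ v₂| ≤ K * (2 * (σ (i+1) - σ i))^θ₁ * zC θ₁ := by
      have := claimA i hi v₁ v₂ le_rfl hv le_rfl
      apply this.trans
      have hle1 : (v₂ - v₁)^α₂ ≤ 1 := rpow_le_one' (by linarith) (by linarith) hα₂.le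
      have h2 : (0:ℝ) ≤ (2 * (σ (i+1) - σ i))^θ₁ := Real.rpow_nonneg (by linarith) _
      calc K * (v₂-v₁)^α₂ * (2 * (σ (i+1) - σ i))^θ₁ * zC θ₁
          ≤ K * 1 * (2 * (σ (i+1) - σ i))^θ₁ * zC θ₁ := by
            apply mul_le_mul_of_nonneg_right ?_ hzC1
            apply mul_le_mul_of_nonneg_right ?_ h2
            exact mul_le_mul_of_nonneg_left hle1 hK
        _ = K * (2 * (σ (i+1) - σ i))^θ₁ * zC θ₁ := by ring
    have hT : (2*(v₂-v₁))^θ₂ * zC θ₂ ≤ 2^θ₂ * zC θ₂ := by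
      apply mul_le_mul_of_nonneg_right ?_ hzC2
      calc (2*(v₂-v₁))^θ₂ = 2^θ₂ * (v₂-v₁)^θ₂ :=
            Real.mul_rpow (by norm_num) (by linarith)
        _ ≤ 2^θ₂ * 1 := by
            apply mul_le_mul_of_nonneg_left ?_ h2t2
            exact rpow_le_one' (by linarith) (by linarith) (by linarith)
        _ = 2^θ₂ := by ring
    have hmain : (2 * (σ (i+1) - σ i))^θ₁ = 2^θ₁ * (σ (i+1) - σ i)^θ₁ :=
      Real.mul_rpow (by norm_num) hΔpos
    have hΔθ : (0:ℝ) ≤ (σ (i+1) - σ i)^θ₁ := Real.rpow_nonneg hΔpos _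
    calc |E i v₁ v₂| + K * (2 * (σ (i+1) - σ i))^θ₁ * zC θ₁ * (2*(v₂-v₁))^θ₂ * zC θ₂
        ≤ K * (2 * (σ (i+1) - σ i))^θ₁ * zC θ₁
            + K * (2 * (σ (i+1) - σ i))^θ₁ * zC θ₁ * (2^θ₂ * zC θ₂) := by
          apply add_le_add hEv
          calc K * (2 * (σ (i+1) - σ i))^θ₁ * zC θ₁ * (2*(v₂-v₁))^θ₂ * zC θ₂
              = K * (2 * (σ (i+1) - σ i))^θ₁ * zC θ₁ * ((2*(v₂-v₁))^θ₂ * zC θ₂) := by ring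
            _ ≤ K * (2 * (σ (i+1) - σ i))^θ₁ * zC θ₁ * (2^θ₂ * zC θ₂) := by
                apply mul_le_mul_of_nonneg_left hT hKi
      _ = K * 2^θ₁ * zC θ₁ * (1 + 2^θ₂ * zC θ₂) * (σ (i+1) - σ i)^θ₁ := by
          rw [hmain]; ring
  -- decompose the difference of sums into cell defects
  have hdecomp : (∑ i ∈ Finset.range m', ∑ j ∈ Finset.range n, Ξ (σ' i) (σ' (i+1)) (τ j) (τ (j+1)))
      - (∑ i ∈ Finset.range m, ∑ j ∈ Finset.range n, Ξ (σ i) (σ (i+1)) (τ j) (τ (j+1)))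
      = ∑ i ∈ Finset.range m, ∑ j ∈ Finset.range n, E i (τ j) (τ (j+1)) := by
    have hb : ∑ k ∈ Finset.range m', ∑ j ∈ Finset.range n, Ξ (σ' k) (σ' (k+1)) (τ j) (τ (j+1))
        = ∑ i ∈ Finset.range m, ∑ k ∈ Finset.Ico (φ i) (φ (i+1)),
            ∑ j ∈ Finset.range n, Ξ (σ' k) (σ' (k+1)) (τ j) (τ (j+1)) := by
      rw [← href.2.1]
      exact sum_blocks href.1 m (fun i hi => (href.2.2.1 i hi).le) _
    rw [hb, ← Finset.sum_sub_distrib]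
    apply Finset.sum_congr rfl
    intro i hi
    rw [Finset.sum_Ico_eq_sum_range]
    simp only [hE, Finset.sum_sub_distrib]
    rw [Finset.sum_comm]
  rw [hdecomp]
  -- sum the per-cell bounds
  calc |∑ i ∈ Finset.range m, ∑ j ∈ Finset.range n, E i (τ j) (τ (j+1))|
      ≤ ∑ i ∈ Finset.range m, |∑ j ∈ Finset.range n, E i (τ j) (τ (j+1))| :=
        Finset.abs_sum_le_sum_abs _ _
    _ ≤ ∑ i ∈ Finset.range m, K * 2^θ₁ * zC θ₁ * (1 + 2^θ₂ * zC θ₂) * (σ (i+1) - σ i)^θ₁ :=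
        Finset.sum_le_sum (fun i hi => claimC i (Finset.mem_range.mp hi))
    _ = K * 2^θ₁ * zC θ₁ * (1 + 2^θ₂ * zC θ₂) * ∑ i ∈ Finset.range m, (σ (i+1) - σ i)^θ₁ := by
        rw [← Finset.mul_sum]
    _ ≤ K * 2^θ₁ * zC θ₁ * (1 + 2^θ₂ * zC θ₂) * (η^(θ₁-1) * (u₂ - u₁)) := by
        apply mul_le_mul_of_nonneg_left (sum_incr_rpow hσ hθ₁.le hη hmesh)
        positivity
    _ ≤ K * 2^θ₁ * zC θ₁ * (1 + 2^θ₂ * zC θ₂) * η^(θ₁-1) := by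
        have hη1 : (0:ℝ) ≤ η^(θ₁-1) := Real.rpow_nonneg hη _
        have huu : u₂ - u₁ ≤ 1 := hu21
        have h0 : 0 ≤ u₂ - u₁ := by linarith [hσ.le]
        nlinarith [mul_nonneg (mul_nonneg (mul_nonneg (mul_nonneg hK h2t1) hzC1)
          (by positivity : (0:ℝ) ≤ 1 + 2^θ₂ * zC θ₂)) hη1]

/-- Common refinement of two grids of the same interval. -/
lemma exists_merge {u w : ℝ} {m p : ℕ} {σ ρ : ℕ → ℝ}
    (hσ : IsGrid' u w m σ) (hρ : IsGrid' u w p ρ) :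
    ∃ (M : ℕ) (μ : ℕ → ℝ) (φ ψ : ℕ → ℕ),
      IsGrid' u w M μ ∧ Refines m σ M μ φ ∧ Refines p ρ M μ ψ := by
  classical
  set T : Finset ℝ :=
    ((Finset.range (m+1)).image σ) ∪ ((Finset.range (p+1)).image ρ) with hT
  have hmemσ : ∀ i ≤ m, σ i ∈ T := fun i hi =>
    Finset.mem_union_left _ (Finset.mem_image_of_mem σ (Finset.mem_range.mpr (by omega)))
  have hmemρ : ∀ i ≤ p, ρ i ∈ T := fun i hi =>
    Finset.mem_union_right _ (Finset.mem_image_of_mem ρ (Finset.mem_range.mpr (by omega)))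
  have hbdd : ∀ x ∈ T, u ≤ x ∧ x ≤ w := by
    intro x hx
    rcases Finset.mem_union.mp hx with h | h
    · obtain ⟨j, hj, rfl⟩ := Finset.mem_image.mp h
      exact ⟨hσ.left_le (by have := Finset.mem_range.mp hj; omega),
        hσ.le_right (by have := Finset.mem_range.mp hj; omega)⟩
    · obtain ⟨j, hj, rfl⟩ := Finset.mem_image.mp h
      exact ⟨hρ.left_le (by have := Finset.mem_range.mp hj; omega),
        hρ.le_right (by have := Finset.mem_range.mp hj; omega)⟩
  set e := T.orderIsoOfFin rfl with he
  set k := T.card with hk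
  have hk1 : 1 ≤ k := Finset.card_pos.mpr ⟨u, hσ.1 ▸ hmemσ 0 (by omega)⟩
  set μ : ℕ → ℝ := fun i => if h : i < k then (e ⟨i, h⟩ : ℝ) else w with hμ
  have hμmem : ∀ i (h : i < k), μ i ∈ T := by
    intro i h
    simp only [hμ, dif_pos h]
    exact (e ⟨i, h⟩).2
  have hμmono : ∀ i j (hi : i < k) (hj : j < k), i < j → μ i < μ j := by
    intro i j hi hj hij
    simp only [hμ, dif_pos hi, dif_pos hj]
    exact_mod_cast e.strictMono (by exact_mod_cast hij : (⟨i, hi⟩ : Fin k) < ⟨j, hj⟩)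
  have hμinj : ∀ i j (hi : i < k) (hj : j < k), μ i = μ j → i = j := by
    intro i j hi hj hij
    rcases Nat.lt_trichotomy i j with h | h | h
    · exact absurd hij (ne_of_lt (hμmono i j hi hj h))
    · exact h
    · exact absurd hij.symm (ne_of_lt (hμmono j i hj hi h))
  set M := k - 1 with hM
  -- index of an element of T
  have hidx : ∀ x (hx : x ∈ T), ∃ i, ∃ h : i < k, μ i = x := by
    intro x hx
    refine ⟨(e.symm ⟨x, hx⟩ : Fin k).val, (e.symm ⟨x, hx⟩).isLt, ?_⟩
    simp only [hμ, dif_pos (e.symm ⟨x, hx⟩).isLt]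
    rw [show (⟨(e.symm ⟨x, hx⟩ : Fin k).val, (e.symm ⟨x, hx⟩).isLt⟩ : Fin k)
      = e.symm ⟨x, hx⟩ from Fin.eta _ _]
    rw [OrderIso.apply_symm_apply]
  -- μ 0 = u and μ M = w
  have hu0 : μ 0 = u := by
    obtain ⟨i, hik, hi⟩ := hidx u (hσ.1 ▸ hmemσ 0 (by omega))
    have h1 : u ≤ μ 0 := (hbdd _ (hμmem 0 (by omega))).1
    have h2 : μ 0 ≤ μ i := by
      rcases Nat.eq_zero_or_pos i with h | h
      · subst h; exact le_rfl
      · exact (hμmono 0 i (by omega) hik h).le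
    rw [hi] at h2
    linarith
  have hwM : μ M = w := by
    obtain ⟨i, hik, hi⟩ := hidx w (hσ.2.1 ▸ hmemσ m le_rfl)
    have h1 : μ M ≤ w := (hbdd _ (hμmem M (by omega))).2
    have h2 : μ i ≤ μ M := by
      rcases Nat.lt_or_ge i M with h | h
      · exact (hμmono i M hik (by omega) h).le
      · have : i = M := by omega
        subst this; exact le_rfl
    rw [hi] at h2
    linarith
  have hgridμ : IsGrid' u w M μ := by
    refine ⟨hu0, hwM, fun i hi => hμmono i (i+1) (by omega) (by omega) (by omega)⟩
  -- refinement maps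
  have key : ∀ (q : ℕ) (ν : ℕ → ℝ), IsGrid' u w q ν → (∀ i ≤ q, ν i ∈ T) →
      ∃ φ, Refines q ν M μ φ := by
    intro q ν hν hmem
    set φ : ℕ → ℕ := fun i => if h : i ≤ q then (e.symm ⟨ν i, hmem i h⟩ : Fin k).val else 0
      with hφ
    have hφval : ∀ i (h : i ≤ q), φ i < k ∧ μ (φ i) = ν i := by
      intro i h
      simp only [hφ, dif_pos h]
      refine ⟨(e.symm ⟨ν i, hmem i h⟩).isLt, ?_⟩
      simp only [hμ, dif_pos (e.symm ⟨ν i, hmem i h⟩).isLt]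
      rw [show (⟨(e.symm ⟨ν i, hmem i h⟩ : Fin k).val, (e.symm ⟨ν i, hmem i h⟩).isLt⟩ : Fin k)
        = e.symm ⟨ν i, hmem i h⟩ from Fin.eta _ _]
      rw [OrderIso.apply_symm_apply]
    have hφ0 : φ 0 = 0 := by
      have h0 := hφval 0 (by omega)
      apply hμinj _ _ h0.1 (by omega)
      rw [h0.2, hν.1, hu0]
    have hφq : φ q = M := by
      have h0 := hφval q le_rfl
      apply hμinj _ _ h0.1 (by omega)
      rw [h0.2, hν.2.1, hwM]
    have hφlt : ∀ i < q, φ i < φ (i+1) := by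
      intro i hi
      have h1 := hφval i (by omega)
      have h2 := hφval (i+1) (by omega)
      rcases Nat.lt_trichotomy (φ i) (φ (i+1)) with h | h | h
      · exact h
      · exfalso
        have := hν.2.2 i hi
        rw [← h1.2, ← h2.2, h] at this
        exact lt_irrefl _ this
      · exfalso
        have hgt := hμmono _ _ h2.1 h1.1 h
        have := hν.2.2 i hi
        rw [← h1.2, ← h2.2] at this
        linarith
    exact ⟨φ, hφ0, hφq, hφlt, fun i hi => (hφval i hi).2⟩
  obtain ⟨φ, hφ⟩ := key m σ hσ hmemσ
  obtain ⟨ψ, hψ⟩ := key p ρ hρ hmemρ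
  exact ⟨M, μ, φ, ψ, hgridμ, hφ, hψ⟩

lemma IsGrid'.one_le {u w : ℝ} {m : ℕ} {σ : ℕ → ℝ} (h : IsGrid' u w m σ) (huw : u < w) :
    1 ≤ m := by
  by_contra hm
  have : m = 0 := by omega
  subst this
  have h1 := h.1
  have h2 := h.2.1
  rw [h1] at h2
  exact absurd h2 (ne_of_lt huw)

/-- Refining the second-direction grid changes the 2D Riemann sum by `O(η^(θ₂-1))`. -/
lemma refine_snd {θ₁ θ₂ α₁ K : ℝ} (hθ₁ : 1 < θ₁) (hθ₂ : 1 < θ₂) (hα₁ : 0 < α₁) (hK : 0 ≤ K)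
    {u₁ u₂ v₁ v₂ : ℝ} (hu21 : u₂ - u₁ ≤ 1) (hv21 : v₂ - v₁ ≤ 1)
    (Ξ : ℝ → ℝ → ℝ → ℝ → ℝ)
    (HB : ∀ a b c q d : ℝ, u₁ ≤ a → a ≤ b → b ≤ u₂ → v₁ ≤ c → c ≤ q → q ≤ d → d ≤ v₂ →
      |Ξ a b c d - Ξ a b c q - Ξ a b q d| ≤ K * (b-a)^α₁ * (d-c)^θ₂)
    (HC : ∀ a p b c q d : ℝ, u₁ ≤ a → a ≤ p → p ≤ b → b ≤ u₂ → v₁ ≤ c → c ≤ q → q ≤ d → d ≤ v₂ →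
      |(Ξ a b c d - Ξ a b c q - Ξ a b q d) - (Ξ a p c d - Ξ a p c q - Ξ a p q d)
        - (Ξ p b c d - Ξ p b c q - Ξ p b q d)| ≤ K * (b-a)^θ₁ * (d-c)^θ₂)
    {m n n' : ℕ} {σ τ τ' : ℕ → ℝ} {ψ : ℕ → ℕ} {η : ℝ} (hη : 0 ≤ η)
    (hm : 1 ≤ m)
    (hσ : IsGrid' u₁ u₂ m σ)
    (hτ : IsGrid' v₁ v₂ n τ) (hτ' : IsGrid' v₁ v₂ n' τ') (href : Refines n τ n' τ' ψ)
    (hmesh : ∀ j < n, τ (j+1) - τ j ≤ η) :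
    |(∑ i ∈ Finset.range m, ∑ j ∈ Finset.range n', Ξ (σ i) (σ (i+1)) (τ' j) (τ' (j+1)))
      - (∑ i ∈ Finset.range m, ∑ j ∈ Finset.range n, Ξ (σ i) (σ (i+1)) (τ j) (τ (j+1)))|
      ≤ K * 2^θ₂ * zC θ₂ * (1 + 2^θ₁ * zC θ₁) * η^(θ₂-1) := by
  have h1 : ∑ i ∈ Finset.range m, ∑ j ∈ Finset.range n', Ξ (σ i) (σ (i+1)) (τ' j) (τ' (j+1))
      = ∑ j ∈ Finset.range n', ∑ i ∈ Finset.range m,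
          (fun c d a b => Ξ a b c d) (τ' j) (τ' (j+1)) (σ i) (σ (i+1)) := Finset.sum_comm
  have h2 : ∑ i ∈ Finset.range m, ∑ j ∈ Finset.range n, Ξ (σ i) (σ (i+1)) (τ j) (τ (j+1))
      = ∑ j ∈ Finset.range n, ∑ i ∈ Finset.range m,
          (fun c d a b => Ξ a b c d) (τ j) (τ (j+1)) (σ i) (σ (i+1)) := Finset.sum_comm
  rw [h1, h2]
  apply refine_fst hθ₂ hθ₁ hα₁ hK hv21 hu21 (fun c d a b => Ξ a b c d)
    ?_ ?_ hη hm hτ hτ' href hσ hmesh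
  · intro c q d a b hc hcq hqd hd ha hab hb
    have := HB a b c q d ha hab hb hc hcq hqd hd
    calc |Ξ a b c d - Ξ a b c q - Ξ a b q d| ≤ K * (b-a)^α₁ * (d-c)^θ₂ := this
      _ = K * (d-c)^θ₂ * (b-a)^α₁ := by ring
  · intro c q d a p b hc hcq hqd hd ha hap hpb hb
    have hHC := HC a p b c q d ha hap hpb hb hc hcq hqd hd
    have heq : (Ξ a b c d - Ξ a p c d - Ξ p b c d) - (Ξ a b c q - Ξ a p c q - Ξ p b c q)
          - (Ξ a b q d - Ξ a p q d - Ξ p b q d)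
        = (Ξ a b c d - Ξ a b c q - Ξ a b q d) - (Ξ a p c d - Ξ a p c q - Ξ a p q d)
          - (Ξ p b c d - Ξ p b c q - Ξ p b q d) := by ring
    calc |(Ξ a b c d - Ξ a p c d - Ξ p b c d) - (Ξ a b c q - Ξ a p c q - Ξ p b c q)
          - (Ξ a b q d - Ξ a p q d - Ξ p b q d)|
        = |(Ξ a b c d - Ξ a b c q - Ξ a b q d) - (Ξ a p c d - Ξ a p c q - Ξ a p q d)
          - (Ξ p b c d - Ξ p b c q - Ξ p b q d)| := by rw [heq]
      _ ≤ K * (b-a)^θ₁ * (d-c)^θ₂ := hHC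
      _ = K * (d-c)^θ₂ * (b-a)^θ₁ := by ring

/-- uniform grid -/
noncomputable def unif (u w : ℝ) (q : ℕ) : ℕ → ℝ := fun i => u + (w - u) * i / q

lemma unif_grid {u w : ℝ} (huw : u < w) {q : ℕ} (hq : 1 ≤ q) :
    IsGrid' u w q (unif u w q) := by
  have hq0 : (0:ℝ) < (q:ℝ) := by exact_mod_cast hq
  refine ⟨by simp [unif], ?_, ?_⟩
  · simp only [unif]
    field_simp
    ring
  · intro i hi
    simp only [unif]
    have : (w - u) * (i+1) / q - (w - u) * i / q = (w - u) / q := by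
      field_simp; ring
    have hpos : 0 < (w - u) / q := div_pos (by linarith) hq0
    push_cast
    linarith [this, hpos]

lemma unif_mesh {u w : ℝ} (huw : u ≤ w) (hw1 : w - u ≤ 1) {q : ℕ} (hq : 1 ≤ q) :
    ∀ i < q, unif u w q (i+1) - unif u w q i ≤ 1 / (q:ℝ) := by
  intro i hi
  have hq0 : (0:ℝ) < (q:ℝ) := by exact_mod_cast hq
  simp only [unif]
  have : u + (w - u) * (↑(i+1)) / q - (u + (w - u) * i / q) = (w - u) / q := by
    push_cast; field_simp; ring
  rw [this]
  gcongr

/-- **2D sewing.** Under the three coherence bounds, 2D Riemann sums converge with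
an explicit rate in the meshes of the two directions. -/
lemma sew {θ₁ θ₂ α₁ α₂ K : ℝ} (hθ₁ : 1 < θ₁) (hθ₂ : 1 < θ₂) (hα₁ : 0 < α₁) (hα₂ : 0 < α₂)
    (hK : 0 ≤ K) {s s' t t' : ℝ} (hss' : s < s') (htt' : t < t')
    (hs1 : s' - s ≤ 1) (ht1 : t' - t ≤ 1)
    (Ξ : ℝ → ℝ → ℝ → ℝ → ℝ)
    (HA : ∀ a p b c d : ℝ, s ≤ a → a ≤ p → p ≤ b → b ≤ s' → t ≤ c → c ≤ d → d ≤ t' →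
      |Ξ a b c d - Ξ a p c d - Ξ p b c d| ≤ K * (b-a)^θ₁ * (d-c)^α₂)
    (HB : ∀ a b c q d : ℝ, s ≤ a → a ≤ b → b ≤ s' → t ≤ c → c ≤ q → q ≤ d → d ≤ t' →
      |Ξ a b c d - Ξ a b c q - Ξ a b q d| ≤ K * (b-a)^α₁ * (d-c)^θ₂)
    (HC : ∀ a p b c q d : ℝ, s ≤ a → a ≤ p → p ≤ b → b ≤ s' → t ≤ c → c ≤ q → q ≤ d → d ≤ t' →
      |(Ξ a b c d - Ξ a b c q - Ξ a b q d) - (Ξ a p c d - Ξ a p c q - Ξ a p q d)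
        - (Ξ p b c d - Ξ p b c q - Ξ p b q d)| ≤ K * (b-a)^θ₁ * (d-c)^θ₂) :
    ∃ L A : ℝ, 0 ≤ A ∧ ∀ (m n : ℕ) (σ τ : ℕ → ℝ) (η₁ η₂ : ℝ), 0 ≤ η₁ → 0 ≤ η₂ →
      IsGrid' s s' m σ → IsGrid' t t' n τ →
      (∀ i < m, σ (i+1) - σ i ≤ η₁) → (∀ j < n, τ (j+1) - τ j ≤ η₂) →
      |(∑ i ∈ Finset.range m, ∑ j ∈ Finset.range n, Ξ (σ i) (σ (i+1)) (τ j) (τ (j+1))) - L|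
        ≤ A * (η₁^(θ₁-1) + η₂^(θ₂-1)) := by
  set A₁ : ℝ := K * 2^θ₁ * zC θ₁ * (1 + 2^θ₂ * zC θ₂) with hA₁
  set A₂ : ℝ := K * 2^θ₂ * zC θ₂ * (1 + 2^θ₁ * zC θ₁) with hA₂
  have h2t1 : (0:ℝ) ≤ 2 ^ θ₁ := Real.rpow_nonneg (by norm_num) _
  have h2t2 : (0:ℝ) ≤ 2 ^ θ₂ := Real.rpow_nonneg (by norm_num) _
  have hzC1 : 0 ≤ zC θ₁ := zC_nonneg hθ₁
  have hzC2 : 0 ≤ zC θ₂ := zC_nonneg hθ₂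
  have hA₁0 : 0 ≤ A₁ := by positivity
  have hA₂0 : 0 ≤ A₂ := by positivity
  set A : ℝ := A₁ + A₂ with hA
  have hA0 : 0 ≤ A := by positivity
  -- two-grid comparison
  have two_grid : ∀ (m n : ℕ) (σ τ : ℕ → ℝ) (η₁ η₂ : ℝ)
      (m₂ n₂ : ℕ) (σ₂ τ₂ : ℕ → ℝ) (η₁' η₂' : ℝ), 0 ≤ η₁ → 0 ≤ η₂ → 0 ≤ η₁' → 0 ≤ η₂' →
      IsGrid' s s' m σ → IsGrid' t t' n τ →
      (∀ i < m, σ (i+1) - σ i ≤ η₁) → (∀ j < n, τ (j+1) - τ j ≤ η₂) →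
      IsGrid' s s' m₂ σ₂ → IsGrid' t t' n₂ τ₂ →
      (∀ i < m₂, σ₂ (i+1) - σ₂ i ≤ η₁') → (∀ j < n₂, τ₂ (j+1) - τ₂ j ≤ η₂') →
      |(∑ i ∈ Finset.range m, ∑ j ∈ Finset.range n, Ξ (σ i) (σ (i+1)) (τ j) (τ (j+1)))
        - (∑ i ∈ Finset.range m₂, ∑ j ∈ Finset.range n₂, Ξ (σ₂ i) (σ₂ (i+1)) (τ₂ j) (τ₂ (j+1)))|
        ≤ (A₁ * η₁^(θ₁-1) + A₂ * η₂^(θ₂-1)) + (A₁ * η₁'^(θ₁-1) + A₂ * η₂'^(θ₂-1)) := by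
    intro m n σ τ η₁ η₂ m₂ n₂ σ₂ τ₂ η₁' η₂' hη₁ hη₂ hη₁' hη₂' hσ hτ hm1 hm2 hσ₂ hτ₂ hm1' hm2'
    obtain ⟨M, μ, φ, φ₂, hμ, hrefσ, hrefσ₂⟩ := exists_merge hσ hσ₂
    obtain ⟨N, ν, ψ, ψ₂, hν, hrefτ, hrefτ₂⟩ := exists_merge hτ hτ₂
    have hn1 : 1 ≤ n := hτ.one_le htt'
    have hn2 : 1 ≤ n₂ := hτ₂.one_le htt'
    have hM1 : 1 ≤ M := hμ.one_le hss'
    have e1 : |(∑ i ∈ Finset.range M, ∑ j ∈ Finset.range n, Ξ (μ i) (μ (i+1)) (τ j) (τ (j+1)))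
        - (∑ i ∈ Finset.range m, ∑ j ∈ Finset.range n, Ξ (σ i) (σ (i+1)) (τ j) (τ (j+1)))|
        ≤ A₁ * η₁^(θ₁-1) := by
      have := refine_fst hθ₁ hθ₂ hα₂ hK hs1 ht1 Ξ HA HC hη₁ hn1 hσ hμ hrefσ hτ hm1
      calc _ ≤ K * 2^θ₁ * zC θ₁ * (1 + 2^θ₂ * zC θ₂) * η₁^(θ₁-1) := this
        _ = A₁ * η₁^(θ₁-1) := by rw [hA₁]
    have e2 : |(∑ i ∈ Finset.range M, ∑ j ∈ Finset.range N, Ξ (μ i) (μ (i+1)) (ν j) (ν (j+1)))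
        - (∑ i ∈ Finset.range M, ∑ j ∈ Finset.range n, Ξ (μ i) (μ (i+1)) (τ j) (τ (j+1)))|
        ≤ A₂ * η₂^(θ₂-1) := by
      have := refine_snd hθ₁ hθ₂ hα₁ hK hs1 ht1 Ξ HB HC hη₂ hM1 hμ hτ hν hrefτ hm2
      calc _ ≤ K * 2^θ₂ * zC θ₂ * (1 + 2^θ₁ * zC θ₁) * η₂^(θ₂-1) := this
        _ = A₂ * η₂^(θ₂-1) := by rw [hA₂]
    have e3 : |(∑ i ∈ Finset.range M, ∑ j ∈ Finset.range n₂, Ξ (μ i) (μ (i+1)) (τ₂ j) (τ₂ (j+1)))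
        - (∑ i ∈ Finset.range m₂, ∑ j ∈ Finset.range n₂, Ξ (σ₂ i) (σ₂ (i+1)) (τ₂ j) (τ₂ (j+1)))|
        ≤ A₁ * η₁'^(θ₁-1) := by
      have := refine_fst hθ₁ hθ₂ hα₂ hK hs1 ht1 Ξ HA HC hη₁' hn2 hσ₂ hμ hrefσ₂ hτ₂ hm1'
      calc _ ≤ K * 2^θ₁ * zC θ₁ * (1 + 2^θ₂ * zC θ₂) * η₁'^(θ₁-1) := this
        _ = A₁ * η₁'^(θ₁-1) := by rw [hA₁]
    have e4 : |(∑ i ∈ Finset.range M, ∑ j ∈ Finset.range N, Ξ (μ i) (μ (i+1)) (ν j) (ν (j+1)))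
        - (∑ i ∈ Finset.range M, ∑ j ∈ Finset.range n₂, Ξ (μ i) (μ (i+1)) (τ₂ j) (τ₂ (j+1)))|
        ≤ A₂ * η₂'^(θ₂-1) := by
      have := refine_snd hθ₁ hθ₂ hα₁ hK hs1 ht1 Ξ HB HC hη₂' hM1 hμ hτ₂ hν hrefτ₂ hm2'
      calc _ ≤ K * 2^θ₂ * zC θ₂ * (1 + 2^θ₁ * zC θ₁) * η₂'^(θ₂-1) := this
        _ = A₂ * η₂'^(θ₂-1) := by rw [hA₂]
    set SA := ∑ i ∈ Finset.range m, ∑ j ∈ Finset.range n, Ξ (σ i) (σ (i+1)) (τ j) (τ (j+1))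
    set SB := ∑ i ∈ Finset.range m₂, ∑ j ∈ Finset.range n₂, Ξ (σ₂ i) (σ₂ (i+1)) (τ₂ j) (τ₂ (j+1))
    set S1 := ∑ i ∈ Finset.range M, ∑ j ∈ Finset.range n, Ξ (μ i) (μ (i+1)) (τ j) (τ (j+1))
    set S2 := ∑ i ∈ Finset.range M, ∑ j ∈ Finset.range N, Ξ (μ i) (μ (i+1)) (ν j) (ν (j+1))
    set S3 := ∑ i ∈ Finset.range M, ∑ j ∈ Finset.range n₂, Ξ (μ i) (μ (i+1)) (τ₂ j) (τ₂ (j+1))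
    have hdec : SA - SB = -(S1 - SA) - (S2 - S1) + (S2 - S3) + (S3 - SB) := by ring
    rw [hdec]
    calc |(-(S1 - SA) - (S2 - S1) + (S2 - S3) + (S3 - SB))|
        ≤ |(-(S1 - SA) - (S2 - S1) + (S2 - S3))| + |S3 - SB| := abs_add_le _ _
      _ ≤ |(-(S1 - SA) - (S2 - S1))| + |S2 - S3| + |S3 - SB| := by
          apply add_le_add (abs_add_le _ _) le_rfl
      _ ≤ |(-(S1 - SA))| + |S2 - S1| + |S2 - S3| + |S3 - SB| := by
          have := abs_sub (-(S1 - SA)) (S2 - S1)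
          linarith
      _ = |S1 - SA| + |S2 - S1| + |S2 - S3| + |S3 - SB| := by rw [abs_neg]
      _ ≤ (A₁ * η₁^(θ₁-1) + A₂ * η₂^(θ₂-1)) + (A₁ * η₁'^(θ₁-1) + A₂ * η₂'^(θ₂-1)) := by
          linarith [e1, e2, e3, e4]
  -- the approximating sequence along uniform grids
  set g : ℕ → ℝ := fun q =>
    ∑ i ∈ Finset.range (q+1), ∑ j ∈ Finset.range (q+1),
      Ξ (unif s s' (q+1) i) (unif s s' (q+1) (i+1)) (unif t t' (q+1) j) (unif t t' (q+1) (j+1))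
    with hg
  have hgrid_s : ∀ q : ℕ, IsGrid' s s' (q+1) (unif s s' (q+1)) :=
    fun q => unif_grid hss' (by omega)
  have hgrid_t : ∀ q : ℕ, IsGrid' t t' (q+1) (unif t t' (q+1)) :=
    fun q => unif_grid htt' (by omega)
  have hmesh_s : ∀ q : ℕ, ∀ i < q+1, unif s s' (q+1) (i+1) - unif s s' (q+1) i ≤ 1/((q:ℝ)+1) := by
    intro q
    have := unif_mesh hss'.le hs1 (by omega : 1 ≤ q+1)
    push_cast at this ⊢
    exact this
  have hmesh_t : ∀ q : ℕ, ∀ j < q+1, unif t t' (q+1) (j+1) - unif t t' (q+1) j ≤ 1/((q:ℝ)+1) := by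
    intro q
    have := unif_mesh htt'.le ht1 (by omega : 1 ≤ q+1)
    push_cast at this ⊢
    exact this
  have hq0 : ∀ q : ℕ, (0:ℝ) ≤ 1/((q:ℝ)+1) := by
    intro q; positivity
  -- Cauchy
  set b : ℕ → ℝ := fun q => 2 * ((A₁ * (1/((q:ℝ)+1))^(θ₁-1) + A₂ * (1/((q:ℝ)+1))^(θ₂-1))) with hb
  have hcauchy : CauchySeq g := by
    apply cauchySeq_of_le_tendsto_0 b ?_ ?_
    · intro q r N hq hr
      rw [Real.dist_eq]
      have h1 := two_grid (q+1) (q+1) (unif s s' (q+1)) (unif t t' (q+1)) (1/((q:ℝ)+1)) (1/((q:ℝ)+1))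
        (r+1) (r+1) (unif s s' (r+1)) (unif t t' (r+1)) (1/((r:ℝ)+1)) (1/((r:ℝ)+1))
        (hq0 q) (hq0 q) (hq0 r) (hq0 r)
        (hgrid_s q) (hgrid_t q) (hmesh_s q) (hmesh_t q)
        (hgrid_s r) (hgrid_t r) (hmesh_s r) (hmesh_t r)
      apply h1.trans
      have hmono : ∀ e : ℝ, 0 < e → ∀ w : ℕ, N ≤ w → (1/((w:ℝ)+1))^e ≤ (1/((N:ℝ)+1))^e := by
        intro e he w hw
        apply Real.rpow_le_rpow (by positivity) ?_ he.le
        apply one_div_le_one_div_of_le (by positivity)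
        have : ((N:ℝ)) ≤ (w:ℝ) := Nat.cast_le.mpr hw
        linarith
      have hθ₁' : (0:ℝ) < θ₁ - 1 := by linarith
      have hθ₂' : (0:ℝ) < θ₂ - 1 := by linarith
      have t1 := hmono _ hθ₁' q hq
      have t2 := hmono _ hθ₂' q hq
      have t3 := hmono _ hθ₁' r hr
      have t4 := hmono _ hθ₂' r hr
      rw [hb]
      simp only
      nlinarith [mul_le_mul_of_nonneg_left t1 hA₁0, mul_le_mul_of_nonneg_left t2 hA₂0,
        mul_le_mul_of_nonneg_left t3 hA₁0, mul_le_mul_of_nonneg_left t4 hA₂0]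
    · -- b → 0
      have hlim : ∀ e : ℝ, 0 < e →
          Filter.Tendsto (fun q : ℕ => (1/((q:ℝ)+1))^e) Filter.atTop (nhds 0) := by
        intro e he
        have h1 : Filter.Tendsto (fun q : ℕ => 1/((q:ℝ)+1)) Filter.atTop (nhds 0) :=
          tendsto_one_div_add_atTop_nhds_zero_nat
        have h2 : ContinuousAt (fun x : ℝ => x ^ e) 0 :=
          Real.continuousAt_rpow_const 0 e (Or.inr he.le)
        have := h2.tendsto.comp h1
        rwa [Real.zero_rpow (ne_of_gt he)] at this
      have := ((hlim _ (by linarith : (0:ℝ) < θ₁ - 1)).const_mul A₁).add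
        ((hlim _ (by linarith : (0:ℝ) < θ₂ - 1)).const_mul A₂)
      have h0 : (2:ℝ) * (A₁ * 0 + A₂ * 0) = 0 := by ring
      rw [hb]
      simpa [h0] using this.const_mul (2:ℝ)
  obtain ⟨L, hL⟩ := cauchySeq_tendsto_of_complete hcauchy
  refine ⟨L, A, hA0, ?_⟩
  intro m n σ τ η₁ η₂ hη₁ hη₂ hσ hτ hm1 hm2
  set S := ∑ i ∈ Finset.range m, ∑ j ∈ Finset.range n, Ξ (σ i) (σ (i+1)) (τ j) (τ (j+1)) with hS
  have hf : Filter.Tendsto (fun q => |S - g q|) Filter.atTop (nhds |S - L|) :=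
    ((tendsto_const_nhds.sub hL).abs)
  have hgbd : ∀ q : ℕ, |S - g q| ≤ (A₁ * η₁^(θ₁-1) + A₂ * η₂^(θ₂-1))
      + (A₁ * (1/((q:ℝ)+1))^(θ₁-1) + A₂ * (1/((q:ℝ)+1))^(θ₂-1)) := by
    intro q
    exact two_grid m n σ τ η₁ η₂ (q+1) (q+1) (unif s s' (q+1)) (unif t t' (q+1))
      (1/((q:ℝ)+1)) (1/((q:ℝ)+1)) hη₁ hη₂ (hq0 q) (hq0 q) hσ hτ hm1 hm2
      (hgrid_s q) (hgrid_t q) (hmesh_s q) (hmesh_t q)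
  have hlim : ∀ e : ℝ, 0 < e →
      Filter.Tendsto (fun q : ℕ => (1/((q:ℝ)+1))^e) Filter.atTop (nhds 0) := by
    intro e he
    have h1 : Filter.Tendsto (fun q : ℕ => 1/((q:ℝ)+1)) Filter.atTop (nhds 0) :=
      tendsto_one_div_add_atTop_nhds_zero_nat
    have h2 : ContinuousAt (fun x : ℝ => x ^ e) 0 :=
      Real.continuousAt_rpow_const 0 e (Or.inr he.le)
    have := h2.tendsto.comp h1
    rwa [Real.zero_rpow (ne_of_gt he)] at this
  have hh : Filter.Tendsto (fun q : ℕ => (A₁ * η₁^(θ₁-1) + A₂ * η₂^(θ₂-1))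
      + (A₁ * (1/((q:ℝ)+1))^(θ₁-1) + A₂ * (1/((q:ℝ)+1))^(θ₂-1))) Filter.atTop
      (nhds ((A₁ * η₁^(θ₁-1) + A₂ * η₂^(θ₂-1)) + 0)) := by
    apply Filter.Tendsto.add tendsto_const_nhds
    have := ((hlim _ (by linarith : (0:ℝ) < θ₁ - 1)).const_mul A₁).add
      ((hlim _ (by linarith : (0:ℝ) < θ₂ - 1)).const_mul A₂)
    simpa using this
  have hfin : |S - L| ≤ (A₁ * η₁^(θ₁-1) + A₂ * η₂^(θ₂-1)) + 0 :=
    le_of_tendsto_of_tendsto' hf hh hgbd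
  have hη₁' : (0:ℝ) ≤ η₁^(θ₁-1) := Real.rpow_nonneg hη₁ _
  have hη₂' : (0:ℝ) ≤ η₂^(θ₂-1) := Real.rpow_nonneg hη₂ _
  calc |S - L| ≤ (A₁ * η₁^(θ₁-1) + A₂ * η₂^(θ₂-1)) + 0 := hfin
    _ ≤ A * (η₁^(θ₁-1) + η₂^(θ₂-1)) := by rw [hA]; nlinarith

/-- Hölder-type bounds with constant `C` on `[0,1]²`. -/
def Hold (ρ₁ ρ₂ C : ℝ) (f : ℝ → ℝ → ℝ) : Prop :=
  (∀ s₁ s₂ t₁ t₂ : ℝ, s₁ ∈ Set.Icc (0:ℝ) 1 → s₂ ∈ Set.Icc (0:ℝ) 1 →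
    t₁ ∈ Set.Icc (0:ℝ) 1 → t₂ ∈ Set.Icc (0:ℝ) 1 →
    |dd f s₁ s₂ t₁ t₂| ≤ C * |s₂ - s₁| ^ ρ₁ * |t₂ - t₁| ^ ρ₂) ∧
  (∀ s₁ s₂ t : ℝ, s₁ ∈ Set.Icc (0:ℝ) 1 → s₂ ∈ Set.Icc (0:ℝ) 1 → t ∈ Set.Icc (0:ℝ) 1 →
    |d1 f s₁ s₂ t| ≤ C * |s₂ - s₁| ^ ρ₁) ∧
  (∀ s t₁ t₂ : ℝ, s ∈ Set.Icc (0:ℝ) 1 → t₁ ∈ Set.Icc (0:ℝ) 1 → t₂ ∈ Set.Icc (0:ℝ) 1 →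
    |d2 f s t₁ t₂| ≤ C * |t₂ - t₁| ^ ρ₂) ∧
  (∀ s t : ℝ, s ∈ Set.Icc (0:ℝ) 1 → t ∈ Set.Icc (0:ℝ) 1 → |f s t| ≤ C)

/-- pairing of increment powers -/
lemma incr_prod_le {a p b e1 e2 θ : ℝ} (hap : a ≤ p) (hpb : p ≤ b) (ha0 : 0 ≤ a) (hb1 : b ≤ 1)
    (he1 : 0 ≤ e1) (he2 : 0 ≤ e2) (hθ : 0 < θ) (hθle : θ ≤ e1 + e2) :
    |p - a| ^ e1 * |b - p| ^ e2 ≤ (b - a) ^ θ := by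
  rw [abs_of_nonneg (by linarith), abs_of_nonneg (by linarith)]
  have h1 : (p - a) ^ e1 ≤ (b - a) ^ e1 := Real.rpow_le_rpow (by linarith) (by linarith) he1
  have h2 : (b - p) ^ e2 ≤ (b - a) ^ e2 := Real.rpow_le_rpow (by linarith) (by linarith) he2
  calc (p - a) ^ e1 * (b - p) ^ e2
      ≤ (b - a) ^ e1 * (b - a) ^ e2 :=
        mul_le_mul h1 h2 (Real.rpow_nonneg (by linarith) _) (Real.rpow_nonneg (by linarith) _)
    _ = (b - a) ^ (e1 + e2) := (Real.rpow_add' (by linarith) (by linarith)).symm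
    _ ≤ (b - a) ^ θ := rpow_exp_anti (by linarith) (by linarith) hθ hθle

/-- single increment power -/
lemma incr_le {a b e θ : ℝ} (hab : a ≤ b) (ha0 : 0 ≤ a) (hb1 : b ≤ 1)
    (hθ : 0 < θ) (hθle : θ ≤ e) :
    |b - a| ^ e ≤ (b - a) ^ θ := by
  rw [abs_of_nonneg (by linarith)]
  exact rpow_exp_anti (by linarith) (by linarith) hθ hθle

lemma pair_bound {C3 P Q Bs Bt : ℝ} (hC3 : 0 ≤ C3) (hP : 0 ≤ P) (hQ : 0 ≤ Q)
    (hBs : P ≤ Bs) (hBt : Q ≤ Bt) : C3 * (P * Q) ≤ C3 * Bs * Bt := by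
  calc C3 * (P * Q) ≤ C3 * (Bs * Bt) :=
        mul_le_mul_of_nonneg_left (mul_le_mul hBs hBt hQ (hP.trans hBs)) hC3
    _ = C3 * Bs * Bt := by ring


lemma abs_add4 (x1 x2 x3 x4 : ℝ) : |x1+x2+x3+x4| ≤ |x1|+|x2|+|x3|+|x4| := by
  calc |x1+x2+x3+x4| ≤ |x1+x2+x3| + |x4| := abs_add_le _ _
    _ ≤ |x1+x2| + |x3| + |x4| := by linarith [abs_add_le (x1+x2) x3]
    _ ≤ |x1|+|x2|+|x3|+|x4| := by linarith [abs_add_le x1 x2]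

lemma term_bound {X E C3 P Q Bs Bt : ℝ} (h1 : |X| ≤ E) (heq : E = C3 * (P * Q))
    (hC3 : 0 ≤ C3) (hP : 0 ≤ P) (hQ : 0 ≤ Q) (hBs : P ≤ Bs) (hBt : Q ≤ Bt) :
    |X| ≤ C3 * Bs * Bt :=
  (heq ▸ h1).trans (pair_bound hC3 hP hQ hBs hBt)

section Germs

variable {γ₁ γ₂ ρ₁ ρ₂ β₁ β₂ C : ℝ} {y x z : ℝ → ℝ → ℝ}

lemma germA_HA (hC : 0 ≤ C)
    (hγ₁ : γ₁ ∈ Set.Ioc (0:ℝ) 1) (hγ₂ : γ₂ ∈ Set.Ioc (0:ℝ) 1)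
    (hρ₁ : ρ₁ ∈ Set.Ioc (0:ℝ) 1) (hρ₂ : ρ₂ ∈ Set.Ioc (0:ℝ) 1)
    (hβ₁ : β₁ ∈ Set.Ioc (0:ℝ) 1) (hβ₂ : β₂ ∈ Set.Ioc (0:ℝ) 1)
    (hy : Hold γ₁ γ₂ C y) (hx : Hold ρ₁ ρ₂ C x) (hz : Hold β₁ β₂ C z) :
    ∀ a p b c d : ℝ, 0 ≤ a → a ≤ p → p ≤ b → b ≤ 1 → 0 ≤ c → c ≤ d → d ≤ 1 →
    |(y a c * d1 x a b c * d2 z b c d) - (y a c * d1 x a p c * d2 z p c d) - (y p c * d1 x p b c * d2 z b c d)|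
      ≤ (4*C^3) * (b-a)^(ρ₁ + min β₁ γ₁) * (d-c)^β₂ := by
  intro a p b c d ha hap hpb hb hc hcd hd
  have hma : a ∈ Set.Icc (0:ℝ) 1 := ⟨ha, by linarith⟩
  have hmp : p ∈ Set.Icc (0:ℝ) 1 := ⟨by linarith, by linarith⟩
  have hmb : b ∈ Set.Icc (0:ℝ) 1 := ⟨by linarith, by linarith⟩
  have hmc : c ∈ Set.Icc (0:ℝ) 1 := ⟨hc, by linarith⟩
  have hmd : d ∈ Set.Icc (0:ℝ) 1 := ⟨by linarith, by linarith⟩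
  have hθs : 0 < ρ₁ + min β₁ γ₁ := by
    have := lt_min hβ₁.1 hγ₁.1; linarith [hρ₁.1]
  have hθt : 0 < β₂ + min γ₂ ρ₂ := by
    have := lt_min hγ₂.1 hρ₂.1; linarith [hβ₂.1]
  have hid : (y a c * d1 x a b c * d2 z b c d) - (y a c * d1 x a p c * d2 z p c d) - (y p c * d1 x p b c * d2 z b c d)
      = (y a c) * (d1 x a p c) * (dd z p b c d) + (-(d1 y a p c)) * (d1 x p b c) * (d2 z b c d) := by
    simp only [d1, d2, dd]; ring
  rw [hid]
  have hT0 : |(y a c) * (d1 x a p c) * (dd z p b c d)| ≤ C^3 * ((b-a)^(ρ₁ + min β₁ γ₁)) * ((d-c)^β₂) := by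
    apply term_bound (abs_mul3_le (hy.2.2.2 a c hma hmc) (hx.2.1 a p c hma hmp hmc) (hz.1 p b c d hmp hmb hmc hmd))
      (show (C) * (C * |p - a| ^ ρ₁) * (C * |b - p| ^ β₁ * |d - c| ^ β₂) = C^3 * ((|p - a| ^ ρ₁ * |b - p| ^ β₁) * (|d - c| ^ β₂)) by ring)
      (pow_nonneg hC 3) (by positivity) (by positivity)
      (incr_prod_le hap hpb ha hb (by linarith [hρ₁.1] : 0 ≤ ρ₁) (by linarith [hβ₁.1] : 0 ≤ β₁) hθs (by linarith [min_le_left β₁ γ₁] : ρ₁ + min β₁ γ₁ ≤ ρ₁ + β₁)) (incr_le hcd hc hd hβ₂.1 le_rfl)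
  have hT1 : |(-(d1 y a p c)) * (d1 x p b c) * (d2 z b c d)| ≤ C^3 * ((b-a)^(ρ₁ + min β₁ γ₁)) * ((d-c)^β₂) := by
    apply term_bound (abs_mul3_le (by rw [abs_neg]; exact hy.2.1 a p c hma hmp hmc) (hx.2.1 p b c hmp hmb hmc) (hz.2.2.1 b c d hmb hmc hmd))
      (show (C * |p - a| ^ γ₁) * (C * |b - p| ^ ρ₁) * (C * |d - c| ^ β₂) = C^3 * ((|p - a| ^ γ₁ * |b - p| ^ ρ₁) * (|d - c| ^ β₂)) by ring)
      (pow_nonneg hC 3) (by positivity) (by positivity)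
      (incr_prod_le hap hpb ha hb (by linarith [hγ₁.1] : 0 ≤ γ₁) (by linarith [hρ₁.1] : 0 ≤ ρ₁) hθs (by linarith [min_le_right β₁ γ₁] : ρ₁ + min β₁ γ₁ ≤ γ₁ + ρ₁)) (incr_le hcd hc hd hβ₂.1 le_rfl)
  have hBsn : (0:ℝ) ≤ (b-a)^(ρ₁ + min β₁ γ₁) := Real.rpow_nonneg (by linarith) _
  have hBtn : (0:ℝ) ≤ (d-c)^β₂ := Real.rpow_nonneg (by linarith) _
  have hXn : (0:ℝ) ≤ C^3 * (b-a)^(ρ₁ + min β₁ γ₁) * (d-c)^β₂ := mul_nonneg (mul_nonneg (pow_nonneg hC 3) hBsn) hBtn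
  have h4 : (4*C^3) * (b-a)^(ρ₁ + min β₁ γ₁) * (d-c)^β₂ = 4*(C^3 * (b-a)^(ρ₁ + min β₁ γ₁) * (d-c)^β₂) := by ring
  rw [h4]
  calc |(y a c) * (d1 x a p c) * (dd z p b c d) + (-(d1 y a p c)) * (d1 x p b c) * (d2 z b c d)| ≤ |(y a c) * (d1 x a p c) * (dd z p b c d)| + |(-(d1 y a p c)) * (d1 x p b c) * (d2 z b c d)| := abs_add_le _ _
    _ ≤ 4*(C^3 * (b-a)^(ρ₁ + min β₁ γ₁) * (d-c)^β₂) := by linarith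

lemma germA_HB (hC : 0 ≤ C)
    (hγ₁ : γ₁ ∈ Set.Ioc (0:ℝ) 1) (hγ₂ : γ₂ ∈ Set.Ioc (0:ℝ) 1)
    (hρ₁ : ρ₁ ∈ Set.Ioc (0:ℝ) 1) (hρ₂ : ρ₂ ∈ Set.Ioc (0:ℝ) 1)
    (hβ₁ : β₁ ∈ Set.Ioc (0:ℝ) 1) (hβ₂ : β₂ ∈ Set.Ioc (0:ℝ) 1)
    (hy : Hold γ₁ γ₂ C y) (hx : Hold ρ₁ ρ₂ C x) (hz : Hold β₁ β₂ C z) :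
    ∀ a b c q d : ℝ, 0 ≤ a → a ≤ b → b ≤ 1 → 0 ≤ c → c ≤ q → q ≤ d → d ≤ 1 →
    |(y a c * d1 x a b c * d2 z b c d) - (y a c * d1 x a b c * d2 z b c q) - (y a q * d1 x a b q * d2 z b q d)|
      ≤ (4*C^3) * (b-a)^ρ₁ * (d-c)^(β₂ + min γ₂ ρ₂) := by
  intro a b c q d ha hab hb hc hcq hqd hd
  have hma : a ∈ Set.Icc (0:ℝ) 1 := ⟨ha, by linarith⟩
  have hmb : b ∈ Set.Icc (0:ℝ) 1 := ⟨by linarith, by linarith⟩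
  have hmc : c ∈ Set.Icc (0:ℝ) 1 := ⟨hc, by linarith⟩
  have hmq : q ∈ Set.Icc (0:ℝ) 1 := ⟨by linarith, by linarith⟩
  have hmd : d ∈ Set.Icc (0:ℝ) 1 := ⟨by linarith, by linarith⟩
  have hθs : 0 < ρ₁ + min β₁ γ₁ := by
    have := lt_min hβ₁.1 hγ₁.1; linarith [hρ₁.1]
  have hθt : 0 < β₂ + min γ₂ ρ₂ := by
    have := lt_min hγ₂.1 hρ₂.1; linarith [hβ₂.1]
  have hid : (y a c * d1 x a b c * d2 z b c d) - (y a c * d1 x a b c * d2 z b c q) - (y a q * d1 x a b q * d2 z b q d)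
      = (-(d2 y a c q)) * (d1 x a b q) * (d2 z b q d) + (-(y a c)) * (dd x a b c q) * (d2 z b q d) := by
    simp only [d1, d2, dd]; ring
  rw [hid]
  have hT0 : |(-(d2 y a c q)) * (d1 x a b q) * (d2 z b q d)| ≤ C^3 * ((b-a)^ρ₁) * ((d-c)^(β₂ + min γ₂ ρ₂)) := by
    apply term_bound (abs_mul3_le (by rw [abs_neg]; exact hy.2.2.1 a c q hma hmc hmq) (hx.2.1 a b q hma hmb hmq) (hz.2.2.1 b q d hmb hmq hmd))
      (show (C * |q - c| ^ γ₂) * (C * |b - a| ^ ρ₁) * (C * |d - q| ^ β₂) = C^3 * ((|b - a| ^ ρ₁) * (|q - c| ^ γ₂ * |d - q| ^ β₂)) by ring)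
      (pow_nonneg hC 3) (by positivity) (by positivity)
      (incr_le hab ha hb hρ₁.1 le_rfl) (incr_prod_le hcq hqd hc hd (by linarith [hγ₂.1] : 0 ≤ γ₂) (by linarith [hβ₂.1] : 0 ≤ β₂) hθt (by linarith [min_le_left γ₂ ρ₂] : β₂ + min γ₂ ρ₂ ≤ γ₂ + β₂))
  have hT1 : |(-(y a c)) * (dd x a b c q) * (d2 z b q d)| ≤ C^3 * ((b-a)^ρ₁) * ((d-c)^(β₂ + min γ₂ ρ₂)) := by
    apply term_bound (abs_mul3_le (by rw [abs_neg]; exact hy.2.2.2 a c hma hmc) (hx.1 a b c q hma hmb hmc hmq) (hz.2.2.1 b q d hmb hmq hmd))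
      (show (C) * (C * |b - a| ^ ρ₁ * |q - c| ^ ρ₂) * (C * |d - q| ^ β₂) = C^3 * ((|b - a| ^ ρ₁) * (|q - c| ^ ρ₂ * |d - q| ^ β₂)) by ring)
      (pow_nonneg hC 3) (by positivity) (by positivity)
      (incr_le hab ha hb hρ₁.1 le_rfl) (incr_prod_le hcq hqd hc hd (by linarith [hρ₂.1] : 0 ≤ ρ₂) (by linarith [hβ₂.1] : 0 ≤ β₂) hθt (by linarith [min_le_right γ₂ ρ₂] : β₂ + min γ₂ ρ₂ ≤ ρ₂ + β₂))
  have hBsn : (0:ℝ) ≤ (b-a)^ρ₁ := Real.rpow_nonneg (by linarith) _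
  have hBtn : (0:ℝ) ≤ (d-c)^(β₂ + min γ₂ ρ₂) := Real.rpow_nonneg (by linarith) _
  have hXn : (0:ℝ) ≤ C^3 * (b-a)^ρ₁ * (d-c)^(β₂ + min γ₂ ρ₂) := mul_nonneg (mul_nonneg (pow_nonneg hC 3) hBsn) hBtn
  have h4 : (4*C^3) * (b-a)^ρ₁ * (d-c)^(β₂ + min γ₂ ρ₂) = 4*(C^3 * (b-a)^ρ₁ * (d-c)^(β₂ + min γ₂ ρ₂)) := by ring
  rw [h4]
  calc |(-(d2 y a c q)) * (d1 x a b q) * (d2 z b q d) + (-(y a c)) * (dd x a b c q) * (d2 z b q d)| ≤ |(-(d2 y a c q)) * (d1 x a b q) * (d2 z b q d)| + |(-(y a c)) * (dd x a b c q) * (d2 z b q d)| := abs_add_le _ _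
    _ ≤ 4*(C^3 * (b-a)^ρ₁ * (d-c)^(β₂ + min γ₂ ρ₂)) := by linarith

lemma germA_HC (hC : 0 ≤ C)
    (hγ₁ : γ₁ ∈ Set.Ioc (0:ℝ) 1) (hγ₂ : γ₂ ∈ Set.Ioc (0:ℝ) 1)
    (hρ₁ : ρ₁ ∈ Set.Ioc (0:ℝ) 1) (hρ₂ : ρ₂ ∈ Set.Ioc (0:ℝ) 1)
    (hβ₁ : β₁ ∈ Set.Ioc (0:ℝ) 1) (hβ₂ : β₂ ∈ Set.Ioc (0:ℝ) 1)
    (hy : Hold γ₁ γ₂ C y) (hx : Hold ρ₁ ρ₂ C x) (hz : Hold β₁ β₂ C z) :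
    ∀ a p b c q d : ℝ, 0 ≤ a → a ≤ p → p ≤ b → b ≤ 1 → 0 ≤ c → c ≤ q → q ≤ d → d ≤ 1 →
    |((y a c * d1 x a b c * d2 z b c d) - (y a c * d1 x a b c * d2 z b c q) - (y a q * d1 x a b q * d2 z b q d)) - ((y a c * d1 x a p c * d2 z p c d) - (y a c * d1 x a p c * d2 z p c q) - (y a q * d1 x a p q * d2 z p q d)) - ((y p c * d1 x p b c * d2 z b c d) - (y p c * d1 x p b c * d2 z b c q) - (y p q * d1 x p b q * d2 z b q d))|
      ≤ (4*C^3) * (b-a)^(ρ₁ + min β₁ γ₁) * (d-c)^(β₂ + min γ₂ ρ₂) := by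
  intro a p b c q d ha hap hpb hb hc hcq hqd hd
  have hma : a ∈ Set.Icc (0:ℝ) 1 := ⟨ha, by linarith⟩
  have hmp : p ∈ Set.Icc (0:ℝ) 1 := ⟨by linarith, by linarith⟩
  have hmb : b ∈ Set.Icc (0:ℝ) 1 := ⟨by linarith, by linarith⟩
  have hmc : c ∈ Set.Icc (0:ℝ) 1 := ⟨hc, by linarith⟩
  have hmq : q ∈ Set.Icc (0:ℝ) 1 := ⟨by linarith, by linarith⟩
  have hmd : d ∈ Set.Icc (0:ℝ) 1 := ⟨by linarith, by linarith⟩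
  have hθs : 0 < ρ₁ + min β₁ γ₁ := by
    have := lt_min hβ₁.1 hγ₁.1; linarith [hρ₁.1]
  have hθt : 0 < β₂ + min γ₂ ρ₂ := by
    have := lt_min hγ₂.1 hρ₂.1; linarith [hβ₂.1]
  have hid : ((y a c * d1 x a b c * d2 z b c d) - (y a c * d1 x a b c * d2 z b c q) - (y a q * d1 x a b q * d2 z b q d)) - ((y a c * d1 x a p c * d2 z p c d) - (y a c * d1 x a p c * d2 z p c q) - (y a q * d1 x a p q * d2 z p q d)) - ((y p c * d1 x p b c * d2 z b c d) - (y p c * d1 x p b c * d2 z b c q) - (y p q * d1 x p b q * d2 z b q d))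
      = (-(d2 y a c q)) * (d1 x a p q) * (dd z p b q d) + (-(y a c)) * (dd x a p c q) * (dd z p b q d) + (dd y a p c q) * (d1 x p b q) * (d2 z b q d) + (d1 y a p c) * (dd x p b c q) * (d2 z b q d) := by
    simp only [d1, d2, dd]; ring
  rw [hid]
  have hT0 : |(-(d2 y a c q)) * (d1 x a p q) * (dd z p b q d)| ≤ C^3 * ((b-a)^(ρ₁ + min β₁ γ₁)) * ((d-c)^(β₂ + min γ₂ ρ₂)) := by
    apply term_bound (abs_mul3_le (by rw [abs_neg]; exact hy.2.2.1 a c q hma hmc hmq) (hx.2.1 a p q hma hmp hmq) (hz.1 p b q d hmp hmb hmq hmd))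
      (show (C * |q - c| ^ γ₂) * (C * |p - a| ^ ρ₁) * (C * |b - p| ^ β₁ * |d - q| ^ β₂) = C^3 * ((|p - a| ^ ρ₁ * |b - p| ^ β₁) * (|q - c| ^ γ₂ * |d - q| ^ β₂)) by ring)
      (pow_nonneg hC 3) (by positivity) (by positivity)
      (incr_prod_le hap hpb ha hb (by linarith [hρ₁.1] : 0 ≤ ρ₁) (by linarith [hβ₁.1] : 0 ≤ β₁) hθs (by linarith [min_le_left β₁ γ₁] : ρ₁ + min β₁ γ₁ ≤ ρ₁ + β₁)) (incr_prod_le hcq hqd hc hd (by linarith [hγ₂.1] : 0 ≤ γ₂) (by linarith [hβ₂.1] : 0 ≤ β₂) hθt (by linarith [min_le_left γ₂ ρ₂] : β₂ + min γ₂ ρ₂ ≤ γ₂ + β₂))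
  have hT1 : |(-(y a c)) * (dd x a p c q) * (dd z p b q d)| ≤ C^3 * ((b-a)^(ρ₁ + min β₁ γ₁)) * ((d-c)^(β₂ + min γ₂ ρ₂)) := by
    apply term_bound (abs_mul3_le (by rw [abs_neg]; exact hy.2.2.2 a c hma hmc) (hx.1 a p c q hma hmp hmc hmq) (hz.1 p b q d hmp hmb hmq hmd))
      (show (C) * (C * |p - a| ^ ρ₁ * |q - c| ^ ρ₂) * (C * |b - p| ^ β₁ * |d - q| ^ β₂) = C^3 * ((|p - a| ^ ρ₁ * |b - p| ^ β₁) * (|q - c| ^ ρ₂ * |d - q| ^ β₂)) by ring)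
      (pow_nonneg hC 3) (by positivity) (by positivity)
      (incr_prod_le hap hpb ha hb (by linarith [hρ₁.1] : 0 ≤ ρ₁) (by linarith [hβ₁.1] : 0 ≤ β₁) hθs (by linarith [min_le_left β₁ γ₁] : ρ₁ + min β₁ γ₁ ≤ ρ₁ + β₁)) (incr_prod_le hcq hqd hc hd (by linarith [hρ₂.1] : 0 ≤ ρ₂) (by linarith [hβ₂.1] : 0 ≤ β₂) hθt (by linarith [min_le_right γ₂ ρ₂] : β₂ + min γ₂ ρ₂ ≤ ρ₂ + β₂))
  have hT2 : |(dd y a p c q) * (d1 x p b q) * (d2 z b q d)| ≤ C^3 * ((b-a)^(ρ₁ + min β₁ γ₁)) * ((d-c)^(β₂ + min γ₂ ρ₂)) := by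
    apply term_bound (abs_mul3_le (hy.1 a p c q hma hmp hmc hmq) (hx.2.1 p b q hmp hmb hmq) (hz.2.2.1 b q d hmb hmq hmd))
      (show (C * |p - a| ^ γ₁ * |q - c| ^ γ₂) * (C * |b - p| ^ ρ₁) * (C * |d - q| ^ β₂) = C^3 * ((|p - a| ^ γ₁ * |b - p| ^ ρ₁) * (|q - c| ^ γ₂ * |d - q| ^ β₂)) by ring)
      (pow_nonneg hC 3) (by positivity) (by positivity)
      (incr_prod_le hap hpb ha hb (by linarith [hγ₁.1] : 0 ≤ γ₁) (by linarith [hρ₁.1] : 0 ≤ ρ₁) hθs (by linarith [min_le_right β₁ γ₁] : ρ₁ + min β₁ γ₁ ≤ γ₁ + ρ₁)) (incr_prod_le hcq hqd hc hd (by linarith [hγ₂.1] : 0 ≤ γ₂) (by linarith [hβ₂.1] : 0 ≤ β₂) hθt (by linarith [min_le_left γ₂ ρ₂] : β₂ + min γ₂ ρ₂ ≤ γ₂ + β₂))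
  have hT3 : |(d1 y a p c) * (dd x p b c q) * (d2 z b q d)| ≤ C^3 * ((b-a)^(ρ₁ + min β₁ γ₁)) * ((d-c)^(β₂ + min γ₂ ρ₂)) := by
    apply term_bound (abs_mul3_le (hy.2.1 a p c hma hmp hmc) (hx.1 p b c q hmp hmb hmc hmq) (hz.2.2.1 b q d hmb hmq hmd))
      (show (C * |p - a| ^ γ₁) * (C * |b - p| ^ ρ₁ * |q - c| ^ ρ₂) * (C * |d - q| ^ β₂) = C^3 * ((|p - a| ^ γ₁ * |b - p| ^ ρ₁) * (|q - c| ^ ρ₂ * |d - q| ^ β₂)) by ring)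
      (pow_nonneg hC 3) (by positivity) (by positivity)
      (incr_prod_le hap hpb ha hb (by linarith [hγ₁.1] : 0 ≤ γ₁) (by linarith [hρ₁.1] : 0 ≤ ρ₁) hθs (by linarith [min_le_right β₁ γ₁] : ρ₁ + min β₁ γ₁ ≤ γ₁ + ρ₁)) (incr_prod_le hcq hqd hc hd (by linarith [hρ₂.1] : 0 ≤ ρ₂) (by linarith [hβ₂.1] : 0 ≤ β₂) hθt (by linarith [min_le_right γ₂ ρ₂] : β₂ + min γ₂ ρ₂ ≤ ρ₂ + β₂))
  have hBsn : (0:ℝ) ≤ (b-a)^(ρ₁ + min β₁ γ₁) := Real.rpow_nonneg (by linarith) _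
  have hBtn : (0:ℝ) ≤ (d-c)^(β₂ + min γ₂ ρ₂) := Real.rpow_nonneg (by linarith) _
  have hXn : (0:ℝ) ≤ C^3 * (b-a)^(ρ₁ + min β₁ γ₁) * (d-c)^(β₂ + min γ₂ ρ₂) := mul_nonneg (mul_nonneg (pow_nonneg hC 3) hBsn) hBtn
  have h4 : (4*C^3) * (b-a)^(ρ₁ + min β₁ γ₁) * (d-c)^(β₂ + min γ₂ ρ₂) = 4*(C^3 * (b-a)^(ρ₁ + min β₁ γ₁) * (d-c)^(β₂ + min γ₂ ρ₂)) := by ring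
  rw [h4]
  calc |(-(d2 y a c q)) * (d1 x a p q) * (dd z p b q d) + (-(y a c)) * (dd x a p c q) * (dd z p b q d) + (dd y a p c q) * (d1 x p b q) * (d2 z b q d) + (d1 y a p c) * (dd x p b c q) * (d2 z b q d)|
      ≤ |(-(d2 y a c q)) * (d1 x a p q) * (dd z p b q d)| + |(-(y a c)) * (dd x a p c q) * (dd z p b q d)| + |(dd y a p c q) * (d1 x p b q) * (d2 z b q d)| + |(d1 y a p c) * (dd x p b c q) * (d2 z b q d)| := abs_add4 _ _ _ _
    _ ≤ 4*(C^3 * (b-a)^(ρ₁ + min β₁ γ₁) * (d-c)^(β₂ + min γ₂ ρ₂)) := by linarith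

lemma germB_HA (hC : 0 ≤ C)
    (hγ₁ : γ₁ ∈ Set.Ioc (0:ℝ) 1) (hγ₂ : γ₂ ∈ Set.Ioc (0:ℝ) 1)
    (hρ₁ : ρ₁ ∈ Set.Ioc (0:ℝ) 1) (hρ₂ : ρ₂ ∈ Set.Ioc (0:ℝ) 1)
    (hβ₁ : β₁ ∈ Set.Ioc (0:ℝ) 1) (hβ₂ : β₂ ∈ Set.Ioc (0:ℝ) 1)
    (hy : Hold γ₁ γ₂ C y) (hx : Hold ρ₁ ρ₂ C x) (hz : Hold β₁ β₂ C z) :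
    ∀ a p b c d : ℝ, 0 ≤ a → a ≤ p → p ≤ b → b ≤ 1 → 0 ≤ c → c ≤ d → d ≤ 1 →
    |(y a c * d1 x a b c * d2 z a c d) - (y a c * d1 x a p c * d2 z a c d) - (y p c * d1 x p b c * d2 z p c d)|
      ≤ (4*C^3) * (b-a)^(ρ₁ + min β₁ γ₁) * (d-c)^β₂ := by
  intro a p b c d ha hap hpb hb hc hcd hd
  have hma : a ∈ Set.Icc (0:ℝ) 1 := ⟨ha, by linarith⟩
  have hmp : p ∈ Set.Icc (0:ℝ) 1 := ⟨by linarith, by linarith⟩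
  have hmb : b ∈ Set.Icc (0:ℝ) 1 := ⟨by linarith, by linarith⟩
  have hmc : c ∈ Set.Icc (0:ℝ) 1 := ⟨hc, by linarith⟩
  have hmd : d ∈ Set.Icc (0:ℝ) 1 := ⟨by linarith, by linarith⟩
  have hθs : 0 < ρ₁ + min β₁ γ₁ := by
    have := lt_min hβ₁.1 hγ₁.1; linarith [hρ₁.1]
  have hθt : 0 < β₂ + min γ₂ ρ₂ := by
    have := lt_min hγ₂.1 hρ₂.1; linarith [hβ₂.1]
  have hid : (y a c * d1 x a b c * d2 z a c d) - (y a c * d1 x a p c * d2 z a c d) - (y p c * d1 x p b c * d2 z p c d)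
      = (-(d1 y a p c)) * (d1 x p b c) * (d2 z a c d) + (-(y p c)) * (d1 x p b c) * (dd z a p c d) := by
    simp only [d1, d2, dd]; ring
  rw [hid]
  have hT0 : |(-(d1 y a p c)) * (d1 x p b c) * (d2 z a c d)| ≤ C^3 * ((b-a)^(ρ₁ + min β₁ γ₁)) * ((d-c)^β₂) := by
    apply term_bound (abs_mul3_le (by rw [abs_neg]; exact hy.2.1 a p c hma hmp hmc) (hx.2.1 p b c hmp hmb hmc) (hz.2.2.1 a c d hma hmc hmd))
      (show (C * |p - a| ^ γ₁) * (C * |b - p| ^ ρ₁) * (C * |d - c| ^ β₂) = C^3 * ((|p - a| ^ γ₁ * |b - p| ^ ρ₁) * (|d - c| ^ β₂)) by ring)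
      (pow_nonneg hC 3) (by positivity) (by positivity)
      (incr_prod_le hap hpb ha hb (by linarith [hγ₁.1] : 0 ≤ γ₁) (by linarith [hρ₁.1] : 0 ≤ ρ₁) hθs (by linarith [min_le_right β₁ γ₁] : ρ₁ + min β₁ γ₁ ≤ γ₁ + ρ₁)) (incr_le hcd hc hd hβ₂.1 le_rfl)
  have hT1 : |(-(y p c)) * (d1 x p b c) * (dd z a p c d)| ≤ C^3 * ((b-a)^(ρ₁ + min β₁ γ₁)) * ((d-c)^β₂) := by
    apply term_bound (abs_mul3_le (by rw [abs_neg]; exact hy.2.2.2 p c hmp hmc) (hx.2.1 p b c hmp hmb hmc) (hz.1 a p c d hma hmp hmc hmd))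
      (show (C) * (C * |b - p| ^ ρ₁) * (C * |p - a| ^ β₁ * |d - c| ^ β₂) = C^3 * ((|p - a| ^ β₁ * |b - p| ^ ρ₁) * (|d - c| ^ β₂)) by ring)
      (pow_nonneg hC 3) (by positivity) (by positivity)
      (incr_prod_le hap hpb ha hb (by linarith [hβ₁.1] : 0 ≤ β₁) (by linarith [hρ₁.1] : 0 ≤ ρ₁) hθs (by linarith [min_le_left β₁ γ₁] : ρ₁ + min β₁ γ₁ ≤ β₁ + ρ₁)) (incr_le hcd hc hd hβ₂.1 le_rfl)
  have hBsn : (0:ℝ) ≤ (b-a)^(ρ₁ + min β₁ γ₁) := Real.rpow_nonneg (by linarith) _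
  have hBtn : (0:ℝ) ≤ (d-c)^β₂ := Real.rpow_nonneg (by linarith) _
  have hXn : (0:ℝ) ≤ C^3 * (b-a)^(ρ₁ + min β₁ γ₁) * (d-c)^β₂ := mul_nonneg (mul_nonneg (pow_nonneg hC 3) hBsn) hBtn
  have h4 : (4*C^3) * (b-a)^(ρ₁ + min β₁ γ₁) * (d-c)^β₂ = 4*(C^3 * (b-a)^(ρ₁ + min β₁ γ₁) * (d-c)^β₂) := by ring
  rw [h4]
  calc |(-(d1 y a p c)) * (d1 x p b c) * (d2 z a c d) + (-(y p c)) * (d1 x p b c) * (dd z a p c d)| ≤ |(-(d1 y a p c)) * (d1 x p b c) * (d2 z a c d)| + |(-(y p c)) * (d1 x p b c) * (dd z a p c d)| := abs_add_le _ _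
    _ ≤ 4*(C^3 * (b-a)^(ρ₁ + min β₁ γ₁) * (d-c)^β₂) := by linarith

lemma germB_HB (hC : 0 ≤ C)
    (hγ₁ : γ₁ ∈ Set.Ioc (0:ℝ) 1) (hγ₂ : γ₂ ∈ Set.Ioc (0:ℝ) 1)
    (hρ₁ : ρ₁ ∈ Set.Ioc (0:ℝ) 1) (hρ₂ : ρ₂ ∈ Set.Ioc (0:ℝ) 1)
    (hβ₁ : β₁ ∈ Set.Ioc (0:ℝ) 1) (hβ₂ : β₂ ∈ Set.Ioc (0:ℝ) 1)
    (hy : Hold γ₁ γ₂ C y) (hx : Hold ρ₁ ρ₂ C x) (hz : Hold β₁ β₂ C z) :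
    ∀ a b c q d : ℝ, 0 ≤ a → a ≤ b → b ≤ 1 → 0 ≤ c → c ≤ q → q ≤ d → d ≤ 1 →
    |(y a c * d1 x a b c * d2 z a c d) - (y a c * d1 x a b c * d2 z a c q) - (y a q * d1 x a b q * d2 z a q d)|
      ≤ (4*C^3) * (b-a)^ρ₁ * (d-c)^(β₂ + min γ₂ ρ₂) := by
  intro a b c q d ha hab hb hc hcq hqd hd
  have hma : a ∈ Set.Icc (0:ℝ) 1 := ⟨ha, by linarith⟩
  have hmb : b ∈ Set.Icc (0:ℝ) 1 := ⟨by linarith, by linarith⟩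
  have hmc : c ∈ Set.Icc (0:ℝ) 1 := ⟨hc, by linarith⟩
  have hmq : q ∈ Set.Icc (0:ℝ) 1 := ⟨by linarith, by linarith⟩
  have hmd : d ∈ Set.Icc (0:ℝ) 1 := ⟨by linarith, by linarith⟩
  have hθs : 0 < ρ₁ + min β₁ γ₁ := by
    have := lt_min hβ₁.1 hγ₁.1; linarith [hρ₁.1]
  have hθt : 0 < β₂ + min γ₂ ρ₂ := by
    have := lt_min hγ₂.1 hρ₂.1; linarith [hβ₂.1]
  have hid : (y a c * d1 x a b c * d2 z a c d) - (y a c * d1 x a b c * d2 z a c q) - (y a q * d1 x a b q * d2 z a q d)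
      = (-(d2 y a c q)) * (d1 x a b q) * (d2 z a q d) + (-(y a c)) * (dd x a b c q) * (d2 z a q d) := by
    simp only [d1, d2, dd]; ring
  rw [hid]
  have hT0 : |(-(d2 y a c q)) * (d1 x a b q) * (d2 z a q d)| ≤ C^3 * ((b-a)^ρ₁) * ((d-c)^(β₂ + min γ₂ ρ₂)) := by
    apply term_bound (abs_mul3_le (by rw [abs_neg]; exact hy.2.2.1 a c q hma hmc hmq) (hx.2.1 a b q hma hmb hmq) (hz.2.2.1 a q d hma hmq hmd))
      (show (C * |q - c| ^ γ₂) * (C * |b - a| ^ ρ₁) * (C * |d - q| ^ β₂) = C^3 * ((|b - a| ^ ρ₁) * (|q - c| ^ γ₂ * |d - q| ^ β₂)) by ring)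
      (pow_nonneg hC 3) (by positivity) (by positivity)
      (incr_le hab ha hb hρ₁.1 le_rfl) (incr_prod_le hcq hqd hc hd (by linarith [hγ₂.1] : 0 ≤ γ₂) (by linarith [hβ₂.1] : 0 ≤ β₂) hθt (by linarith [min_le_left γ₂ ρ₂] : β₂ + min γ₂ ρ₂ ≤ γ₂ + β₂))
  have hT1 : |(-(y a c)) * (dd x a b c q) * (d2 z a q d)| ≤ C^3 * ((b-a)^ρ₁) * ((d-c)^(β₂ + min γ₂ ρ₂)) := by
    apply term_bound (abs_mul3_le (by rw [abs_neg]; exact hy.2.2.2 a c hma hmc) (hx.1 a b c q hma hmb hmc hmq) (hz.2.2.1 a q d hma hmq hmd))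
      (show (C) * (C * |b - a| ^ ρ₁ * |q - c| ^ ρ₂) * (C * |d - q| ^ β₂) = C^3 * ((|b - a| ^ ρ₁) * (|q - c| ^ ρ₂ * |d - q| ^ β₂)) by ring)
      (pow_nonneg hC 3) (by positivity) (by positivity)
      (incr_le hab ha hb hρ₁.1 le_rfl) (incr_prod_le hcq hqd hc hd (by linarith [hρ₂.1] : 0 ≤ ρ₂) (by linarith [hβ₂.1] : 0 ≤ β₂) hθt (by linarith [min_le_right γ₂ ρ₂] : β₂ + min γ₂ ρ₂ ≤ ρ₂ + β₂))
  have hBsn : (0:ℝ) ≤ (b-a)^ρ₁ := Real.rpow_nonneg (by linarith) _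
  have hBtn : (0:ℝ) ≤ (d-c)^(β₂ + min γ₂ ρ₂) := Real.rpow_nonneg (by linarith) _
  have hXn : (0:ℝ) ≤ C^3 * (b-a)^ρ₁ * (d-c)^(β₂ + min γ₂ ρ₂) := mul_nonneg (mul_nonneg (pow_nonneg hC 3) hBsn) hBtn
  have h4 : (4*C^3) * (b-a)^ρ₁ * (d-c)^(β₂ + min γ₂ ρ₂) = 4*(C^3 * (b-a)^ρ₁ * (d-c)^(β₂ + min γ₂ ρ₂)) := by ring
  rw [h4]
  calc |(-(d2 y a c q)) * (d1 x a b q) * (d2 z a q d) + (-(y a c)) * (dd x a b c q) * (d2 z a q d)| ≤ |(-(d2 y a c q)) * (d1 x a b q) * (d2 z a q d)| + |(-(y a c)) * (dd x a b c q) * (d2 z a q d)| := abs_add_le _ _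
    _ ≤ 4*(C^3 * (b-a)^ρ₁ * (d-c)^(β₂ + min γ₂ ρ₂)) := by linarith

lemma germB_HC (hC : 0 ≤ C)
    (hγ₁ : γ₁ ∈ Set.Ioc (0:ℝ) 1) (hγ₂ : γ₂ ∈ Set.Ioc (0:ℝ) 1)
    (hρ₁ : ρ₁ ∈ Set.Ioc (0:ℝ) 1) (hρ₂ : ρ₂ ∈ Set.Ioc (0:ℝ) 1)
    (hβ₁ : β₁ ∈ Set.Ioc (0:ℝ) 1) (hβ₂ : β₂ ∈ Set.Ioc (0:ℝ) 1)
    (hy : Hold γ₁ γ₂ C y) (hx : Hold ρ₁ ρ₂ C x) (hz : Hold β₁ β₂ C z) :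
    ∀ a p b c q d : ℝ, 0 ≤ a → a ≤ p → p ≤ b → b ≤ 1 → 0 ≤ c → c ≤ q → q ≤ d → d ≤ 1 →
    |((y a c * d1 x a b c * d2 z a c d) - (y a c * d1 x a b c * d2 z a c q) - (y a q * d1 x a b q * d2 z a q d)) - ((y a c * d1 x a p c * d2 z a c d) - (y a c * d1 x a p c * d2 z a c q) - (y a q * d1 x a p q * d2 z a q d)) - ((y p c * d1 x p b c * d2 z p c d) - (y p c * d1 x p b c * d2 z p c q) - (y p q * d1 x p b q * d2 z p q d))|
      ≤ (4*C^3) * (b-a)^(ρ₁ + min β₁ γ₁) * (d-c)^(β₂ + min γ₂ ρ₂) := by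
  intro a p b c q d ha hap hpb hb hc hcq hqd hd
  have hma : a ∈ Set.Icc (0:ℝ) 1 := ⟨ha, by linarith⟩
  have hmp : p ∈ Set.Icc (0:ℝ) 1 := ⟨by linarith, by linarith⟩
  have hmb : b ∈ Set.Icc (0:ℝ) 1 := ⟨by linarith, by linarith⟩
  have hmc : c ∈ Set.Icc (0:ℝ) 1 := ⟨hc, by linarith⟩
  have hmq : q ∈ Set.Icc (0:ℝ) 1 := ⟨by linarith, by linarith⟩
  have hmd : d ∈ Set.Icc (0:ℝ) 1 := ⟨by linarith, by linarith⟩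
  have hθs : 0 < ρ₁ + min β₁ γ₁ := by
    have := lt_min hβ₁.1 hγ₁.1; linarith [hρ₁.1]
  have hθt : 0 < β₂ + min γ₂ ρ₂ := by
    have := lt_min hγ₂.1 hρ₂.1; linarith [hβ₂.1]
  have hid : ((y a c * d1 x a b c * d2 z a c d) - (y a c * d1 x a b c * d2 z a c q) - (y a q * d1 x a b q * d2 z a q d)) - ((y a c * d1 x a p c * d2 z a c d) - (y a c * d1 x a p c * d2 z a c q) - (y a q * d1 x a p q * d2 z a q d)) - ((y p c * d1 x p b c * d2 z p c d) - (y p c * d1 x p b c * d2 z p c q) - (y p q * d1 x p b q * d2 z p q d))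
      = (dd y a p c q) * (d1 x p b q) * (d2 z a q d) + (d1 y a p c) * (dd x p b c q) * (d2 z a q d) + (d2 y p c q) * (d1 x p b q) * (dd z a p q d) + (y p c) * (dd x p b c q) * (dd z a p q d) := by
    simp only [d1, d2, dd]; ring
  rw [hid]
  have hT0 : |(dd y a p c q) * (d1 x p b q) * (d2 z a q d)| ≤ C^3 * ((b-a)^(ρ₁ + min β₁ γ₁)) * ((d-c)^(β₂ + min γ₂ ρ₂)) := by
    apply term_bound (abs_mul3_le (hy.1 a p c q hma hmp hmc hmq) (hx.2.1 p b q hmp hmb hmq) (hz.2.2.1 a q d hma hmq hmd))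
      (show (C * |p - a| ^ γ₁ * |q - c| ^ γ₂) * (C * |b - p| ^ ρ₁) * (C * |d - q| ^ β₂) = C^3 * ((|p - a| ^ γ₁ * |b - p| ^ ρ₁) * (|q - c| ^ γ₂ * |d - q| ^ β₂)) by ring)
      (pow_nonneg hC 3) (by positivity) (by positivity)
      (incr_prod_le hap hpb ha hb (by linarith [hγ₁.1] : 0 ≤ γ₁) (by linarith [hρ₁.1] : 0 ≤ ρ₁) hθs (by linarith [min_le_right β₁ γ₁] : ρ₁ + min β₁ γ₁ ≤ γ₁ + ρ₁)) (incr_prod_le hcq hqd hc hd (by linarith [hγ₂.1] : 0 ≤ γ₂) (by linarith [hβ₂.1] : 0 ≤ β₂) hθt (by linarith [min_le_left γ₂ ρ₂] : β₂ + min γ₂ ρ₂ ≤ γ₂ + β₂))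
  have hT1 : |(d1 y a p c) * (dd x p b c q) * (d2 z a q d)| ≤ C^3 * ((b-a)^(ρ₁ + min β₁ γ₁)) * ((d-c)^(β₂ + min γ₂ ρ₂)) := by
    apply term_bound (abs_mul3_le (hy.2.1 a p c hma hmp hmc) (hx.1 p b c q hmp hmb hmc hmq) (hz.2.2.1 a q d hma hmq hmd))
      (show (C * |p - a| ^ γ₁) * (C * |b - p| ^ ρ₁ * |q - c| ^ ρ₂) * (C * |d - q| ^ β₂) = C^3 * ((|p - a| ^ γ₁ * |b - p| ^ ρ₁) * (|q - c| ^ ρ₂ * |d - q| ^ β₂)) by ring)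
      (pow_nonneg hC 3) (by positivity) (by positivity)
      (incr_prod_le hap hpb ha hb (by linarith [hγ₁.1] : 0 ≤ γ₁) (by linarith [hρ₁.1] : 0 ≤ ρ₁) hθs (by linarith [min_le_right β₁ γ₁] : ρ₁ + min β₁ γ₁ ≤ γ₁ + ρ₁)) (incr_prod_le hcq hqd hc hd (by linarith [hρ₂.1] : 0 ≤ ρ₂) (by linarith [hβ₂.1] : 0 ≤ β₂) hθt (by linarith [min_le_right γ₂ ρ₂] : β₂ + min γ₂ ρ₂ ≤ ρ₂ + β₂))
  have hT2 : |(d2 y p c q) * (d1 x p b q) * (dd z a p q d)| ≤ C^3 * ((b-a)^(ρ₁ + min β₁ γ₁)) * ((d-c)^(β₂ + min γ₂ ρ₂)) := by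
    apply term_bound (abs_mul3_le (hy.2.2.1 p c q hmp hmc hmq) (hx.2.1 p b q hmp hmb hmq) (hz.1 a p q d hma hmp hmq hmd))
      (show (C * |q - c| ^ γ₂) * (C * |b - p| ^ ρ₁) * (C * |p - a| ^ β₁ * |d - q| ^ β₂) = C^3 * ((|p - a| ^ β₁ * |b - p| ^ ρ₁) * (|q - c| ^ γ₂ * |d - q| ^ β₂)) by ring)
      (pow_nonneg hC 3) (by positivity) (by positivity)
      (incr_prod_le hap hpb ha hb (by linarith [hβ₁.1] : 0 ≤ β₁) (by linarith [hρ₁.1] : 0 ≤ ρ₁) hθs (by linarith [min_le_left β₁ γ₁] : ρ₁ + min β₁ γ₁ ≤ β₁ + ρ₁)) (incr_prod_le hcq hqd hc hd (by linarith [hγ₂.1] : 0 ≤ γ₂) (by linarith [hβ₂.1] : 0 ≤ β₂) hθt (by linarith [min_le_left γ₂ ρ₂] : β₂ + min γ₂ ρ₂ ≤ γ₂ + β₂))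
  have hT3 : |(y p c) * (dd x p b c q) * (dd z a p q d)| ≤ C^3 * ((b-a)^(ρ₁ + min β₁ γ₁)) * ((d-c)^(β₂ + min γ₂ ρ₂)) := by
    apply term_bound (abs_mul3_le (hy.2.2.2 p c hmp hmc) (hx.1 p b c q hmp hmb hmc hmq) (hz.1 a p q d hma hmp hmq hmd))
      (show (C) * (C * |b - p| ^ ρ₁ * |q - c| ^ ρ₂) * (C * |p - a| ^ β₁ * |d - q| ^ β₂) = C^3 * ((|p - a| ^ β₁ * |b - p| ^ ρ₁) * (|q - c| ^ ρ₂ * |d - q| ^ β₂)) by ring)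
      (pow_nonneg hC 3) (by positivity) (by positivity)
      (incr_prod_le hap hpb ha hb (by linarith [hβ₁.1] : 0 ≤ β₁) (by linarith [hρ₁.1] : 0 ≤ ρ₁) hθs (by linarith [min_le_left β₁ γ₁] : ρ₁ + min β₁ γ₁ ≤ β₁ + ρ₁)) (incr_prod_le hcq hqd hc hd (by linarith [hρ₂.1] : 0 ≤ ρ₂) (by linarith [hβ₂.1] : 0 ≤ β₂) hθt (by linarith [min_le_right γ₂ ρ₂] : β₂ + min γ₂ ρ₂ ≤ ρ₂ + β₂))
  have hBsn : (0:ℝ) ≤ (b-a)^(ρ₁ + min β₁ γ₁) := Real.rpow_nonneg (by linarith) _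
  have hBtn : (0:ℝ) ≤ (d-c)^(β₂ + min γ₂ ρ₂) := Real.rpow_nonneg (by linarith) _
  have hXn : (0:ℝ) ≤ C^3 * (b-a)^(ρ₁ + min β₁ γ₁) * (d-c)^(β₂ + min γ₂ ρ₂) := mul_nonneg (mul_nonneg (pow_nonneg hC 3) hBsn) hBtn
  have h4 : (4*C^3) * (b-a)^(ρ₁ + min β₁ γ₁) * (d-c)^(β₂ + min γ₂ ρ₂) = 4*(C^3 * (b-a)^(ρ₁ + min β₁ γ₁) * (d-c)^(β₂ + min γ₂ ρ₂)) := by ring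
  rw [h4]
  calc |(dd y a p c q) * (d1 x p b q) * (d2 z a q d) + (d1 y a p c) * (dd x p b c q) * (d2 z a q d) + (d2 y p c q) * (d1 x p b q) * (dd z a p q d) + (y p c) * (dd x p b c q) * (dd z a p q d)|
      ≤ |(dd y a p c q) * (d1 x p b q) * (d2 z a q d)| + |(d1 y a p c) * (dd x p b c q) * (d2 z a q d)| + |(d2 y p c q) * (d1 x p b q) * (dd z a p q d)| + |(y p c) * (dd x p b c q) * (dd z a p q d)| := abs_add4 _ _ _ _
    _ ≤ 4*(C^3 * (b-a)^(ρ₁ + min β₁ γ₁) * (d-c)^(β₂ + min γ₂ ρ₂)) := by linarith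

lemma germC_HA (hC : 0 ≤ C)
    (hγ₁ : γ₁ ∈ Set.Ioc (0:ℝ) 1) (hγ₂ : γ₂ ∈ Set.Ioc (0:ℝ) 1)
    (hρ₁ : ρ₁ ∈ Set.Ioc (0:ℝ) 1) (hρ₂ : ρ₂ ∈ Set.Ioc (0:ℝ) 1)
    (hβ₁ : β₁ ∈ Set.Ioc (0:ℝ) 1) (hβ₂ : β₂ ∈ Set.Ioc (0:ℝ) 1)
    (hy : Hold γ₁ γ₂ C y) (hx : Hold ρ₁ ρ₂ C x) (hz : Hold β₁ β₂ C z) :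
    ∀ a p b c d : ℝ, 0 ≤ a → a ≤ p → p ≤ b → b ≤ 1 → 0 ≤ c → c ≤ d → d ≤ 1 →
    |(y a c * d2 z a c d * d1 x a b d) - (y a c * d2 z a c d * d1 x a p d) - (y p c * d2 z p c d * d1 x p b d)|
      ≤ (4*C^3) * (b-a)^(ρ₁ + min β₁ γ₁) * (d-c)^β₂ := by
  intro a p b c d ha hap hpb hb hc hcd hd
  have hma : a ∈ Set.Icc (0:ℝ) 1 := ⟨ha, by linarith⟩
  have hmp : p ∈ Set.Icc (0:ℝ) 1 := ⟨by linarith, by linarith⟩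
  have hmb : b ∈ Set.Icc (0:ℝ) 1 := ⟨by linarith, by linarith⟩
  have hmc : c ∈ Set.Icc (0:ℝ) 1 := ⟨hc, by linarith⟩
  have hmd : d ∈ Set.Icc (0:ℝ) 1 := ⟨by linarith, by linarith⟩
  have hθs : 0 < ρ₁ + min β₁ γ₁ := by
    have := lt_min hβ₁.1 hγ₁.1; linarith [hρ₁.1]
  have hθt : 0 < β₂ + min γ₂ ρ₂ := by
    have := lt_min hγ₂.1 hρ₂.1; linarith [hβ₂.1]
  have hid : (y a c * d2 z a c d * d1 x a b d) - (y a c * d2 z a c d * d1 x a p d) - (y p c * d2 z p c d * d1 x p b d)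
      = (-(d1 y a p c)) * (d2 z p c d) * (d1 x p b d) + (-(y a c)) * (dd z a p c d) * (d1 x p b d) := by
    simp only [d1, d2, dd]; ring
  rw [hid]
  have hT0 : |(-(d1 y a p c)) * (d2 z p c d) * (d1 x p b d)| ≤ C^3 * ((b-a)^(ρ₁ + min β₁ γ₁)) * ((d-c)^β₂) := by
    apply term_bound (abs_mul3_le (by rw [abs_neg]; exact hy.2.1 a p c hma hmp hmc) (hz.2.2.1 p c d hmp hmc hmd) (hx.2.1 p b d hmp hmb hmd))
      (show (C * |p - a| ^ γ₁) * (C * |d - c| ^ β₂) * (C * |b - p| ^ ρ₁) = C^3 * ((|p - a| ^ γ₁ * |b - p| ^ ρ₁) * (|d - c| ^ β₂)) by ring)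
      (pow_nonneg hC 3) (by positivity) (by positivity)
      (incr_prod_le hap hpb ha hb (by linarith [hγ₁.1] : 0 ≤ γ₁) (by linarith [hρ₁.1] : 0 ≤ ρ₁) hθs (by linarith [min_le_right β₁ γ₁] : ρ₁ + min β₁ γ₁ ≤ γ₁ + ρ₁)) (incr_le hcd hc hd hβ₂.1 le_rfl)
  have hT1 : |(-(y a c)) * (dd z a p c d) * (d1 x p b d)| ≤ C^3 * ((b-a)^(ρ₁ + min β₁ γ₁)) * ((d-c)^β₂) := by
    apply term_bound (abs_mul3_le (by rw [abs_neg]; exact hy.2.2.2 a c hma hmc) (hz.1 a p c d hma hmp hmc hmd) (hx.2.1 p b d hmp hmb hmd))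
      (show (C) * (C * |p - a| ^ β₁ * |d - c| ^ β₂) * (C * |b - p| ^ ρ₁) = C^3 * ((|p - a| ^ β₁ * |b - p| ^ ρ₁) * (|d - c| ^ β₂)) by ring)
      (pow_nonneg hC 3) (by positivity) (by positivity)
      (incr_prod_le hap hpb ha hb (by linarith [hβ₁.1] : 0 ≤ β₁) (by linarith [hρ₁.1] : 0 ≤ ρ₁) hθs (by linarith [min_le_left β₁ γ₁] : ρ₁ + min β₁ γ₁ ≤ β₁ + ρ₁)) (incr_le hcd hc hd hβ₂.1 le_rfl)
  have hBsn : (0:ℝ) ≤ (b-a)^(ρ₁ + min β₁ γ₁) := Real.rpow_nonneg (by linarith) _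
  have hBtn : (0:ℝ) ≤ (d-c)^β₂ := Real.rpow_nonneg (by linarith) _
  have hXn : (0:ℝ) ≤ C^3 * (b-a)^(ρ₁ + min β₁ γ₁) * (d-c)^β₂ := mul_nonneg (mul_nonneg (pow_nonneg hC 3) hBsn) hBtn
  have h4 : (4*C^3) * (b-a)^(ρ₁ + min β₁ γ₁) * (d-c)^β₂ = 4*(C^3 * (b-a)^(ρ₁ + min β₁ γ₁) * (d-c)^β₂) := by ring
  rw [h4]
  calc |(-(d1 y a p c)) * (d2 z p c d) * (d1 x p b d) + (-(y a c)) * (dd z a p c d) * (d1 x p b d)| ≤ |(-(d1 y a p c)) * (d2 z p c d) * (d1 x p b d)| + |(-(y a c)) * (dd z a p c d) * (d1 x p b d)| := abs_add_le _ _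
    _ ≤ 4*(C^3 * (b-a)^(ρ₁ + min β₁ γ₁) * (d-c)^β₂) := by linarith

lemma germC_HB (hC : 0 ≤ C)
    (hγ₁ : γ₁ ∈ Set.Ioc (0:ℝ) 1) (hγ₂ : γ₂ ∈ Set.Ioc (0:ℝ) 1)
    (hρ₁ : ρ₁ ∈ Set.Ioc (0:ℝ) 1) (hρ₂ : ρ₂ ∈ Set.Ioc (0:ℝ) 1)
    (hβ₁ : β₁ ∈ Set.Ioc (0:ℝ) 1) (hβ₂ : β₂ ∈ Set.Ioc (0:ℝ) 1)
    (hy : Hold γ₁ γ₂ C y) (hx : Hold ρ₁ ρ₂ C x) (hz : Hold β₁ β₂ C z) :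
    ∀ a b c q d : ℝ, 0 ≤ a → a ≤ b → b ≤ 1 → 0 ≤ c → c ≤ q → q ≤ d → d ≤ 1 →
    |(y a c * d2 z a c d * d1 x a b d) - (y a c * d2 z a c q * d1 x a b q) - (y a q * d2 z a q d * d1 x a b d)|
      ≤ (4*C^3) * (b-a)^ρ₁ * (d-c)^(β₂ + min γ₂ ρ₂) := by
  intro a b c q d ha hab hb hc hcq hqd hd
  have hma : a ∈ Set.Icc (0:ℝ) 1 := ⟨ha, by linarith⟩
  have hmb : b ∈ Set.Icc (0:ℝ) 1 := ⟨by linarith, by linarith⟩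
  have hmc : c ∈ Set.Icc (0:ℝ) 1 := ⟨hc, by linarith⟩
  have hmq : q ∈ Set.Icc (0:ℝ) 1 := ⟨by linarith, by linarith⟩
  have hmd : d ∈ Set.Icc (0:ℝ) 1 := ⟨by linarith, by linarith⟩
  have hθs : 0 < ρ₁ + min β₁ γ₁ := by
    have := lt_min hβ₁.1 hγ₁.1; linarith [hρ₁.1]
  have hθt : 0 < β₂ + min γ₂ ρ₂ := by
    have := lt_min hγ₂.1 hρ₂.1; linarith [hβ₂.1]
  have hid : (y a c * d2 z a c d * d1 x a b d) - (y a c * d2 z a c q * d1 x a b q) - (y a q * d2 z a q d * d1 x a b d)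
      = (-(d2 y a c q)) * (d2 z a q d) * (d1 x a b d) + (y a c) * (d2 z a c q) * (dd x a b q d) := by
    simp only [d1, d2, dd]; ring
  rw [hid]
  have hT0 : |(-(d2 y a c q)) * (d2 z a q d) * (d1 x a b d)| ≤ C^3 * ((b-a)^ρ₁) * ((d-c)^(β₂ + min γ₂ ρ₂)) := by
    apply term_bound (abs_mul3_le (by rw [abs_neg]; exact hy.2.2.1 a c q hma hmc hmq) (hz.2.2.1 a q d hma hmq hmd) (hx.2.1 a b d hma hmb hmd))
      (show (C * |q - c| ^ γ₂) * (C * |d - q| ^ β₂) * (C * |b - a| ^ ρ₁) = C^3 * ((|b - a| ^ ρ₁) * (|q - c| ^ γ₂ * |d - q| ^ β₂)) by ring)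
      (pow_nonneg hC 3) (by positivity) (by positivity)
      (incr_le hab ha hb hρ₁.1 le_rfl) (incr_prod_le hcq hqd hc hd (by linarith [hγ₂.1] : 0 ≤ γ₂) (by linarith [hβ₂.1] : 0 ≤ β₂) hθt (by linarith [min_le_left γ₂ ρ₂] : β₂ + min γ₂ ρ₂ ≤ γ₂ + β₂))
  have hT1 : |(y a c) * (d2 z a c q) * (dd x a b q d)| ≤ C^3 * ((b-a)^ρ₁) * ((d-c)^(β₂ + min γ₂ ρ₂)) := by
    apply term_bound (abs_mul3_le (hy.2.2.2 a c hma hmc) (hz.2.2.1 a c q hma hmc hmq) (hx.1 a b q d hma hmb hmq hmd))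
      (show (C) * (C * |q - c| ^ β₂) * (C * |b - a| ^ ρ₁ * |d - q| ^ ρ₂) = C^3 * ((|b - a| ^ ρ₁) * (|q - c| ^ β₂ * |d - q| ^ ρ₂)) by ring)
      (pow_nonneg hC 3) (by positivity) (by positivity)
      (incr_le hab ha hb hρ₁.1 le_rfl) (incr_prod_le hcq hqd hc hd (by linarith [hβ₂.1] : 0 ≤ β₂) (by linarith [hρ₂.1] : 0 ≤ ρ₂) hθt (by linarith [min_le_right γ₂ ρ₂] : β₂ + min γ₂ ρ₂ ≤ β₂ + ρ₂))
  have hBsn : (0:ℝ) ≤ (b-a)^ρ₁ := Real.rpow_nonneg (by linarith) _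
  have hBtn : (0:ℝ) ≤ (d-c)^(β₂ + min γ₂ ρ₂) := Real.rpow_nonneg (by linarith) _
  have hXn : (0:ℝ) ≤ C^3 * (b-a)^ρ₁ * (d-c)^(β₂ + min γ₂ ρ₂) := mul_nonneg (mul_nonneg (pow_nonneg hC 3) hBsn) hBtn
  have h4 : (4*C^3) * (b-a)^ρ₁ * (d-c)^(β₂ + min γ₂ ρ₂) = 4*(C^3 * (b-a)^ρ₁ * (d-c)^(β₂ + min γ₂ ρ₂)) := by ring
  rw [h4]
  calc |(-(d2 y a c q)) * (d2 z a q d) * (d1 x a b d) + (y a c) * (d2 z a c q) * (dd x a b q d)| ≤ |(-(d2 y a c q)) * (d2 z a q d) * (d1 x a b d)| + |(y a c) * (d2 z a c q) * (dd x a b q d)| := abs_add_le _ _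
    _ ≤ 4*(C^3 * (b-a)^ρ₁ * (d-c)^(β₂ + min γ₂ ρ₂)) := by linarith

lemma germC_HC (hC : 0 ≤ C)
    (hγ₁ : γ₁ ∈ Set.Ioc (0:ℝ) 1) (hγ₂ : γ₂ ∈ Set.Ioc (0:ℝ) 1)
    (hρ₁ : ρ₁ ∈ Set.Ioc (0:ℝ) 1) (hρ₂ : ρ₂ ∈ Set.Ioc (0:ℝ) 1)
    (hβ₁ : β₁ ∈ Set.Ioc (0:ℝ) 1) (hβ₂ : β₂ ∈ Set.Ioc (0:ℝ) 1)
    (hy : Hold γ₁ γ₂ C y) (hx : Hold ρ₁ ρ₂ C x) (hz : Hold β₁ β₂ C z) :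
    ∀ a p b c q d : ℝ, 0 ≤ a → a ≤ p → p ≤ b → b ≤ 1 → 0 ≤ c → c ≤ q → q ≤ d → d ≤ 1 →
    |((y a c * d2 z a c d * d1 x a b d) - (y a c * d2 z a c q * d1 x a b q) - (y a q * d2 z a q d * d1 x a b d)) - ((y a c * d2 z a c d * d1 x a p d) - (y a c * d2 z a c q * d1 x a p q) - (y a q * d2 z a q d * d1 x a p d)) - ((y p c * d2 z p c d * d1 x p b d) - (y p c * d2 z p c q * d1 x p b q) - (y p q * d2 z p q d * d1 x p b d))|
      ≤ (4*C^3) * (b-a)^(ρ₁ + min β₁ γ₁) * (d-c)^(β₂ + min γ₂ ρ₂) := by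
  intro a p b c q d ha hap hpb hb hc hcq hqd hd
  have hma : a ∈ Set.Icc (0:ℝ) 1 := ⟨ha, by linarith⟩
  have hmp : p ∈ Set.Icc (0:ℝ) 1 := ⟨by linarith, by linarith⟩
  have hmb : b ∈ Set.Icc (0:ℝ) 1 := ⟨by linarith, by linarith⟩
  have hmc : c ∈ Set.Icc (0:ℝ) 1 := ⟨hc, by linarith⟩
  have hmq : q ∈ Set.Icc (0:ℝ) 1 := ⟨by linarith, by linarith⟩
  have hmd : d ∈ Set.Icc (0:ℝ) 1 := ⟨by linarith, by linarith⟩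
  have hθs : 0 < ρ₁ + min β₁ γ₁ := by
    have := lt_min hβ₁.1 hγ₁.1; linarith [hρ₁.1]
  have hθt : 0 < β₂ + min γ₂ ρ₂ := by
    have := lt_min hγ₂.1 hρ₂.1; linarith [hβ₂.1]
  have hid : ((y a c * d2 z a c d * d1 x a b d) - (y a c * d2 z a c q * d1 x a b q) - (y a q * d2 z a q d * d1 x a b d)) - ((y a c * d2 z a c d * d1 x a p d) - (y a c * d2 z a c q * d1 x a p q) - (y a q * d2 z a q d * d1 x a p d)) - ((y p c * d2 z p c d * d1 x p b d) - (y p c * d2 z p c q * d1 x p b q) - (y p q * d2 z p q d * d1 x p b d))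
      = (dd y a p c q) * (d2 z p q d) * (d1 x p b d) + (d2 y a c q) * (dd z a p q d) * (d1 x p b d) + (-(d1 y a p c)) * (d2 z p c q) * (dd x p b q d) + (-(y a c)) * (dd z a p c q) * (dd x p b q d) := by
    simp only [d1, d2, dd]; ring
  rw [hid]
  have hT0 : |(dd y a p c q) * (d2 z p q d) * (d1 x p b d)| ≤ C^3 * ((b-a)^(ρ₁ + min β₁ γ₁)) * ((d-c)^(β₂ + min γ₂ ρ₂)) := by
    apply term_bound (abs_mul3_le (hy.1 a p c q hma hmp hmc hmq) (hz.2.2.1 p q d hmp hmq hmd) (hx.2.1 p b d hmp hmb hmd))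
      (show (C * |p - a| ^ γ₁ * |q - c| ^ γ₂) * (C * |d - q| ^ β₂) * (C * |b - p| ^ ρ₁) = C^3 * ((|p - a| ^ γ₁ * |b - p| ^ ρ₁) * (|q - c| ^ γ₂ * |d - q| ^ β₂)) by ring)
      (pow_nonneg hC 3) (by positivity) (by positivity)
      (incr_prod_le hap hpb ha hb (by linarith [hγ₁.1] : 0 ≤ γ₁) (by linarith [hρ₁.1] : 0 ≤ ρ₁) hθs (by linarith [min_le_right β₁ γ₁] : ρ₁ + min β₁ γ₁ ≤ γ₁ + ρ₁)) (incr_prod_le hcq hqd hc hd (by linarith [hγ₂.1] : 0 ≤ γ₂) (by linarith [hβ₂.1] : 0 ≤ β₂) hθt (by linarith [min_le_left γ₂ ρ₂] : β₂ + min γ₂ ρ₂ ≤ γ₂ + β₂))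
  have hT1 : |(d2 y a c q) * (dd z a p q d) * (d1 x p b d)| ≤ C^3 * ((b-a)^(ρ₁ + min β₁ γ₁)) * ((d-c)^(β₂ + min γ₂ ρ₂)) := by
    apply term_bound (abs_mul3_le (hy.2.2.1 a c q hma hmc hmq) (hz.1 a p q d hma hmp hmq hmd) (hx.2.1 p b d hmp hmb hmd))
      (show (C * |q - c| ^ γ₂) * (C * |p - a| ^ β₁ * |d - q| ^ β₂) * (C * |b - p| ^ ρ₁) = C^3 * ((|p - a| ^ β₁ * |b - p| ^ ρ₁) * (|q - c| ^ γ₂ * |d - q| ^ β₂)) by ring)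
      (pow_nonneg hC 3) (by positivity) (by positivity)
      (incr_prod_le hap hpb ha hb (by linarith [hβ₁.1] : 0 ≤ β₁) (by linarith [hρ₁.1] : 0 ≤ ρ₁) hθs (by linarith [min_le_left β₁ γ₁] : ρ₁ + min β₁ γ₁ ≤ β₁ + ρ₁)) (incr_prod_le hcq hqd hc hd (by linarith [hγ₂.1] : 0 ≤ γ₂) (by linarith [hβ₂.1] : 0 ≤ β₂) hθt (by linarith [min_le_left γ₂ ρ₂] : β₂ + min γ₂ ρ₂ ≤ γ₂ + β₂))
  have hT2 : |(-(d1 y a p c)) * (d2 z p c q) * (dd x p b q d)| ≤ C^3 * ((b-a)^(ρ₁ + min β₁ γ₁)) * ((d-c)^(β₂ + min γ₂ ρ₂)) := by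
    apply term_bound (abs_mul3_le (by rw [abs_neg]; exact hy.2.1 a p c hma hmp hmc) (hz.2.2.1 p c q hmp hmc hmq) (hx.1 p b q d hmp hmb hmq hmd))
      (show (C * |p - a| ^ γ₁) * (C * |q - c| ^ β₂) * (C * |b - p| ^ ρ₁ * |d - q| ^ ρ₂) = C^3 * ((|p - a| ^ γ₁ * |b - p| ^ ρ₁) * (|q - c| ^ β₂ * |d - q| ^ ρ₂)) by ring)
      (pow_nonneg hC 3) (by positivity) (by positivity)
      (incr_prod_le hap hpb ha hb (by linarith [hγ₁.1] : 0 ≤ γ₁) (by linarith [hρ₁.1] : 0 ≤ ρ₁) hθs (by linarith [min_le_right β₁ γ₁] : ρ₁ + min β₁ γ₁ ≤ γ₁ + ρ₁)) (incr_prod_le hcq hqd hc hd (by linarith [hβ₂.1] : 0 ≤ β₂) (by linarith [hρ₂.1] : 0 ≤ ρ₂) hθt (by linarith [min_le_right γ₂ ρ₂] : β₂ + min γ₂ ρ₂ ≤ β₂ + ρ₂))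
  have hT3 : |(-(y a c)) * (dd z a p c q) * (dd x p b q d)| ≤ C^3 * ((b-a)^(ρ₁ + min β₁ γ₁)) * ((d-c)^(β₂ + min γ₂ ρ₂)) := by
    apply term_bound (abs_mul3_le (by rw [abs_neg]; exact hy.2.2.2 a c hma hmc) (hz.1 a p c q hma hmp hmc hmq) (hx.1 p b q d hmp hmb hmq hmd))
      (show (C) * (C * |p - a| ^ β₁ * |q - c| ^ β₂) * (C * |b - p| ^ ρ₁ * |d - q| ^ ρ₂) = C^3 * ((|p - a| ^ β₁ * |b - p| ^ ρ₁) * (|q - c| ^ β₂ * |d - q| ^ ρ₂)) by ring)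
      (pow_nonneg hC 3) (by positivity) (by positivity)
      (incr_prod_le hap hpb ha hb (by linarith [hβ₁.1] : 0 ≤ β₁) (by linarith [hρ₁.1] : 0 ≤ ρ₁) hθs (by linarith [min_le_left β₁ γ₁] : ρ₁ + min β₁ γ₁ ≤ β₁ + ρ₁)) (incr_prod_le hcq hqd hc hd (by linarith [hβ₂.1] : 0 ≤ β₂) (by linarith [hρ₂.1] : 0 ≤ ρ₂) hθt (by linarith [min_le_right γ₂ ρ₂] : β₂ + min γ₂ ρ₂ ≤ β₂ + ρ₂))
  have hBsn : (0:ℝ) ≤ (b-a)^(ρ₁ + min β₁ γ₁) := Real.rpow_nonneg (by linarith) _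
  have hBtn : (0:ℝ) ≤ (d-c)^(β₂ + min γ₂ ρ₂) := Real.rpow_nonneg (by linarith) _
  have hXn : (0:ℝ) ≤ C^3 * (b-a)^(ρ₁ + min β₁ γ₁) * (d-c)^(β₂ + min γ₂ ρ₂) := mul_nonneg (mul_nonneg (pow_nonneg hC 3) hBsn) hBtn
  have h4 : (4*C^3) * (b-a)^(ρ₁ + min β₁ γ₁) * (d-c)^(β₂ + min γ₂ ρ₂) = 4*(C^3 * (b-a)^(ρ₁ + min β₁ γ₁) * (d-c)^(β₂ + min γ₂ ρ₂)) := by ring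
  rw [h4]
  calc |(dd y a p c q) * (d2 z p q d) * (d1 x p b d) + (d2 y a c q) * (dd z a p q d) * (d1 x p b d) + (-(d1 y a p c)) * (d2 z p c q) * (dd x p b q d) + (-(y a c)) * (dd z a p c q) * (dd x p b q d)|
      ≤ |(dd y a p c q) * (d2 z p q d) * (d1 x p b d)| + |(d2 y a c q) * (dd z a p q d) * (d1 x p b d)| + |(-(d1 y a p c)) * (d2 z p c q) * (dd x p b q d)| + |(-(y a c)) * (dd z a p c q) * (dd x p b q d)| := abs_add4 _ _ _ _
    _ ≤ 4*(C^3 * (b-a)^(ρ₁ + min β₁ γ₁) * (d-c)^(β₂ + min γ₂ ρ₂)) := by linarith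

end Germs

/-- generic Abel-summation bound -/
lemma abel_bound {n : ℕ} (hn : 1 ≤ n) (a b B : ℕ → ℝ) (hB0 : B 0 = 0)
    (hb : ∀ j, b j = B (j+1) - B j)
    {M P Q : ℝ} (hM0 : 0 ≤ M) (hQ0 : 0 ≤ Q)
    (hM : ∀ j ≤ n, |B j| ≤ M) (hP : |a (n-1)| ≤ P)
    (hQ : ∀ j, j + 1 ≤ n - 1 → |a (j+1) - a j| ≤ Q) :
    |∑ j ∈ Finset.range n, a j * b j| ≤ P * M + n * (Q * M) := by
  have hG : ∀ i, ∑ j ∈ Finset.range i, b j = B i := by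
    intro i
    rw [Finset.sum_congr rfl (fun j _ => hb j), Finset.sum_range_sub, hB0, sub_zero]
  have hparts := Finset.sum_range_by_parts a b n
  simp only [smul_eq_mul] at hparts
  rw [hparts]
  have h1 : |a (n-1) * ∑ j ∈ Finset.range n, b j| ≤ P * M := by
    rw [hG, abs_mul]
    exact mul_le_mul hP (hM n le_rfl) (abs_nonneg _) ((abs_nonneg _).trans hP)
  have h2 : |∑ j ∈ Finset.range (n-1), (a (j+1) - a j) * ∑ i ∈ Finset.range (j+1), b i|
      ≤ (n-1 : ℕ) * (Q * M) := by
    calc |∑ j ∈ Finset.range (n-1), (a (j+1) - a j) * ∑ i ∈ Finset.range (j+1), b i|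
        ≤ ∑ j ∈ Finset.range (n-1), |(a (j+1) - a j) * ∑ i ∈ Finset.range (j+1), b i| :=
          Finset.abs_sum_le_sum_abs _ _
      _ ≤ ∑ _j ∈ Finset.range (n-1), (Q * M) := by
          apply Finset.sum_le_sum
          intro j hj
          have hj' := Finset.mem_range.mp hj
          rw [abs_mul, hG]
          exact mul_le_mul (hQ j (by omega)) (hM (j+1) (by omega)) (abs_nonneg _) hQ0
      _ = (n-1 : ℕ) * (Q * M) := by rw [Finset.sum_const, nsmul_eq_mul, Finset.card_range]
  calc |a (n-1) * ∑ j ∈ Finset.range n, b j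
        - ∑ j ∈ Finset.range (n-1), (a (j+1) - a j) * ∑ i ∈ Finset.range (j+1), b i|
      ≤ |a (n-1) * ∑ j ∈ Finset.range n, b j|
        + |∑ j ∈ Finset.range (n-1), (a (j+1) - a j) * ∑ i ∈ Finset.range (j+1), b i| :=
        abs_sub _ _
    _ ≤ P * M + (n-1:ℕ) * (Q * M) := add_le_add h1 h2
    _ ≤ P * M + n * (Q * M) := by
        have hc : ((n-1 : ℕ) : ℝ) ≤ (n : ℝ) := by
          exact_mod_cast Nat.sub_le n 1
        nlinarith [mul_nonneg hQ0 hM0]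

section Diffs

variable {γ₁ γ₂ ρ₁ ρ₂ β₁ β₂ C : ℝ} {y x z : ℝ → ℝ → ℝ}

/-- difference of Riemann sums of germs (b) and (a) -/
lemma diff_ba (hC : 0 ≤ C)
    (hγ₁ : γ₁ ∈ Set.Ioc (0:ℝ) 1) (hγ₂ : γ₂ ∈ Set.Ioc (0:ℝ) 1)
    (hρ₁ : ρ₁ ∈ Set.Ioc (0:ℝ) 1) (hρ₂ : ρ₂ ∈ Set.Ioc (0:ℝ) 1)
    (hβ₁ : β₁ ∈ Set.Ioc (0:ℝ) 1) (hβ₂ : β₂ ∈ Set.Ioc (0:ℝ) 1)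
    (hρβ₁ : 1 < ρ₁ + β₁)
    (hy : Hold γ₁ γ₂ C y) (hx : Hold ρ₁ ρ₂ C x) (hz : Hold β₁ β₂ C z)
    {s s' t t' : ℝ} (hs : 0 ≤ s) (hss' : s < s') (hs' : s' ≤ 1)
    (ht : 0 ≤ t) (htt' : t < t') (ht' : t' ≤ 1)
    {m n : ℕ} {σ τ : ℕ → ℝ} {η : ℝ} (hη : 0 ≤ η)
    (hσ : IsGrid' s s' m σ) (hτ : IsGrid' t t' n τ)
    (hmesh : ∀ i < m, σ (i+1) - σ i ≤ η) :
    |(∑ i ∈ Finset.range m, ∑ j ∈ Finset.range n,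
        (y (σ i) (τ j) * d1 x (σ i) (σ (i+1)) (τ j) * d2 z (σ i) (τ j) (τ (j+1))))
      - (∑ i ∈ Finset.range m, ∑ j ∈ Finset.range n,
        (y (σ i) (τ j) * d1 x (σ i) (σ (i+1)) (τ j) * d2 z (σ (i+1)) (τ j) (τ (j+1))))|
      ≤ (1 + 2*(n:ℝ)) * C^3 * η^(ρ₁+β₁-1) := by
  have hn : 1 ≤ n := hτ.one_le htt'
  have hmem_s : ∀ i ≤ m, σ i ∈ Set.Icc (0:ℝ) 1 :=
    fun i hi => ⟨by linarith [hσ.left_le hi], by linarith [hσ.le_right hi]⟩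
  have hmem_t : ∀ j ≤ n, τ j ∈ Set.Icc (0:ℝ) 1 :=
    fun j hj => ⟨by linarith [hτ.left_le hj], by linarith [hτ.le_right hj]⟩
  -- per-row Abel bound
  have row : ∀ i < m,
      |∑ j ∈ Finset.range n,
        ((y (σ i) (τ j) * d1 x (σ i) (σ (i+1)) (τ j))
          * (-(dd z (σ i) (σ (i+1)) (τ j) (τ (j+1)))))|
      ≤ (1 + 2*(n:ℝ)) * C^3 * (σ (i+1) - σ i)^(ρ₁+β₁) := by
    intro i hi
    have hΔ : 0 ≤ σ (i+1) - σ i := by linarith [hσ.2.2 i hi]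
    have hΔ1 : σ (i+1) - σ i ≤ 1 := by
      have h1 := hσ.left_le (by omega : i ≤ m)
      have h2 := hσ.le_right (by omega : i + 1 ≤ m)
      linarith
    have hi0 := hmem_s i (by omega)
    have hi1 := hmem_s (i+1) (by omega)
    have hΔr : ∀ e : ℝ, 0 ≤ e → |σ (i+1) - σ i| ^ e ≤ (σ (i+1) - σ i) ^ e := by
      intro e he
      rw [abs_of_nonneg hΔ]
    set Δ := σ (i+1) - σ i with hΔdef
    have habel := abel_bound hn
      (fun j => y (σ i) (τ j) * d1 x (σ i) (σ (i+1)) (τ j))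
      (fun j => -(dd z (σ i) (σ (i+1)) (τ j) (τ (j+1))))
      (fun J => -(dd z (σ i) (σ (i+1)) (τ 0) (τ J)))
      (by simp only [dd]; ring)
      (fun j => by simp only [dd]; ring)
      (M := C * Δ^β₁) (P := C^2 * Δ^ρ₁) (Q := 2*C^2 * Δ^ρ₁)
      (by positivity) (by positivity)
      ?_ ?_ ?_
    · calc |∑ j ∈ Finset.range n,
          ((y (σ i) (τ j) * d1 x (σ i) (σ (i+1)) (τ j))
            * (-(dd z (σ i) (σ (i+1)) (τ j) (τ (j+1)))))|
          ≤ (C^2 * Δ^ρ₁) * (C * Δ^β₁) + n * ((2*C^2 * Δ^ρ₁) * (C * Δ^β₁)) := habel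
        _ = (1 + 2*(n:ℝ)) * C^3 * (Δ^ρ₁ * Δ^β₁) := by ring
        _ = (1 + 2*(n:ℝ)) * C^3 * Δ^(ρ₁+β₁) := by
            rw [← Real.rpow_add' hΔ (by linarith : ρ₁ + β₁ ≠ 0)]
    · -- |B J| ≤ C Δ^β₁
      intro J hJ
      rw [abs_neg]
      have h1 := hz.1 (σ i) (σ (i+1)) (τ 0) (τ J) hi0 hi1 (hmem_t 0 (by omega)) (hmem_t J hJ)
      apply h1.trans
      have hτJ : |τ J - τ 0| ^ β₂ ≤ 1 := by
        apply rpow_le_one' (abs_nonneg _) ?_ hβ₂.1.le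
        rw [abs_of_nonneg (by linarith [hτ.mono (Nat.zero_le J) hJ])]
        have := hτ.left_le (Nat.zero_le n)
        have := hτ.le_right hJ
        have := hτ.1
        linarith [hτ.left_le (by omega : 0 ≤ n), hτ.le_right hJ]
      calc C * |σ (i+1) - σ i| ^ β₁ * |τ J - τ 0| ^ β₂
          ≤ C * |σ (i+1) - σ i| ^ β₁ * 1 := by
            apply mul_le_mul_of_nonneg_left hτJ (by positivity)
        _ = C * |σ (i+1) - σ i| ^ β₁ := by ring
        _ ≤ C * Δ^β₁ := by
            apply mul_le_mul_of_nonneg_left (hΔr β₁ (by linarith [hβ₁.1])) hC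
    · -- |a (n-1)| ≤ C² Δ^ρ₁
      rw [abs_mul]
      have h1 := hy.2.2.2 (σ i) (τ (n-1)) hi0 (hmem_t (n-1) (by omega))
      have h2 := hx.2.1 (σ i) (σ (i+1)) (τ (n-1)) hi0 hi1 (hmem_t (n-1) (by omega))
      calc |y (σ i) (τ (n-1))| * |d1 x (σ i) (σ (i+1)) (τ (n-1))|
          ≤ C * (C * |σ (i+1) - σ i| ^ ρ₁) :=
            mul_le_mul h1 h2 (abs_nonneg _) ((abs_nonneg _).trans h1)
        _ ≤ C * (C * Δ^ρ₁) := by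
            apply mul_le_mul_of_nonneg_left ?_ hC
            exact mul_le_mul_of_nonneg_left (hΔr ρ₁ (by linarith [hρ₁.1])) hC
        _ = C^2 * Δ^ρ₁ := by ring
    · -- increments of a
      intro j hj
      have hjn : j + 1 ≤ n := by omega
      have hjm : j ≤ n := by omega
      have hidj : y (σ i) (τ (j+1)) * d1 x (σ i) (σ (i+1)) (τ (j+1))
            - y (σ i) (τ j) * d1 x (σ i) (σ (i+1)) (τ j)
          = d2 y (σ i) (τ j) (τ (j+1)) * d1 x (σ i) (σ (i+1)) (τ (j+1))
            + y (σ i) (τ j) * dd x (σ i) (σ (i+1)) (τ j) (τ (j+1)) := by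
        simp only [d1, d2, dd]; ring
      rw [hidj]
      have hτ1 : ∀ e : ℝ, 0 < e → e ≤ 1 → |τ (j+1) - τ j| ^ e ≤ 1 := by
        intro e he he1
        apply rpow_le_one' (abs_nonneg _) ?_ he.le
        rw [abs_of_nonneg (by linarith [hτ.2.2 j (by omega)])]
        linarith [hτ.left_le hjm, hτ.le_right hjn]
      have hb1 : |d2 y (σ i) (τ j) (τ (j+1)) * d1 x (σ i) (σ (i+1)) (τ (j+1))|
          ≤ C^2 * Δ^ρ₁ := by
        rw [abs_mul]
        have h1 := hy.2.2.1 (σ i) (τ j) (τ (j+1)) hi0 (hmem_t j hjm) (hmem_t (j+1) hjn)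
        have h2 := hx.2.1 (σ i) (σ (i+1)) (τ (j+1)) hi0 hi1 (hmem_t (j+1) hjn)
        calc |d2 y (σ i) (τ j) (τ (j+1))| * |d1 x (σ i) (σ (i+1)) (τ (j+1))|
            ≤ (C * |τ (j+1) - τ j| ^ γ₂) * (C * |σ (i+1) - σ i| ^ ρ₁) :=
              mul_le_mul h1 h2 (abs_nonneg _) ((abs_nonneg _).trans h1)
          _ ≤ (C * 1) * (C * Δ^ρ₁) := by
              apply mul_le_mul
              · exact mul_le_mul_of_nonneg_left (hτ1 γ₂ hγ₂.1 hγ₂.2) hC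
              · exact mul_le_mul_of_nonneg_left (hΔr ρ₁ (by linarith [hρ₁.1])) hC
              · positivity
              · positivity
          _ = C^2 * Δ^ρ₁ := by ring
      have hb2 : |y (σ i) (τ j) * dd x (σ i) (σ (i+1)) (τ j) (τ (j+1))|
          ≤ C^2 * Δ^ρ₁ := by
        rw [abs_mul]
        have h1 := hy.2.2.2 (σ i) (τ j) hi0 (hmem_t j hjm)
        have h2 := hx.1 (σ i) (σ (i+1)) (τ j) (τ (j+1)) hi0 hi1 (hmem_t j hjm) (hmem_t (j+1) hjn)
        calc |y (σ i) (τ j)| * |dd x (σ i) (σ (i+1)) (τ j) (τ (j+1))|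
            ≤ C * (C * |σ (i+1) - σ i| ^ ρ₁ * |τ (j+1) - τ j| ^ ρ₂) :=
              mul_le_mul h1 h2 (abs_nonneg _) ((abs_nonneg _).trans h1)
          _ ≤ C * (C * Δ^ρ₁ * 1) := by
              apply mul_le_mul_of_nonneg_left ?_ hC
              apply mul_le_mul
              · exact mul_le_mul_of_nonneg_left (hΔr ρ₁ (by linarith [hρ₁.1])) hC
              · exact hτ1 ρ₂ hρ₂.1 hρ₂.2
              · positivity
              · positivity
          _ = C^2 * Δ^ρ₁ := by ring
      calc |d2 y (σ i) (τ j) (τ (j+1)) * d1 x (σ i) (σ (i+1)) (τ (j+1))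
            + y (σ i) (τ j) * dd x (σ i) (σ (i+1)) (τ j) (τ (j+1))|
          ≤ _ + _ := abs_add_le _ _
        _ ≤ C^2 * Δ^ρ₁ + C^2 * Δ^ρ₁ := add_le_add hb1 hb2
        _ = 2*C^2 * Δ^ρ₁ := by ring
  -- assemble rows
  have hdiff : (∑ i ∈ Finset.range m, ∑ j ∈ Finset.range n,
        (y (σ i) (τ j) * d1 x (σ i) (σ (i+1)) (τ j) * d2 z (σ i) (τ j) (τ (j+1))))
      - (∑ i ∈ Finset.range m, ∑ j ∈ Finset.range n,
        (y (σ i) (τ j) * d1 x (σ i) (σ (i+1)) (τ j) * d2 z (σ (i+1)) (τ j) (τ (j+1))))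
      = ∑ i ∈ Finset.range m, ∑ j ∈ Finset.range n,
        ((y (σ i) (τ j) * d1 x (σ i) (σ (i+1)) (τ j))
          * (-(dd z (σ i) (σ (i+1)) (τ j) (τ (j+1))))) := by
    rw [← Finset.sum_sub_distrib]
    apply Finset.sum_congr rfl
    intro i _
    rw [← Finset.sum_sub_distrib]
    apply Finset.sum_congr rfl
    intro j _
    simp only [d1, d2, dd]; ring
  rw [hdiff]
  calc |∑ i ∈ Finset.range m, ∑ j ∈ Finset.range n,
        ((y (σ i) (τ j) * d1 x (σ i) (σ (i+1)) (τ j))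
          * (-(dd z (σ i) (σ (i+1)) (τ j) (τ (j+1)))))|
      ≤ ∑ i ∈ Finset.range m, |∑ j ∈ Finset.range n,
        ((y (σ i) (τ j) * d1 x (σ i) (σ (i+1)) (τ j))
          * (-(dd z (σ i) (σ (i+1)) (τ j) (τ (j+1)))))| := Finset.abs_sum_le_sum_abs _ _
    _ ≤ ∑ i ∈ Finset.range m, (1 + 2*(n:ℝ)) * C^3 * (σ (i+1) - σ i)^(ρ₁+β₁) :=
        Finset.sum_le_sum (fun i hi => row i (Finset.mem_range.mp hi))
    _ = (1 + 2*(n:ℝ)) * C^3 * ∑ i ∈ Finset.range m, (σ (i+1) - σ i)^(ρ₁+β₁) := by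
        rw [← Finset.mul_sum]
    _ ≤ (1 + 2*(n:ℝ)) * C^3 * (η^(ρ₁+β₁-1) * (s' - s)) := by
        apply mul_le_mul_of_nonneg_left (sum_incr_rpow hσ (by linarith) hη hmesh)
        positivity
    _ ≤ (1 + 2*(n:ℝ)) * C^3 * η^(ρ₁+β₁-1) := by
        have h1 : (0:ℝ) ≤ η^(ρ₁+β₁-1) := Real.rpow_nonneg hη _
        have hpos : (0:ℝ) ≤ (1 + 2*(n:ℝ)) * C^3 := by positivity
        nlinarith [mul_nonneg hpos h1]
end Diffs

section Diffs2

variable {γ₁ γ₂ ρ₁ ρ₂ β₁ β₂ C : ℝ} {y x z : ℝ → ℝ → ℝ}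

/-- difference of Riemann sums of germs (c) and (b) -/
lemma diff_cb (hC : 0 ≤ C)
    (hγ₁ : γ₁ ∈ Set.Ioc (0:ℝ) 1) (hγ₂ : γ₂ ∈ Set.Ioc (0:ℝ) 1)
    (hρ₁ : ρ₁ ∈ Set.Ioc (0:ℝ) 1) (hρ₂ : ρ₂ ∈ Set.Ioc (0:ℝ) 1)
    (hβ₁ : β₁ ∈ Set.Ioc (0:ℝ) 1) (hβ₂ : β₂ ∈ Set.Ioc (0:ℝ) 1)
    (hρβ₂ : 1 < ρ₂ + β₂)
    (hy : Hold γ₁ γ₂ C y) (hx : Hold ρ₁ ρ₂ C x) (hz : Hold β₁ β₂ C z)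
    {s s' t t' : ℝ} (hs : 0 ≤ s) (hss' : s < s') (hs' : s' ≤ 1)
    (ht : 0 ≤ t) (htt' : t < t') (ht' : t' ≤ 1)
    {m n : ℕ} {σ τ : ℕ → ℝ} {η : ℝ} (hη : 0 ≤ η)
    (hσ : IsGrid' s s' m σ) (hτ : IsGrid' t t' n τ)
    (hmesh : ∀ j < n, τ (j+1) - τ j ≤ η) :
    |(∑ i ∈ Finset.range m, ∑ j ∈ Finset.range n,
        (y (σ i) (τ j) * d2 z (σ i) (τ j) (τ (j+1)) * d1 x (σ i) (σ (i+1)) (τ (j+1))))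
      - (∑ i ∈ Finset.range m, ∑ j ∈ Finset.range n,
        (y (σ i) (τ j) * d1 x (σ i) (σ (i+1)) (τ j) * d2 z (σ i) (τ j) (τ (j+1))))|
      ≤ (1 + 2*(m:ℝ)) * C^3 * η^(ρ₂+β₂-1) := by
  have hm : 1 ≤ m := hσ.one_le hss'
  have hmem_s : ∀ i ≤ m, σ i ∈ Set.Icc (0:ℝ) 1 :=
    fun i hi => ⟨by linarith [hσ.left_le hi], by linarith [hσ.le_right hi]⟩
  have hmem_t : ∀ j ≤ n, τ j ∈ Set.Icc (0:ℝ) 1 :=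
    fun j hj => ⟨by linarith [hτ.left_le hj], by linarith [hτ.le_right hj]⟩
  have col : ∀ j < n,
      |∑ i ∈ Finset.range m,
        ((y (σ i) (τ j) * d2 z (σ i) (τ j) (τ (j+1)))
          * (dd x (σ i) (σ (i+1)) (τ j) (τ (j+1))))|
      ≤ (1 + 2*(m:ℝ)) * C^3 * (τ (j+1) - τ j)^(ρ₂+β₂) := by
    intro j hj
    have hΔ : 0 ≤ τ (j+1) - τ j := by linarith [hτ.2.2 j hj]
    have hj0 := hmem_t j (by omega)
    have hj1 := hmem_t (j+1) (by omega)
    have hΔr : ∀ e : ℝ, 0 ≤ e → |τ (j+1) - τ j| ^ e ≤ (τ (j+1) - τ j) ^ e := by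
      intro e he
      rw [abs_of_nonneg hΔ]
    set Δ := τ (j+1) - τ j with hΔdef
    have habel := abel_bound hm
      (fun i => y (σ i) (τ j) * d2 z (σ i) (τ j) (τ (j+1)))
      (fun i => dd x (σ i) (σ (i+1)) (τ j) (τ (j+1)))
      (fun I => dd x (σ 0) (σ I) (τ j) (τ (j+1)))
      (by simp only [dd]; ring)
      (fun i => by simp only [dd]; ring)
      (M := C * Δ^ρ₂) (P := C^2 * Δ^β₂) (Q := 2*C^2 * Δ^β₂)
      (by positivity) (by positivity)
      ?_ ?_ ?_
    · calc |∑ i ∈ Finset.range m,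
          ((y (σ i) (τ j) * d2 z (σ i) (τ j) (τ (j+1)))
            * (dd x (σ i) (σ (i+1)) (τ j) (τ (j+1))))|
          ≤ (C^2 * Δ^β₂) * (C * Δ^ρ₂) + m * ((2*C^2 * Δ^β₂) * (C * Δ^ρ₂)) := habel
        _ = (1 + 2*(m:ℝ)) * C^3 * (Δ^ρ₂ * Δ^β₂) := by ring
        _ = (1 + 2*(m:ℝ)) * C^3 * Δ^(ρ₂+β₂) := by
            rw [← Real.rpow_add' hΔ (by linarith : ρ₂ + β₂ ≠ 0)]
    · -- |B I| ≤ C Δ^ρ₂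
      intro I hI
      have h1 := hx.1 (σ 0) (σ I) (τ j) (τ (j+1)) (hmem_s 0 (by omega)) (hmem_s I hI) hj0 hj1
      apply h1.trans
      have hσI : |σ I - σ 0| ^ ρ₁ ≤ 1 := by
        apply rpow_le_one' (abs_nonneg _) ?_ hρ₁.1.le
        rw [abs_of_nonneg (by linarith [hσ.mono (Nat.zero_le I) hI])]
        linarith [hσ.left_le (by omega : 0 ≤ m), hσ.le_right hI]
      calc C * |σ I - σ 0| ^ ρ₁ * |τ (j+1) - τ j| ^ ρ₂
          ≤ C * 1 * (Δ^ρ₂) := by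
            apply mul_le_mul (mul_le_mul_of_nonneg_left hσI hC)
              (hΔr ρ₂ (by linarith [hρ₂.1])) (by positivity) (by positivity)
        _ = C * Δ^ρ₂ := by ring
    · -- |a (m-1)| ≤ C² Δ^β₂
      rw [abs_mul]
      have h1 := hy.2.2.2 (σ (m-1)) (τ j) (hmem_s (m-1) (by omega)) hj0
      have h2 := hz.2.2.1 (σ (m-1)) (τ j) (τ (j+1)) (hmem_s (m-1) (by omega)) hj0 hj1
      calc |y (σ (m-1)) (τ j)| * |d2 z (σ (m-1)) (τ j) (τ (j+1))|
          ≤ C * (C * |τ (j+1) - τ j| ^ β₂) :=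
            mul_le_mul h1 h2 (abs_nonneg _) ((abs_nonneg _).trans h1)
        _ ≤ C * (C * Δ^β₂) := by
            apply mul_le_mul_of_nonneg_left ?_ hC
            exact mul_le_mul_of_nonneg_left (hΔr β₂ (by linarith [hβ₂.1])) hC
        _ = C^2 * Δ^β₂ := by ring
    · -- increments of a over i
      intro i hi
      have him : i + 1 ≤ m := by omega
      have hi0 := hmem_s i (by omega)
      have hi1 := hmem_s (i+1) him
      have hidj : y (σ (i+1)) (τ j) * d2 z (σ (i+1)) (τ j) (τ (j+1))
            - y (σ i) (τ j) * d2 z (σ i) (τ j) (τ (j+1))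
          = d1 y (σ i) (σ (i+1)) (τ j) * d2 z (σ (i+1)) (τ j) (τ (j+1))
            + y (σ i) (τ j) * dd z (σ i) (σ (i+1)) (τ j) (τ (j+1)) := by
        simp only [d1, d2, dd]; ring
      rw [hidj]
      have hσ1 : ∀ e : ℝ, 0 < e → e ≤ 1 → |σ (i+1) - σ i| ^ e ≤ 1 := by
        intro e he he1
        apply rpow_le_one' (abs_nonneg _) ?_ he.le
        rw [abs_of_nonneg (by linarith [hσ.2.2 i (by omega)])]
        linarith [hσ.left_le (by omega : i ≤ m), hσ.le_right him]
      have hb1 : |d1 y (σ i) (σ (i+1)) (τ j) * d2 z (σ (i+1)) (τ j) (τ (j+1))|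
          ≤ C^2 * Δ^β₂ := by
        rw [abs_mul]
        have h1 := hy.2.1 (σ i) (σ (i+1)) (τ j) hi0 hi1 hj0
        have h2 := hz.2.2.1 (σ (i+1)) (τ j) (τ (j+1)) hi1 hj0 hj1
        calc |d1 y (σ i) (σ (i+1)) (τ j)| * |d2 z (σ (i+1)) (τ j) (τ (j+1))|
            ≤ (C * |σ (i+1) - σ i| ^ γ₁) * (C * |τ (j+1) - τ j| ^ β₂) :=
              mul_le_mul h1 h2 (abs_nonneg _) ((abs_nonneg _).trans h1)
          _ ≤ (C * 1) * (C * Δ^β₂) := by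
              apply mul_le_mul
              · exact mul_le_mul_of_nonneg_left (hσ1 γ₁ hγ₁.1 hγ₁.2) hC
              · exact mul_le_mul_of_nonneg_left (hΔr β₂ (by linarith [hβ₂.1])) hC
              · positivity
              · positivity
          _ = C^2 * Δ^β₂ := by ring
      have hb2 : |y (σ i) (τ j) * dd z (σ i) (σ (i+1)) (τ j) (τ (j+1))|
          ≤ C^2 * Δ^β₂ := by
        rw [abs_mul]
        have h1 := hy.2.2.2 (σ i) (τ j) hi0 hj0
        have h2 := hz.1 (σ i) (σ (i+1)) (τ j) (τ (j+1)) hi0 hi1 hj0 hj1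
        calc |y (σ i) (τ j)| * |dd z (σ i) (σ (i+1)) (τ j) (τ (j+1))|
            ≤ C * (C * |σ (i+1) - σ i| ^ β₁ * |τ (j+1) - τ j| ^ β₂) :=
              mul_le_mul h1 h2 (abs_nonneg _) ((abs_nonneg _).trans h1)
          _ ≤ C * (C * 1 * (Δ^β₂)) := by
              apply mul_le_mul_of_nonneg_left ?_ hC
              apply mul_le_mul
              · exact mul_le_mul_of_nonneg_left (hσ1 β₁ hβ₁.1 hβ₁.2) hC
              · exact hΔr β₂ (by linarith [hβ₂.1])
              · positivity
              · positivity
          _ = C^2 * Δ^β₂ := by ring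
      calc |d1 y (σ i) (σ (i+1)) (τ j) * d2 z (σ (i+1)) (τ j) (τ (j+1))
            + y (σ i) (τ j) * dd z (σ i) (σ (i+1)) (τ j) (τ (j+1))|
          ≤ _ + _ := abs_add_le _ _
        _ ≤ C^2 * Δ^β₂ + C^2 * Δ^β₂ := add_le_add hb1 hb2
        _ = 2*C^2 * Δ^β₂ := by ring
  -- assemble columns
  have hdiff : (∑ i ∈ Finset.range m, ∑ j ∈ Finset.range n,
        (y (σ i) (τ j) * d2 z (σ i) (τ j) (τ (j+1)) * d1 x (σ i) (σ (i+1)) (τ (j+1))))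
      - (∑ i ∈ Finset.range m, ∑ j ∈ Finset.range n,
        (y (σ i) (τ j) * d1 x (σ i) (σ (i+1)) (τ j) * d2 z (σ i) (τ j) (τ (j+1))))
      = ∑ j ∈ Finset.range n, ∑ i ∈ Finset.range m,
        ((y (σ i) (τ j) * d2 z (σ i) (τ j) (τ (j+1)))
          * (dd x (σ i) (σ (i+1)) (τ j) (τ (j+1)))) := by
    rw [show (∑ j ∈ Finset.range n, ∑ i ∈ Finset.range m,
        ((y (σ i) (τ j) * d2 z (σ i) (τ j) (τ (j+1)))
          * (dd x (σ i) (σ (i+1)) (τ j) (τ (j+1)))))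
      = ∑ i ∈ Finset.range m, ∑ j ∈ Finset.range n,
        ((y (σ i) (τ j) * d2 z (σ i) (τ j) (τ (j+1)))
          * (dd x (σ i) (σ (i+1)) (τ j) (τ (j+1)))) from Finset.sum_comm]
    rw [← Finset.sum_sub_distrib]
    apply Finset.sum_congr rfl
    intro i _
    rw [← Finset.sum_sub_distrib]
    apply Finset.sum_congr rfl
    intro j _
    simp only [d1, d2, dd]; ring
  rw [hdiff]
  calc |∑ j ∈ Finset.range n, ∑ i ∈ Finset.range m,
        ((y (σ i) (τ j) * d2 z (σ i) (τ j) (τ (j+1)))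
          * (dd x (σ i) (σ (i+1)) (τ j) (τ (j+1))))|
      ≤ ∑ j ∈ Finset.range n, |∑ i ∈ Finset.range m,
        ((y (σ i) (τ j) * d2 z (σ i) (τ j) (τ (j+1)))
          * (dd x (σ i) (σ (i+1)) (τ j) (τ (j+1))))| := Finset.abs_sum_le_sum_abs _ _
    _ ≤ ∑ j ∈ Finset.range n, (1 + 2*(m:ℝ)) * C^3 * (τ (j+1) - τ j)^(ρ₂+β₂) :=
        Finset.sum_le_sum (fun j hj => col j (Finset.mem_range.mp hj))
    _ = (1 + 2*(m:ℝ)) * C^3 * ∑ j ∈ Finset.range n, (τ (j+1) - τ j)^(ρ₂+β₂) := by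
        rw [← Finset.mul_sum]
    _ ≤ (1 + 2*(m:ℝ)) * C^3 * (η^(ρ₂+β₂-1) * (t' - t)) := by
        apply mul_le_mul_of_nonneg_left (sum_incr_rpow hτ (by linarith) hη hmesh)
        positivity
    _ ≤ (1 + 2*(m:ℝ)) * C^3 * η^(ρ₂+β₂-1) := by
        have h1 : (0:ℝ) ≤ η^(ρ₂+β₂-1) := Real.rpow_nonneg hη _
        have hpos : (0:ℝ) ≤ (1 + 2*(m:ℝ)) * C^3 := by positivity
        nlinarith [mul_nonneg hpos h1]
end Diffs2

lemma Hold.mono' {ρ₁ ρ₂ C C' : ℝ} {f : ℝ → ℝ → ℝ} (h : Hold ρ₁ ρ₂ C f) (hCC : C ≤ C') :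
    Hold ρ₁ ρ₂ C' f := by
  obtain ⟨h1, h2, h3, h4⟩ := h
  refine ⟨?_, ?_, ?_, ?_⟩
  · intro s₁ s₂ t₁ t₂ a b c d
    apply (h1 s₁ s₂ t₁ t₂ a b c d).trans
    have : (0:ℝ) ≤ |s₂ - s₁| ^ ρ₁ * |t₂ - t₁| ^ ρ₂ := by positivity
    nlinarith
  · intro s₁ s₂ t a b c
    apply (h2 s₁ s₂ t a b c).trans
    have : (0:ℝ) ≤ |s₂ - s₁| ^ ρ₁ := by positivity
    nlinarith
  · intro s t₁ t₂ a b c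
    apply (h3 s t₁ t₂ a b c).trans
    have : (0:ℝ) ≤ |t₂ - t₁| ^ ρ₂ := by positivity
    nlinarith
  · intro s t a b
    exact (h4 s t a b).trans hCC

lemma eq_of_abs_le_all {A B : ℝ} (h : ∀ ε > (0:ℝ), |A - B| ≤ ε) : A = B := by
  by_contra hne
  have habs : 0 < |A - B| := abs_pos.mpr (sub_ne_zero.mpr hne)
  have := h (|A-B|/2) (by linarith)
  linarith

lemma small_mesh {c e : ℝ} (hc : 0 ≤ c) (he : 0 < e) {ε : ℝ} (hε : 0 < ε) :
    ∃ N : ℕ, 1 ≤ N ∧ ∀ N' : ℕ, N ≤ N' → c * (1/(N':ℝ))^e ≤ ε := by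
  obtain ⟨N₀, hN₀⟩ := exists_nat_gt (max 1 ((c/ε)^(1/e)))
  have h1N : (1:ℝ) < N₀ := lt_of_le_of_lt (le_max_left _ _) hN₀
  refine ⟨N₀, by exact_mod_cast h1N.le, ?_⟩
  intro N' hN'
  have hcast : (N₀:ℝ) ≤ (N':ℝ) := Nat.cast_le.mpr hN'
  have hN'R : ((c/ε)^(1/e)) < (N':ℝ) :=
    lt_of_lt_of_le (lt_of_le_of_lt (le_max_right _ _) hN₀) hcast
  have hN'pos : (0:ℝ) < N' := by linarith
  have hNe_pos : (0:ℝ) < (N':ℝ)^e := Real.rpow_pos_of_pos hN'pos e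
  have hkey : c/ε ≤ (N':ℝ)^e := by
    have h1 : ((c/ε)^(1/e))^e ≤ (N':ℝ)^e :=
      Real.rpow_le_rpow (Real.rpow_nonneg (by positivity) _) hN'R.le he.le
    rw [one_div] at h1
    rwa [Real.rpow_inv_rpow (by positivity) (ne_of_gt he)] at h1
  have heq : c * (1/(N':ℝ))^e = c / (N':ℝ)^e := by
    rw [one_div, Real.inv_rpow hN'pos.le, div_eq_mul_inv]
  rw [heq, div_le_iff₀ hNe_pos]
  have := (div_le_iff₀ hε).mp hkey
  nlinarith

lemma IsGrid'.eq_zero {u : ℝ} {m : ℕ} {σ : ℕ → ℝ} (h : IsGrid' u u m σ) : m = 0 := by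
  by_contra hm
  have h1 : σ 0 < σ 1 := h.2.2 0 (by omega)
  have h2 : σ 1 ≤ σ m := h.mono (by omega) (by omega)
  have h3 := h.1
  have h4 := h.2.1
  linarith

lemma abs_triangle4 {L L' S S' : ℝ} : |L - L'| ≤ |S - L| + |S' - S| + |S' - L'| := by
  have h : L - L' = (-(S-L)) + (-(S'-S)) + (S'-L') := by ring
  rw [h]
  calc |(-(S-L)) + (-(S'-S)) + (S'-L')|
      ≤ |(-(S-L)) + (-(S'-S))| + |S'-L'| := abs_add_le _ _
    _ ≤ |(-(S-L))| + |(-(S'-S))| + |S'-L'| := by linarith [abs_add_le (-(S-L)) (-(S'-S))]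
    _ = |S-L| + |S'-S| + |S'-L'| := by rw [abs_neg, abs_neg]

/-- **Mixed two-dimensional Young integral `∬ y d₁x d₂z`.**
Under the stated Hölder conditions, the three families of Riemann sums (a), (b), (c)
converge to a common limit on every rectangle of `[0,1]²`. -/
theorem stmt2
    (γ₁ γ₂ ρ₁ ρ₂ β₁ β₂ : ℝ)
    (hγ₁ : γ₁ ∈ Set.Ioc (0:ℝ) 1) (hγ₂ : γ₂ ∈ Set.Ioc (0:ℝ) 1)
    (hρ₁ : ρ₁ ∈ Set.Ioc (0:ℝ) 1) (hρ₂ : ρ₂ ∈ Set.Ioc (0:ℝ) 1)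
    (hβ₁ : β₁ ∈ Set.Ioc (0:ℝ) 1) (hβ₂ : β₂ ∈ Set.Ioc (0:ℝ) 1)
    (hγρ₁ : 1 < γ₁ + ρ₁) (hγρ₂ : 1 < γ₂ + ρ₂)
    (hβγ₁ : 1 < β₁ + γ₁) (hβγ₂ : 1 < β₂ + γ₂)
    (hβρ₁ : 1 < β₁ + ρ₁) (hβρ₂ : 1 < β₂ + ρ₂)
    (y x z : ℝ → ℝ → ℝ)
    (hyc : ContinuousOn (fun q : ℝ × ℝ => y q.1 q.2) (Icc 0 1 ×ˢ Icc 0 1))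
    (hxc : ContinuousOn (fun q : ℝ × ℝ => x q.1 q.2) (Icc 0 1 ×ˢ Icc 0 1))
    (hzc : ContinuousOn (fun q : ℝ × ℝ => z q.1 q.2) (Icc 0 1 ×ˢ Icc 0 1))
    (hyN : NFin γ₁ γ₂ y) (hxN : NFin ρ₁ ρ₂ x) (hzN : NFin β₁ β₂ z)
    (s s' t t' : ℝ) (hs : 0 ≤ s) (hss' : s ≤ s') (hs' : s' ≤ 1)
    (ht : 0 ≤ t) (htt' : t ≤ t') (ht' : t' ≤ 1) :
    ∃ L : ℝ,
      RConv s s' t t' (fun a b c d => y a c * d1 x a b c * d2 z b c d) L ∧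
      RConv s s' t t' (fun a b c d => y a c * d1 x a b c * d2 z a c d) L ∧
      RConv s s' t t' (fun a b c d => y a c * d2 z a c d * d1 x a b d) L := by
  classical
  -- degenerate cases
  by_cases hdeg : s = s' ∨ t = t'
  · have trivL : ∀ F : ℝ → ℝ → ℝ → ℝ → ℝ, RConv s s' t t' F 0 := by
      intro F ε hε
      refine ⟨1, one_pos, ?_⟩
      intro m n σ τ hσ hτ _ _
      have hzero : (∑ i ∈ Finset.range m, ∑ j ∈ Finset.range n,
          F (σ i) (σ (i+1)) (τ j) (τ (j+1))) = 0 := by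
        rcases hdeg with h | h
        · have hm : m = 0 := by
            apply IsGrid'.eq_zero (u := s) (σ := σ)
            have h' : IsGrid' s s' m σ := hσ
            rwa [← h] at h'
          rw [hm]; simp
        · have hn : n = 0 := by
            apply IsGrid'.eq_zero (u := t) (σ := τ)
            have h' : IsGrid' t t' n τ := hτ
            rwa [← h] at h'
          rw [hn]; simp
      rw [hzero]
      simpa using hε.le
    exact ⟨0, trivL _, trivL _, trivL _⟩
  push_neg at hdeg
  have hss'lt : s < s' := lt_of_le_of_ne hss' hdeg.1
  have htt'lt : t < t' := lt_of_le_of_ne htt' hdeg.2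
  -- constants
  obtain ⟨Cy, hCy⟩ := hyN
  obtain ⟨Cx, hCx⟩ := hxN
  obtain ⟨Cz, hCz⟩ := hzN
  set C : ℝ := max (max (max Cy Cx) Cz) 0 with hCdef
  have hC : 0 ≤ C := le_max_right _ _
  have hy : Hold γ₁ γ₂ C y := Hold.mono' hCy
    (le_trans (le_max_left Cy Cx) (le_trans (le_max_left _ Cz) (le_max_left _ 0)))
  have hx : Hold ρ₁ ρ₂ C x := Hold.mono' hCx
    (le_trans (le_max_right Cy Cx) (le_trans (le_max_left _ Cz) (le_max_left _ 0)))
  have hz : Hold β₁ β₂ C z := Hold.mono' hCz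
    (le_trans (le_max_right _ Cz) (le_max_left _ 0))
  have hθ₁gt : 1 < ρ₁ + min β₁ γ₁ := by
    rcases le_total β₁ γ₁ with h | h
    · rw [min_eq_left h]; linarith
    · rw [min_eq_right h]; linarith
  have hθ₂gt : 1 < β₂ + min γ₂ ρ₂ := by
    rcases le_total γ₂ ρ₂ with h | h
    · rw [min_eq_left h]; linarith
    · rw [min_eq_right h]; linarith
  have hK0 : (0:ℝ) ≤ 4*C^3 := by positivity
  have hs1 : s' - s ≤ 1 := by linarith
  have ht1 : t' - t ≤ 1 := by linarith
  -- sewing for the three germs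
  obtain ⟨La, Aa, hAa0, hLa⟩ :=
    sew (θ₁ := ρ₁ + min β₁ γ₁) (θ₂ := β₂ + min γ₂ ρ₂) (α₁ := ρ₁) (α₂ := β₂) (K := 4*C^3)
      hθ₁gt hθ₂gt hρ₁.1 hβ₂.1 hK0 hss'lt htt'lt hs1 ht1
      (fun a b c d => y a c * d1 x a b c * d2 z b c d)
      (fun a p b c d ha hap hpb hb hc hcd hd =>
        germA_HA hC hγ₁ hγ₂ hρ₁ hρ₂ hβ₁ hβ₂ hy hx hz a p b c d
          (by linarith) hap hpb (by linarith) (by linarith) hcd (by linarith))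
      (fun a b c q d ha hab hb hc hcq hqd hd =>
        germA_HB hC hγ₁ hγ₂ hρ₁ hρ₂ hβ₁ hβ₂ hy hx hz a b c q d
          (by linarith) hab (by linarith) (by linarith) hcq hqd (by linarith))
      (fun a p b c q d ha hap hpb hb hc hcq hqd hd =>
        germA_HC hC hγ₁ hγ₂ hρ₁ hρ₂ hβ₁ hβ₂ hy hx hz a p b c q d
          (by linarith) hap hpb (by linarith) (by linarith) hcq hqd (by linarith))
  obtain ⟨Lb, Ab, hAb0, hLb⟩ :=
    sew (θ₁ := ρ₁ + min β₁ γ₁) (θ₂ := β₂ + min γ₂ ρ₂) (α₁ := ρ₁) (α₂ := β₂) (K := 4*C^3)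
      hθ₁gt hθ₂gt hρ₁.1 hβ₂.1 hK0 hss'lt htt'lt hs1 ht1
      (fun a b c d => y a c * d1 x a b c * d2 z a c d)
      (fun a p b c d ha hap hpb hb hc hcd hd =>
        germB_HA hC hγ₁ hγ₂ hρ₁ hρ₂ hβ₁ hβ₂ hy hx hz a p b c d
          (by linarith) hap hpb (by linarith) (by linarith) hcd (by linarith))
      (fun a b c q d ha hab hb hc hcq hqd hd =>
        germB_HB hC hγ₁ hγ₂ hρ₁ hρ₂ hβ₁ hβ₂ hy hx hz a b c q d
          (by linarith) hab (by linarith) (by linarith) hcq hqd (by linarith))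
      (fun a p b c q d ha hap hpb hb hc hcq hqd hd =>
        germB_HC hC hγ₁ hγ₂ hρ₁ hρ₂ hβ₁ hβ₂ hy hx hz a p b c q d
          (by linarith) hap hpb (by linarith) (by linarith) hcq hqd (by linarith))
  obtain ⟨Lc, Ac, hAc0, hLc⟩ :=
    sew (θ₁ := ρ₁ + min β₁ γ₁) (θ₂ := β₂ + min γ₂ ρ₂) (α₁ := ρ₁) (α₂ := β₂) (K := 4*C^3)
      hθ₁gt hθ₂gt hρ₁.1 hβ₂.1 hK0 hss'lt htt'lt hs1 ht1
      (fun a b c d => y a c * d2 z a c d * d1 x a b d)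
      (fun a p b c d ha hap hpb hb hc hcd hd =>
        germC_HA hC hγ₁ hγ₂ hρ₁ hρ₂ hβ₁ hβ₂ hy hx hz a p b c d
          (by linarith) hap hpb (by linarith) (by linarith) hcd (by linarith))
      (fun a b c q d ha hab hb hc hcq hqd hd =>
        germC_HB hC hγ₁ hγ₂ hρ₁ hρ₂ hβ₁ hβ₂ hy hx hz a b c q d
          (by linarith) hab (by linarith) (by linarith) hcq hqd (by linarith))
      (fun a p b c q d ha hap hpb hb hc hcq hqd hd =>
        germC_HC hC hγ₁ hγ₂ hρ₁ hρ₂ hβ₁ hβ₂ hy hx hz a p b c q d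
          (by linarith) hap hpb (by linarith) (by linarith) hcq hqd (by linarith))
  -- uniform grid facts
  have hug_s : ∀ q : ℕ, 1 ≤ q → IsGrid' s s' q (unif s s' q) := fun q hq => unif_grid hss'lt hq
  have hug_t : ∀ q : ℕ, 1 ≤ q → IsGrid' t t' q (unif t t' q) := fun q hq => unif_grid htt'lt hq
  have hum_s : ∀ q : ℕ, 1 ≤ q → ∀ i < q, unif s s' q (i+1) - unif s s' q i ≤ 1/(q:ℝ) :=
    fun q hq => unif_mesh hss'lt.le hs1 hq
  have hum_t : ∀ q : ℕ, 1 ≤ q → ∀ j < q, unif t t' q (j+1) - unif t t' q j ≤ 1/(q:ℝ) :=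
    fun q hq => unif_mesh htt'lt.le ht1 hq
  have hq0 : ∀ q : ℕ, 1 ≤ q → (0:ℝ) ≤ 1/(q:ℝ) := by
    intro q hq
    have : (0:ℝ) < (q:ℝ) := by exact_mod_cast hq
    positivity
  -- La = Lb
  have hab : La = Lb := by
    apply eq_of_abs_le_all
    intro ε hε
    obtain ⟨N, hN1, hNs⟩ := small_mesh (c := Aa + Ab) (e := β₂ + min γ₂ ρ₂ - 1)
      (by linarith) (by linarith) (ε := ε/2) (by linarith)
    obtain ⟨M1, hM11, hM1s⟩ := small_mesh (c := Aa + Ab) (e := ρ₁ + min β₁ γ₁ - 1)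
      (by linarith) (by linarith) (ε := ε/4) (by linarith)
    obtain ⟨M2, hM21, hM2s⟩ := small_mesh (c := (1 + 2*(N:ℝ)) * C^3) (e := ρ₁ + β₁ - 1)
      (by positivity) (by linarith) (ε := ε/4) (by linarith)
    set m := max M1 M2 with hmdef
    have hm1 : 1 ≤ m := le_trans hM11 (le_max_left _ _)
    set σ := unif s s' m
    set τ := unif t t' N
    set Sa := ∑ i ∈ Finset.range m, ∑ j ∈ Finset.range N,
      (y (σ i) (τ j) * d1 x (σ i) (σ (i+1)) (τ j) * d2 z (σ (i+1)) (τ j) (τ (j+1))) with hSa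
    set Sb := ∑ i ∈ Finset.range m, ∑ j ∈ Finset.range N,
      (y (σ i) (τ j) * d1 x (σ i) (σ (i+1)) (τ j) * d2 z (σ i) (τ j) (τ (j+1))) with hSb
    have h1 : |Sa - La| ≤ Aa * ((1/(m:ℝ))^(ρ₁ + min β₁ γ₁ - 1) + (1/(N:ℝ))^(β₂ + min γ₂ ρ₂ - 1)) :=
      hLa m N σ τ (1/(m:ℝ)) (1/(N:ℝ)) (hq0 m hm1) (hq0 N hN1)
        (hug_s m hm1) (hug_t N hN1) (hum_s m hm1) (hum_t N hN1)
    have h2 : |Sb - Lb| ≤ Ab * ((1/(m:ℝ))^(ρ₁ + min β₁ γ₁ - 1) + (1/(N:ℝ))^(β₂ + min γ₂ ρ₂ - 1)) :=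
      hLb m N σ τ (1/(m:ℝ)) (1/(N:ℝ)) (hq0 m hm1) (hq0 N hN1)
        (hug_s m hm1) (hug_t N hN1) (hum_s m hm1) (hum_t N hN1)
    have h3 : |Sb - Sa| ≤ (1 + 2*(N:ℝ)) * C^3 * (1/(m:ℝ))^(ρ₁ + β₁ - 1) :=
      diff_ba hC hγ₁ hγ₂ hρ₁ hρ₂ hβ₁ hβ₂ (by linarith : 1 < ρ₁ + β₁) hy hx hz hs hss'lt hs' ht htt'lt ht'
        (hq0 m hm1) (hug_s m hm1) (hug_t N hN1) (hum_s m hm1)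
    have htri : |La - Lb| ≤ |Sa - La| + |Sb - Sa| + |Sb - Lb| := abs_triangle4
    set X := (1/(m:ℝ))^(ρ₁ + min β₁ γ₁ - 1) with hX
    set YY := (1/(N:ℝ))^(β₂ + min γ₂ ρ₂ - 1) with hYY
    set Z := (1/(m:ℝ))^(ρ₁ + β₁ - 1) with hZ
    have h4 : (Aa + Ab) * X ≤ ε/4 := hM1s m (le_max_left _ _)
    have h5 : (1 + 2*(N:ℝ)) * C^3 * Z ≤ ε/4 := hM2s m (le_max_right _ _)
    have h6 : (Aa + Ab) * YY ≤ ε/2 := hNs N le_rfl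
    have hsum : Aa * (X + YY) + Ab * (X + YY) = (Aa + Ab) * X + (Aa + Ab) * YY := by ring
    linarith
  -- Lb = Lc
  have hbc : Lb = Lc := by
    apply eq_of_abs_le_all
    intro ε hε
    obtain ⟨M, hM1, hMs⟩ := small_mesh (c := Ab + Ac) (e := ρ₁ + min β₁ γ₁ - 1)
      (by linarith) (by linarith) (ε := ε/4) (by linarith)
    obtain ⟨N1, hN11, hN1s⟩ := small_mesh (c := Ab + Ac) (e := β₂ + min γ₂ ρ₂ - 1)
      (by linarith) (by linarith) (ε := ε/4) (by linarith)
    obtain ⟨N2, hN21, hN2s⟩ := small_mesh (c := (1 + 2*(M:ℝ)) * C^3) (e := ρ₂ + β₂ - 1)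
      (by positivity) (by linarith) (ε := ε/4) (by linarith)
    set n := max N1 N2 with hndef
    have hn1 : 1 ≤ n := le_trans hN11 (le_max_left _ _)
    set σ := unif s s' M
    set τ := unif t t' n
    set Sb := ∑ i ∈ Finset.range M, ∑ j ∈ Finset.range n,
      (y (σ i) (τ j) * d1 x (σ i) (σ (i+1)) (τ j) * d2 z (σ i) (τ j) (τ (j+1))) with hSb
    set Sc := ∑ i ∈ Finset.range M, ∑ j ∈ Finset.range n,
      (y (σ i) (τ j) * d2 z (σ i) (τ j) (τ (j+1)) * d1 x (σ i) (σ (i+1)) (τ (j+1))) with hSc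
    have h1 : |Sb - Lb| ≤ Ab * ((1/(M:ℝ))^(ρ₁ + min β₁ γ₁ - 1) + (1/(n:ℝ))^(β₂ + min γ₂ ρ₂ - 1)) :=
      hLb M n σ τ (1/(M:ℝ)) (1/(n:ℝ)) (hq0 M hM1) (hq0 n hn1)
        (hug_s M hM1) (hug_t n hn1) (hum_s M hM1) (hum_t n hn1)
    have h2 : |Sc - Lc| ≤ Ac * ((1/(M:ℝ))^(ρ₁ + min β₁ γ₁ - 1) + (1/(n:ℝ))^(β₂ + min γ₂ ρ₂ - 1)) :=
      hLc M n σ τ (1/(M:ℝ)) (1/(n:ℝ)) (hq0 M hM1) (hq0 n hn1)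
        (hug_s M hM1) (hug_t n hn1) (hum_s M hM1) (hum_t n hn1)
    have h3 : |Sc - Sb| ≤ (1 + 2*(M:ℝ)) * C^3 * (1/(n:ℝ))^(ρ₂ + β₂ - 1) :=
      diff_cb hC hγ₁ hγ₂ hρ₁ hρ₂ hβ₁ hβ₂ (by linarith : 1 < ρ₂ + β₂) hy hx hz hs hss'lt hs' ht htt'lt ht'
        (hq0 n hn1) (hug_s M hM1) (hug_t n hn1) (hum_t n hn1)
    have htri : |Lb - Lc| ≤ |Sb - Lb| + |Sc - Sb| + |Sc - Lc| := abs_triangle4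
    set X := (1/(M:ℝ))^(ρ₁ + min β₁ γ₁ - 1) with hX
    set YY := (1/(n:ℝ))^(β₂ + min γ₂ ρ₂ - 1) with hYY
    set Z := (1/(n:ℝ))^(ρ₂ + β₂ - 1) with hZ
    have h4 : (Ab + Ac) * X ≤ ε/4 := hMs M le_rfl
    have h5 : (Ab + Ac) * YY ≤ ε/4 := hN1s n (le_max_left _ _)
    have h6 : (1 + 2*(M:ℝ)) * C^3 * Z ≤ ε/4 := hN2s n (le_max_right _ _)
    have hsum : Ab * (X + YY) + Ac * (X + YY) = (Ab + Ac) * X + (Ab + Ac) * YY := by ring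
    linarith
  -- build RConv from the quantitative bound
  have mk : ∀ (F : ℝ → ℝ → ℝ → ℝ → ℝ) (L A : ℝ), 0 ≤ A →
      (∀ (m n : ℕ) (σ τ : ℕ → ℝ) (η₁ η₂ : ℝ), 0 ≤ η₁ → 0 ≤ η₂ →
        IsGrid' s s' m σ → IsGrid' t t' n τ →
        (∀ i < m, σ (i+1) - σ i ≤ η₁) → (∀ j < n, τ (j+1) - τ j ≤ η₂) →
        |(∑ i ∈ Finset.range m, ∑ j ∈ Finset.range n,
            F (σ i) (σ (i+1)) (τ j) (τ (j+1))) - L|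
          ≤ A * (η₁^(ρ₁ + min β₁ γ₁ - 1) + η₂^(β₂ + min γ₂ ρ₂ - 1))) →
      RConv s s' t t' F L := by
    intro F L A hA0 hbd ε hε
    have hεA : 0 < ε/(2*(A+1)) := by positivity
    set δ₁ := (ε/(2*(A+1)))^(1/(ρ₁ + min β₁ γ₁ - 1)) with hδ₁def
    set δ₂ := (ε/(2*(A+1)))^(1/(β₂ + min γ₂ ρ₂ - 1)) with hδ₂def
    have hδ₁ : 0 < δ₁ := Real.rpow_pos_of_pos hεA _
    have hδ₂ : 0 < δ₂ := Real.rpow_pos_of_pos hεA _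
    refine ⟨min δ₁ δ₂, lt_min hδ₁ hδ₂, ?_⟩
    intro m n σ τ hσ hτ hm1 hm2
    have hδ0 : (0:ℝ) ≤ min δ₁ δ₂ := (lt_min hδ₁ hδ₂).le
    have hb := hbd m n σ τ (min δ₁ δ₂) (min δ₁ δ₂) hδ0 hδ0 hσ hτ hm1 hm2
    apply hb.trans
    have e1 : (min δ₁ δ₂)^(ρ₁ + min β₁ γ₁ - 1) ≤ ε/(2*(A+1)) := by
      calc (min δ₁ δ₂)^(ρ₁ + min β₁ γ₁ - 1)
          ≤ δ₁^(ρ₁ + min β₁ γ₁ - 1) :=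
            Real.rpow_le_rpow hδ0 (min_le_left _ _) (by linarith)
        _ = ε/(2*(A+1)) := by
            rw [hδ₁def, one_div, Real.rpow_inv_rpow hεA.le (by linarith)]
    have e2 : (min δ₁ δ₂)^(β₂ + min γ₂ ρ₂ - 1) ≤ ε/(2*(A+1)) := by
      calc (min δ₁ δ₂)^(β₂ + min γ₂ ρ₂ - 1)
          ≤ δ₂^(β₂ + min γ₂ ρ₂ - 1) :=
            Real.rpow_le_rpow hδ0 (min_le_right _ _) (by linarith)
        _ = ε/(2*(A+1)) := by
            rw [hδ₂def, one_div, Real.rpow_inv_rpow hεA.le (by linarith)]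
    calc A * ((min δ₁ δ₂)^(ρ₁ + min β₁ γ₁ - 1) + (min δ₁ δ₂)^(β₂ + min γ₂ ρ₂ - 1))
        ≤ A * (ε/(2*(A+1)) + ε/(2*(A+1))) :=
          mul_le_mul_of_nonneg_left (add_le_add e1 e2) hA0
      _ ≤ ε := by
          have hA1 : (A:ℝ) + 1 ≠ 0 := by linarith
          have h2 : ε/(2*(A+1)) + ε/(2*(A+1)) = ε/(A+1) := by
            field_simp
            ring
          rw [h2, mul_comm, div_mul_eq_mul_div, div_le_iff₀ (by linarith : (0:ℝ) < A+1)]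
          nlinarith
  refine ⟨La, mk _ La Aa hAa0 hLa, ?_, ?_⟩
  · rw [hab]
    exact mk _ Lb Ab hAb0 hLb
  · rw [hab, hbc]
    exact mk _ Lc Ac hAc0 hLc
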